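/- arXiv:2203.04475 — 6 statements merged into one kernel-verified Lean document; each statement's English description precedes it below -/
import Mathlib

section
/- Let γ ≥ 1 and 0 < P⁺ < P⁻. The function f : (0,∞) → ℝ defined by f(P) = P^γ + (P⁻P⁺/P)·((P⁺)^γ − (P⁻)^γ)/(P⁺ − P⁻) − ((P⁺)^{γ+1} − (P⁻)^{γ+1})/(P⁺ − P⁻) satisfies f(P⁺) = f(P⁻) = 0, f''(P) > 0 for every P > 0, and P⁺ and P⁻ are the only zeros of f in (0,∞). -/
/-- For `γ ≥ 1` and `0 < P⁺ < P⁻`, the function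
`f(P) = P^γ + (P⁻P⁺/P)·((P⁺)^γ − (P⁻)^γ)/(P⁺ − P⁻) − ((P⁺)^{γ+1} − (P⁻)^{γ+1})/(P⁺ − P⁻)`
satisfies `f(P⁺) = f(P⁻) = 0`, `f'' > 0` on `(0,∞)`, and `P⁺`, `P⁻` are the only
zeros of `f` in `(0,∞)`. -/
theorem statement_0 (γ Pp Pm : ℝ) (hγ : 1 ≤ γ) (hPp : 0 < Pp) (hlt : Pp < Pm)
    (f : ℝ → ℝ)
    (hf : ∀ P : ℝ, f P =
      P ^ γ + (Pm * Pp / P) * ((Pp ^ γ - Pm ^ γ) / (Pp - Pm))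
        - (Pp ^ (γ + 1) - Pm ^ (γ + 1)) / (Pp - Pm)) :
    f Pp = 0 ∧ f Pm = 0 ∧
    (∀ P : ℝ, 0 < P → 0 < deriv (deriv f) P) ∧
    (∀ P : ℝ, 0 < P → f P = 0 → P = Pp ∨ P = Pm) := by
  have hPm : 0 < Pm := hPp.trans hlt
  have hD : Pp - Pm ≠ 0 := sub_ne_zero.mpr hlt.ne
  have hγ0 : (0:ℝ) < γ := lt_of_lt_of_le one_pos hγ
  set C : ℝ := Pm * Pp * ((Pp ^ γ - Pm ^ γ) / (Pp - Pm)) with hC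
  set B : ℝ := (Pp ^ (γ + 1) - Pm ^ (γ + 1)) / (Pp - Pm) with hB
  have hfeq : ∀ P : ℝ, f P = P ^ γ + C * P⁻¹ - B := by
    intro P; rw [hf P, hC, hB]; ring
  have hCpos : 0 < C := by
    have hlt' : Pp ^ γ < Pm ^ γ := Real.rpow_lt_rpow hPp.le hlt hγ0
    have : 0 < (Pp ^ γ - Pm ^ γ) / (Pp - Pm) :=
      div_pos_of_neg_of_neg (by linarith) (by linarith)
    positivity
  -- f(Pp) = 0 and f(Pm) = 0
  have hrPp : Pp ^ (γ + 1) = Pp ^ γ * Pp := Real.rpow_add_one hPp.ne' γ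
  have hrPm : Pm ^ (γ + 1) = Pm ^ γ * Pm := Real.rpow_add_one hPm.ne' γ
  have hfPp : f Pp = 0 := by
    rw [hf Pp, hB, hrPp, hrPm]
    field_simp
    ring
  have hfPm : f Pm = 0 := by
    rw [hf Pm, hB, hrPp, hrPm]
    field_simp
    ring
  -- first derivative
  have hf' : ∀ x : ℝ, 0 < x → HasDerivAt f (γ * x ^ (γ - 1) - C * (x ^ 2)⁻¹) x := by
    intro x hx
    have h1 : HasDerivAt (fun P : ℝ => P ^ γ) (γ * x ^ (γ - 1)) x :=
      Real.hasDerivAt_rpow_const (Or.inl hx.ne')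
    have h2 : HasDerivAt (fun P : ℝ => C * P⁻¹) (C * (-(x ^ 2)⁻¹)) x :=
      (hasDerivAt_inv hx.ne').const_mul C
    have h3 := (h1.add h2).sub_const B
    have hfun : f = fun P => P ^ γ + C * P⁻¹ - B := funext hfeq
    rw [hfun]
    refine h3.congr_deriv ?_
    ring
  have hderiv1 : ∀ x ∈ Set.Ioi (0:ℝ), deriv f x = γ * x ^ (γ - 1) - C * (x ^ 2)⁻¹ :=
    fun x hx => (hf' x hx).deriv
  -- second derivative
  have hf'' : ∀ x : ℝ, 0 < x →
      HasDerivAt (deriv f) (γ * (γ - 1) * x ^ (γ - 2) + 2 * C * (x ^ 3)⁻¹) x := by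
    intro x hx
    have h1 : HasDerivAt (fun P : ℝ => γ * P ^ (γ - 1)) (γ * ((γ - 1) * x ^ (γ - 1 - 1))) x :=
      (Real.hasDerivAt_rpow_const (Or.inl hx.ne')).const_mul γ
    have hx2 : (x:ℝ) ^ 2 ≠ 0 := pow_ne_zero 2 hx.ne'
    have h2 : HasDerivAt (fun P : ℝ => C * ((P ^ 2)⁻¹))
        (C * (-(↑2 * x ^ (2 - 1)) / (x ^ 2) ^ 2)) x :=
      ((hasDerivAt_pow 2 x).inv hx2).const_mul C
    have h3 := h1.sub h2
    have hev : deriv f =ᶠ[nhds x] fun P => γ * P ^ (γ - 1) - C * (P ^ 2)⁻¹ :=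
      Filter.eventuallyEq_of_mem (isOpen_Ioi.mem_nhds hx) hderiv1
    have h4 := h3.congr_of_eventuallyEq hev
    refine h4.congr_deriv ?_
    have : γ - 2 = γ - 1 - 1 := by ring
    rw [this]
    field_simp
    ring
  have hpos : ∀ P : ℝ, 0 < P → 0 < deriv (deriv f) P := by
    intro P hP
    rw [(hf'' P hP).deriv]
    have h1 : 0 ≤ γ * (γ - 1) * P ^ (γ - 2) := by
      have := Real.rpow_pos_of_pos hP (γ - 2)
      have h2 : 0 ≤ γ - 1 := by linarith
      positivity
    have h2 : 0 < 2 * C * (P ^ 3)⁻¹ := by positivity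
    linarith
  -- strict convexity
  have hconv : StrictConvexOn ℝ (Set.Ioi 0) f := by
    apply strictConvexOn_of_deriv2_pos (convex_Ioi 0)
    · intro x hx
      exact ((hf' x hx).differentiableAt).continuousAt.continuousWithinAt
    · intro x hx
      rw [interior_Ioi] at hx
      simpa using hpos x hx
  have key : ∀ a b c : ℝ, 0 < a → a < b → b < c → f a = 0 → f c = 0 → f b < 0 := by
    intro a b c ha hab hbc hfa hfc
    have hca : 0 < c - a := by linarith
    have ht : 0 < (c - b) / (c - a) := div_pos (by linarith) hca
    have hs : 0 < (b - a) / (c - a) := div_pos (by linarith) hca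
    have hts : (c - b) / (c - a) + (b - a) / (c - a) = 1 := by field_simp; ring
    have hb : (c - b) / (c - a) * a + (b - a) / (c - a) * c = b := by
      rw [div_mul_eq_mul_div, div_mul_eq_mul_div, ← add_div, div_eq_iff hca.ne']
      ring
    have h5 := hconv.2 (Set.mem_Ioi.mpr ha) (Set.mem_Ioi.mpr (by linarith : (0:ℝ) < c))
      (by linarith : a ≠ c) ht hs hts
    simp only [smul_eq_mul] at h5
    rw [hb, hfa, hfc] at h5
    linarith
  refine ⟨hfPp, hfPm, hpos, ?_⟩
  intro P hP hfP
  by_contra h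
  push_neg at h
  obtain ⟨h1, h2⟩ := h
  rcases lt_trichotomy P Pp with hc | hc | hc
  · have := key P Pp Pm hP hc hlt hfP hfPm
    rw [hfPp] at this; exact lt_irrefl 0 this
  · exact h1 hc
  rcases lt_trichotomy P Pm with hc2 | hc2 | hc2
  · have := key Pp P Pm hPp hc hc2 hfPp hfPm
    rw [hfP] at this; exact lt_irrefl 0 this
  · exact h2 hc2
  · have := key Pp Pm P hPp hlt hc2 hfPp hfP
    rw [hfPm] at this; exact lt_irrefl 0 this
end

section
/- Let γ ≥ 1 and 0 < P⁺ < P⁻. The equation f'(P) = 0 has a unique root in (0,∞), given explicitly by P₀ = (P⁻P⁺·((P⁺)^γ − (P⁻)^γ)/(γ(P⁺ − P⁻)))^{1/(γ+1)}. Moreover, if P⁻ > 0 is fixed and P⁺ = P⁻ − ε, then there exist ε₀ > 0 and C > 0 such that for all ε ∈ (0, ε₀) one has |P₀ − (P⁻ − ε/2)| ≤ Cε². -/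
open Real Set

lemma rpow_split {x : ℝ} (hx : 0 < x) (β : ℝ) : x * x ^ (β - 1) = x ^ β := by
  have h := Real.rpow_add hx 1 (β - 1)
  rw [Real.rpow_one] at h
  rw [show (1 : ℝ) + (β - 1) = β by ring] at h
  exact h.symm

lemma hdA {Pm : ℝ} (β t : ℝ) (h : t < Pm) :
    HasDerivAt (fun s : ℝ => (Pm - s) ^ β) ((-1) * β * (Pm - t) ^ (β - 1)) t :=
  (((hasDerivAt_id t).const_sub Pm).rpow_const (Or.inl (sub_pos.mpr h).ne'))

lemma hdB {Pm : ℝ} (β t : ℝ) (h : 0 < Pm - 1/2 * t) :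
    HasDerivAt (fun s : ℝ => (Pm - 1/2 * s) ^ β)
      ((-(1/2 * 1)) * β * (Pm - 1/2 * t) ^ (β - 1)) t :=
  ((((hasDerivAt_id t).const_mul (1/2)).const_sub Pm).rpow_const (Or.inl h.ne'))

noncomputable def Dfun (γ Pm ε : ℝ) : ℝ :=
  Pm * (Pm - ε) * (Pm ^ γ - (Pm - ε) ^ γ) - γ * (ε * (Pm - 1/2 * ε) ^ (γ + 1))

noncomputable def D1fun (γ Pm t : ℝ) : ℝ :=
  -Pm ^ (γ + 1) + Pm * (1 + γ) * (Pm - t) ^ γ - γ * (Pm - 1/2 * t) ^ (γ + 1)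
    + γ * (γ + 1) / 2 * (t * (Pm - 1/2 * t) ^ γ)

noncomputable def D2fun (γ Pm s : ℝ) : ℝ :=
  -(Pm * γ * (1 + γ)) * (Pm - s) ^ (γ - 1) + γ * (γ + 1) * (Pm - 1/2 * s) ^ γ
    - γ ^ 2 * (γ + 1) / 4 * (s * (Pm - 1/2 * s) ^ (γ - 1))

lemma derivD (γ Pm t : ℝ) (hPm : 0 < Pm) (ht0 : 0 ≤ t) (ht : t < Pm) :
    HasDerivAt (fun ε => Dfun γ Pm ε) (D1fun γ Pm t) t := by
  have hpt : 0 < Pm - t := sub_pos.mpr ht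
  have hpt2 : 0 < Pm - 1/2 * t := by linarith
  have g1 : HasDerivAt (fun ε : ℝ => Pm * (Pm - ε)) (Pm * -1) t :=
    ((hasDerivAt_id t).const_sub Pm).const_mul Pm
  have g2 : HasDerivAt (fun ε : ℝ => Pm ^ γ - (Pm - ε) ^ γ)
      (-((-1) * γ * (Pm - t) ^ (γ - 1))) t := (hdA γ t ht).const_sub (Pm ^ γ)
  have g4 : HasDerivAt (fun ε : ℝ => ε * (Pm - 1/2 * ε) ^ (γ + 1))
      (1 * (Pm - 1/2 * t) ^ (γ + 1)
        + t * ((-(1/2 * 1)) * (γ + 1) * (Pm - 1/2 * t) ^ (γ + 1 - 1))) t :=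
    (hasDerivAt_id t).mul (hdB (γ + 1) t hpt2)
  have g5 := (g1.mul g2).sub (g4.const_mul γ)
  convert g5 using 1
  · rfl
  · rfl
  · rfl
  have h1 : Pm * Pm ^ γ = Pm ^ (γ + 1) := by
    have := rpow_split hPm (γ + 1)
    rwa [show γ + 1 - 1 = γ by ring] at this
  have h2 : (Pm - t) * (Pm - t) ^ (γ - 1) = (Pm - t) ^ γ := rpow_split hpt γ
  rw [show γ + 1 - 1 = γ by ring]
  unfold D1fun
  rw [← h1, ← h2]
  ring

lemma derivD1 (γ Pm t : ℝ) (hPm : 0 < Pm) (ht0 : 0 ≤ t) (ht : t < Pm) :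
    HasDerivAt (fun s => D1fun γ Pm s) (D2fun γ Pm t) t := by
  have hpt : 0 < Pm - t := sub_pos.mpr ht
  have hpt2 : 0 < Pm - 1/2 * t := by linarith
  have p2 := (hdA γ t ht).const_mul (Pm * (1 + γ))
  have p3 := (hdB (γ + 1) t hpt2).const_mul γ
  have p4 := ((hasDerivAt_id t).mul (hdB γ t hpt2)).const_mul (γ * (γ + 1) / 2)
  have g := (((hasDerivAt_const t (-Pm ^ (γ + 1))).add p2).sub p3).add p4
  convert g using 1
  · rfl
  · rfl
  · rfl
  rw [show γ + 1 - 1 = γ by ring]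
  unfold D2fun
  simp only [id_eq]
  ring

lemma Dzero (γ Pm : ℝ) : Dfun γ Pm 0 = 0 := by simp [Dfun]

lemma D1zero (γ Pm : ℝ) (hPm : 0 < Pm) : D1fun γ Pm 0 = 0 := by
  have h1 : Pm * Pm ^ γ = Pm ^ (γ + 1) := by
    have := rpow_split hPm (γ + 1)
    rwa [show γ + 1 - 1 = γ by ring] at this
  simp only [D1fun, mul_zero, sub_zero, zero_mul, add_zero]
  linear_combination (1 + γ) * h1

/-- Mean value theorem for rpow. -/
lemma rpow_mvt {β x y : ℝ} (hx : 0 < x) (hxy : x < y) :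
    ∃ c ∈ Set.Ioo x y, y ^ β - x ^ β = β * c ^ (β - 1) * (y - x) := by
  have hcont : ContinuousOn (fun z : ℝ => z ^ β) (Icc x y) := fun z hz =>
    (Real.continuousAt_rpow_const z β (Or.inl (lt_of_lt_of_le hx hz.1).ne')).continuousWithinAt
  have hder : ∀ z ∈ Ioo x y, HasDerivAt (fun z : ℝ => z ^ β) (β * z ^ (β - 1)) z := fun z hz =>
    Real.hasDerivAt_rpow_const (Or.inl (hx.trans hz.1).ne')
  obtain ⟨c, hc, hceq⟩ := exists_hasDerivAt_eq_slope (fun z : ℝ => z ^ β)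
    (fun z => β * z ^ (β - 1)) hxy hcont hder
  refine ⟨c, hc, ?_⟩
  rw [hceq, div_mul_cancel₀ _ (sub_ne_zero.mpr hxy.ne')]

/-- Lipschitz bound for rpow on a positive interval. -/
lemma rpow_lip {l u β : ℝ} (hl : 0 < l) {x y : ℝ} (hx : x ∈ Set.Icc l u) (hy : y ∈ Set.Icc l u) :
    |x ^ β - y ^ β| ≤ |β| * (l ^ (β - 1) + u ^ (β - 1)) * |x - y| := by
  have key : ∀ a b : ℝ, a ∈ Set.Icc l u → b ∈ Set.Icc l u → a < b →
      |b ^ β - a ^ β| ≤ |β| * (l ^ (β - 1) + u ^ (β - 1)) * |b - a| := by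
    intro a b ha hb hab
    obtain ⟨c, hc, hceq⟩ := rpow_mvt (β := β) (hl.trans_le ha.1) hab
    have hcl : l ≤ c := ha.1.trans hc.1.le
    have hcu : c ≤ u := hc.2.le.trans hb.2
    have hcpos : 0 < c := hl.trans_le hcl
    have hbound : c ^ (β - 1) ≤ l ^ (β - 1) + u ^ (β - 1) := by
      rcases le_or_gt 0 (β - 1) with h | h
      · have h1 : c ^ (β - 1) ≤ u ^ (β - 1) := Real.rpow_le_rpow hcpos.le hcu h
        have h2 : 0 ≤ l ^ (β - 1) := (Real.rpow_pos_of_pos hl _).le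
        linarith
      · have h1 : c ^ (β - 1) ≤ l ^ (β - 1) := Real.rpow_le_rpow_of_nonpos hl hcl h.le
        have h2 : 0 ≤ u ^ (β - 1) := (Real.rpow_pos_of_pos (hl.trans_le (hcl.trans hcu)) _).le
        linarith
    rw [hceq, abs_mul, abs_mul]
    have hcnn : 0 ≤ c ^ (β - 1) := (Real.rpow_pos_of_pos hcpos _).le
    rw [abs_of_nonneg hcnn]
    have : |β| * c ^ (β - 1) ≤ |β| * (l ^ (β - 1) + u ^ (β - 1)) :=
      mul_le_mul_of_nonneg_left hbound (abs_nonneg β)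
    exact mul_le_mul_of_nonneg_right this (abs_nonneg _)
  rcases lt_trichotomy x y with h | h | h
  · have := key x y hx hy h
    rwa [abs_sub_comm (y ^ β), abs_sub_comm y] at this
  · simp [h]
  · exact key y x hy hx h

/-- Reverse mean-value bound. -/
lemma rpow_rev {l s : ℝ} (hl : 0 < l) (hs : 1 ≤ s) {x y : ℝ} (hx : l ≤ x) (hy : l ≤ y) :
    s * l ^ (s - 1) * |x - y| ≤ |x ^ s - y ^ s| := by
  have key : ∀ a b : ℝ, l ≤ a → l ≤ b → a < b →
      s * l ^ (s - 1) * |b - a| ≤ |b ^ s - a ^ s| := by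
    intro a b ha hb hab
    obtain ⟨c, hc, hceq⟩ := rpow_mvt (β := s) (hl.trans_le ha) hab
    have hcl : l ≤ c := ha.trans hc.1.le
    have h1 : l ^ (s - 1) ≤ c ^ (s - 1) := Real.rpow_le_rpow hl.le hcl (by linarith)
    have hspos : (0:ℝ) < s := by linarith
    rw [hceq, abs_mul, abs_mul, abs_of_pos hspos,
      abs_of_nonneg ((Real.rpow_pos_of_pos (hl.trans_le hcl) _).le)]
    exact mul_le_mul_of_nonneg_right (mul_le_mul_of_nonneg_left h1 hspos.le) (abs_nonneg _)
  rcases lt_trichotomy x y with h | h | h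
  · have := key x y hx hy h
    rwa [abs_sub_comm (y ^ s), abs_sub_comm y] at this
  · simp [h]
  · exact key y x hy hx h

lemma D2bound (γ Pm : ℝ) (hγ : 1 ≤ γ) (hPm : 0 < Pm) :
    ∀ s : ℝ, 0 ≤ s → s ≤ Pm / 2 →
      |D2fun γ Pm s| ≤ (Pm * γ * (1 + γ) * (|γ - 1| * ((Pm/2) ^ (γ - 1 - 1) + Pm ^ (γ - 1 - 1)))
        + γ * (γ + 1) * (|γ| * ((Pm/2) ^ (γ - 1) + Pm ^ (γ - 1)))
        + γ ^ 2 * (γ + 1) / 4 * ((Pm/2) ^ (γ - 1) + Pm ^ (γ - 1))) * s := by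
  intro s hs0 hs
  set L₁ : ℝ := |γ - 1| * ((Pm/2) ^ (γ - 1 - 1) + Pm ^ (γ - 1 - 1)) with hL₁
  set L₂ : ℝ := |γ| * ((Pm/2) ^ (γ - 1) + Pm ^ (γ - 1)) with hL₂
  set B₁ : ℝ := (Pm/2) ^ (γ - 1) + Pm ^ (γ - 1) with hB₁
  have hγ0 : (0:ℝ) < γ := by linarith
  have hhalf : (0:ℝ) < Pm / 2 := by linarith
  have hs1 : Pm - s ∈ Set.Icc (Pm/2) Pm := ⟨by linarith, by linarith⟩
  have hs2 : Pm - 1/2 * s ∈ Set.Icc (Pm/2) Pm := ⟨by linarith, by linarith⟩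
  have hsPm : Pm ∈ Set.Icc (Pm/2) Pm := ⟨by linarith, le_refl _⟩
  have b1 : |(Pm - s) ^ (γ - 1) - Pm ^ (γ - 1)| ≤ L₁ * s := by
    have := rpow_lip (β := γ - 1) hhalf hs1 hsPm
    rwa [show Pm - s - Pm = -s by ring, abs_neg, abs_of_nonneg hs0] at this
  have b2 : |(Pm - 1/2 * s) ^ γ - Pm ^ γ| ≤ L₂ * (s / 2) := by
    have := rpow_lip (β := γ) hhalf hs2 hsPm
    rwa [show Pm - 1/2 * s - Pm = -(s/2) by ring, abs_neg,
      abs_of_nonneg (by linarith : (0:ℝ) ≤ s/2)] at this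
  have b3 : (Pm - 1/2 * s) ^ (γ - 1) ≤ B₁ := by
    have h1 : (Pm - 1/2 * s) ^ (γ - 1) ≤ Pm ^ (γ - 1) :=
      Real.rpow_le_rpow (by linarith) (by linarith) (by linarith)
    have h2 : (0:ℝ) ≤ (Pm/2) ^ (γ - 1) := (Real.rpow_pos_of_pos hhalf _).le
    rw [hB₁]; linarith
  have hL₁0 : 0 ≤ L₁ := by
    rw [hL₁]
    have := (Real.rpow_pos_of_pos hhalf (γ - 1 - 1)).le
    have := (Real.rpow_pos_of_pos hPm (γ - 1 - 1)).le
    positivity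
  have hL₂0 : 0 ≤ L₂ := by
    rw [hL₂]
    have := (Real.rpow_pos_of_pos hhalf (γ - 1)).le
    have := (Real.rpow_pos_of_pos hPm (γ - 1)).le
    positivity
  have hB₁0 : 0 ≤ B₁ := by
    rw [hB₁]
    have := (Real.rpow_pos_of_pos hhalf (γ - 1)).le
    have := (Real.rpow_pos_of_pos hPm (γ - 1)).le
    positivity
  have hsplit : Pm * Pm ^ (γ - 1) = Pm ^ γ := rpow_split hPm γ
  have hde : D2fun γ Pm s =
      -(Pm * γ * (1 + γ)) * ((Pm - s) ^ (γ - 1) - Pm ^ (γ - 1))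
        + γ * (γ + 1) * ((Pm - 1/2 * s) ^ γ - Pm ^ γ)
        - γ ^ 2 * (γ + 1) / 4 * (s * (Pm - 1/2 * s) ^ (γ - 1)) := by
    unfold D2fun
    linear_combination (-(γ * (1 + γ))) * hsplit
  rw [hde]
  have c1 : (0:ℝ) ≤ Pm * γ * (1 + γ) := by positivity
  have c2 : (0:ℝ) ≤ γ * (γ + 1) := by positivity
  have c3 : (0:ℝ) ≤ γ ^ 2 * (γ + 1) / 4 := by positivity
  have e1 : |-(Pm * γ * (1 + γ)) * ((Pm - s) ^ (γ - 1) - Pm ^ (γ - 1))|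
      ≤ Pm * γ * (1 + γ) * (L₁ * s) := by
    rw [abs_mul, abs_neg, abs_of_nonneg c1]
    exact mul_le_mul_of_nonneg_left b1 c1
  have e2 : |γ * (γ + 1) * ((Pm - 1/2 * s) ^ γ - Pm ^ γ)| ≤ γ * (γ + 1) * (L₂ * (s/2)) := by
    rw [abs_mul, abs_of_nonneg c2]
    exact mul_le_mul_of_nonneg_left b2 c2
  have e3 : |γ ^ 2 * (γ + 1) / 4 * (s * (Pm - 1/2 * s) ^ (γ - 1))|
      ≤ γ ^ 2 * (γ + 1) / 4 * (s * B₁) := by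
    rw [abs_mul, abs_of_nonneg c3, abs_of_nonneg
      (mul_nonneg hs0 (Real.rpow_pos_of_pos (by linarith) _).le)]
    exact mul_le_mul_of_nonneg_left
      (mul_le_mul_of_nonneg_left b3 hs0) c3
  have habs : |(-(Pm * γ * (1 + γ)) * ((Pm - s) ^ (γ - 1) - Pm ^ (γ - 1))
        + γ * (γ + 1) * ((Pm - 1/2 * s) ^ γ - Pm ^ γ))
        - γ ^ 2 * (γ + 1) / 4 * (s * (Pm - 1/2 * s) ^ (γ - 1))|
      ≤ |-(Pm * γ * (1 + γ)) * ((Pm - s) ^ (γ - 1) - Pm ^ (γ - 1))|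
        + |γ * (γ + 1) * ((Pm - 1/2 * s) ^ γ - Pm ^ γ)|
        + |γ ^ 2 * (γ + 1) / 4 * (s * (Pm - 1/2 * s) ^ (γ - 1))| :=
    (abs_sub _ _).trans (by gcongr; exact abs_add_le _ _)
  have hhalfstep : γ * (γ + 1) * (L₂ * (s/2)) ≤ γ * (γ + 1) * (L₂ * s) := by
    apply mul_le_mul_of_nonneg_left _ c2
    apply mul_le_mul_of_nonneg_left _ hL₂0
    linarith
  calc |_| ≤ _ := habs
    _ ≤ Pm * γ * (1 + γ) * (L₁ * s) + γ * (γ + 1) * (L₂ * s)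
        + γ ^ 2 * (γ + 1) / 4 * (s * B₁) := by linarith
    _ = (Pm * γ * (1 + γ) * L₁ + γ * (γ + 1) * L₂ + γ ^ 2 * (γ + 1) / 4 * B₁) * s := by ring

lemma Dbound (γ Pm : ℝ) (hγ : 1 ≤ γ) (hPm : 0 < Pm) :
    ∃ M : ℝ, 0 ≤ M ∧ ∀ ε : ℝ, 0 < ε → ε ≤ Pm / 2 → |Dfun γ Pm ε| ≤ M * ε ^ 3 := by
  have hhalf : (0:ℝ) < Pm / 2 := by linarith
  refine ⟨Pm * γ * (1 + γ) * (|γ - 1| * ((Pm/2) ^ (γ - 1 - 1) + Pm ^ (γ - 1 - 1)))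
    + γ * (γ + 1) * (|γ| * ((Pm/2) ^ (γ - 1) + Pm ^ (γ - 1)))
    + γ ^ 2 * (γ + 1) / 4 * ((Pm/2) ^ (γ - 1) + Pm ^ (γ - 1)), ?_, ?_⟩
  · have h1 := (Real.rpow_pos_of_pos hhalf (γ - 1 - 1)).le
    have h2 := (Real.rpow_pos_of_pos hPm (γ - 1 - 1)).le
    have h3 := (Real.rpow_pos_of_pos hhalf (γ - 1)).le
    have h4 := (Real.rpow_pos_of_pos hPm (γ - 1)).le
    positivity
  intro ε hε0 hε
  set M : ℝ := Pm * γ * (1 + γ) * (|γ - 1| * ((Pm/2) ^ (γ - 1 - 1) + Pm ^ (γ - 1 - 1)))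
    + γ * (γ + 1) * (|γ| * ((Pm/2) ^ (γ - 1) + Pm ^ (γ - 1)))
    + γ ^ 2 * (γ + 1) / 4 * ((Pm/2) ^ (γ - 1) + Pm ^ (γ - 1)) with hM
  -- MVT for D on [0, ε]
  have hcontD : ContinuousOn (fun x => Dfun γ Pm x) (Set.Icc 0 ε) := fun x hx =>
    (derivD γ Pm x hPm hx.1 (by linarith [hx.2])).continuousAt.continuousWithinAt
  have hderD : ∀ x ∈ Set.Ioo (0:ℝ) ε, HasDerivAt (fun x => Dfun γ Pm x) (D1fun γ Pm x) x :=
    fun x hx => derivD γ Pm x hPm hx.1.le (by linarith [hx.2])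
  obtain ⟨c, hc, hceq⟩ := exists_hasDerivAt_eq_slope (fun x => Dfun γ Pm x)
    (fun x => D1fun γ Pm x) hε0 hcontD hderD
  have hDe : Dfun γ Pm ε = D1fun γ Pm c * ε := by
    rw [hceq, Dzero, sub_zero, sub_zero]
    field_simp
  -- MVT for D1 on [0, c]
  have hc0 : 0 < c := hc.1
  have hcε : c < ε := hc.2
  have hcontD1 : ContinuousOn (fun x => D1fun γ Pm x) (Set.Icc 0 c) := fun x hx =>
    (derivD1 γ Pm x hPm hx.1 (by linarith [hx.2])).continuousAt.continuousWithinAt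
  have hderD1 : ∀ x ∈ Set.Ioo (0:ℝ) c, HasDerivAt (fun x => D1fun γ Pm x) (D2fun γ Pm x) x :=
    fun x hx => derivD1 γ Pm x hPm hx.1.le (by linarith [hx.2])
  obtain ⟨c', hc', hceq'⟩ := exists_hasDerivAt_eq_slope (fun x => D1fun γ Pm x)
    (fun x => D2fun γ Pm x) hc0 hcontD1 hderD1
  have hD1c : D1fun γ Pm c = D2fun γ Pm c' * c := by
    rw [hceq', D1zero γ Pm hPm, sub_zero, sub_zero]
    field_simp
  have hb2 := D2bound γ Pm hγ hPm c' hc'.1.le (by linarith [hc'.2])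
  rw [← hM] at hb2
  have hM0 : 0 ≤ M := by
    have := abs_nonneg (D2fun γ Pm c')
    nlinarith [hc'.1]
  rw [hDe, hD1c, abs_mul, abs_mul, abs_of_pos hε0, abs_of_pos hc0]
  have h1 : |D2fun γ Pm c'| * c * ε ≤ (M * c') * c * ε := by
    apply mul_le_mul_of_nonneg_right _ hε0.le
    exact mul_le_mul_of_nonneg_right hb2 hc0.le
  have h2 : M * c' * c * ε ≤ M * ε ^ 3 := by
    have hcc : c' * c ≤ ε * ε :=
      mul_le_mul (by linarith [hc'.2]) (by linarith) hc0.le hε0.le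
    calc M * c' * c * ε = M * (c' * c) * ε := by ring
      _ ≤ M * (ε * ε) * ε := by
          apply mul_le_mul_of_nonneg_right _ hε0.le
          exact mul_le_mul_of_nonneg_left hcc hM0
      _ = M * ε ^ 3 := by ring
  linarith

lemma aux_part2 (γ Pm : ℝ) (hγ : 1 ≤ γ) (hPm : 0 < Pm) :
    ∃ ε₀ > (0:ℝ), ∃ C > (0:ℝ), ∀ ε : ℝ, 0 < ε → ε < ε₀ →
      |(Pm * (Pm - ε) * (((Pm - ε) ^ γ - Pm ^ γ) / (γ * ((Pm - ε) - Pm)))) ^ (1 / (γ + 1))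
        - (Pm - ε / 2)| ≤ C * ε ^ 2 := by
  have hγ0 : (0:ℝ) < γ := by linarith
  have hγ1 : (0:ℝ) < γ + 1 := by linarith
  have hhalf : (0:ℝ) < Pm / 2 := by linarith
  obtain ⟨M, hM0, hMb⟩ := Dbound γ Pm hγ hPm
  set m : ℝ := (Pm / 2) ^ (γ + 1) with hm
  have hm0 : 0 < m := Real.rpow_pos_of_pos hhalf _
  set l : ℝ := (m / 2) ^ (1 / (γ + 1)) with hl
  have hl0 : 0 < l := Real.rpow_pos_of_pos (by linarith) _
  have hlγ : 0 < l ^ γ := Real.rpow_pos_of_pos hl0 _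
  refine ⟨min 1 (min (Pm / 2) (γ * m / (2 * (M + 1)))), ?_, (M + 1) / (γ * (γ + 1) * l ^ γ),
    by positivity, ?_⟩
  · have : (0:ℝ) < γ * m / (2 * (M + 1)) := by positivity
    simp only [lt_min_iff]
    exact ⟨one_pos, hhalf, this⟩
  intro ε hε0 hεlt
  have hε1 : ε < 1 := lt_of_lt_of_le hεlt (min_le_left _ _)
  have hε2 : ε ≤ Pm / 2 := le_of_lt (lt_of_lt_of_le hεlt ((min_le_right _ _).trans (min_le_left _ _)))
  have hε3 : ε < γ * m / (2 * (M + 1)) :=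
    lt_of_lt_of_le hεlt ((min_le_right _ _).trans (min_le_right _ _))
  have hεne : ε ≠ 0 := hε0.ne'
  set b : ℝ := Pm - 1/2 * ε with hb
  have hb1 : Pm / 2 ≤ b := by rw [hb]; linarith
  have hb2 : b ≤ Pm := by rw [hb]; linarith
  have hb0 : 0 < b := lt_of_lt_of_le hhalf hb1
  set K : ℝ := Pm * (Pm - ε) * (((Pm - ε) ^ γ - Pm ^ γ) / (γ * ((Pm - ε) - Pm))) with hK
  -- K - b^(γ+1) = Dfun / (γ ε)
  have hKD : K - b ^ (γ + 1) = Dfun γ Pm ε / (γ * ε) := by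
    rw [hK, hb, Dfun]
    rw [show (Pm - ε) - Pm = -ε by ring]
    field_simp
    ring
  have hDb := hMb ε hε0 hε2
  have hKb : |K - b ^ (γ + 1)| ≤ M / γ * ε ^ 2 := by
    rw [hKD, abs_div, abs_of_pos (by positivity : (0:ℝ) < γ * ε)]
    rw [div_le_iff₀ (by positivity : (0:ℝ) < γ * ε)]
    calc |Dfun γ Pm ε| ≤ M * ε ^ 3 := hDb
      _ = M / γ * ε ^ 2 * (γ * ε) := by field_simp
  -- smallness
  have hsmall : M / γ * ε ^ 2 ≤ m / 2 := by
    have hA1 : ε * (2 * (M + 1)) < γ * m := (lt_div_iff₀ (by positivity)).mp hε3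
    have hee : ε ^ 2 ≤ ε := by nlinarith
    have h1 : M * ε ^ 2 ≤ M * ε := mul_le_mul_of_nonneg_left hee hM0
    have h2 : M * ε ≤ γ * m / 2 := by nlinarith
    rw [div_mul_eq_mul_div, div_le_iff₀ hγ0]
    calc M * ε ^ 2 ≤ M * ε := h1
      _ ≤ γ * m / 2 := h2
      _ = m / 2 * γ := by ring
  have hbm : m ≤ b ^ (γ + 1) := Real.rpow_le_rpow hhalf.le hb1 hγ1.le
  have hKlow : m / 2 ≤ K := by
    have := (abs_le.mp (hKb.trans hsmall)).1
    linarith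
  have hK0 : 0 < K := by linarith
  set P0 : ℝ := K ^ (1 / (γ + 1)) with hP0
  have hP0pow : P0 ^ (γ + 1) = K := by
    rw [hP0, ← Real.rpow_mul hK0.le, one_div, inv_mul_cancel₀ hγ1.ne', Real.rpow_one]
  have hP0l : l ≤ P0 := Real.rpow_le_rpow (by linarith) hKlow (by positivity)
  have hbl : l ≤ b := by
    have hml : ((Pm / 2) ^ (γ + 1)) ^ (1 / (γ + 1)) = Pm / 2 := by
      rw [← Real.rpow_mul hhalf.le, mul_one_div, div_self hγ1.ne', Real.rpow_one]
    have h1 : l ≤ ((Pm / 2) ^ (γ + 1)) ^ (1 / (γ + 1)) :=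
      Real.rpow_le_rpow (by linarith) (by rw [← hm]; linarith) (by positivity)
    rw [hml] at h1
    exact h1.trans hb1
  have hrev := rpow_rev hl0 (by linarith : (1:ℝ) ≤ γ + 1) hP0l hbl
  rw [show γ + 1 - 1 = γ by ring, hP0pow] at hrev
  -- conclude
  have hstep : (γ + 1) * l ^ γ * |P0 - b| ≤ M / γ * ε ^ 2 := hrev.trans hKb
  have hc0 : (0:ℝ) < (γ + 1) * l ^ γ := by positivity
  rw [show Pm - ε / 2 = b by rw [hb]; ring]
  have hfinal : |P0 - b| ≤ M / γ * ε ^ 2 / ((γ + 1) * l ^ γ) := by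
    rw [le_div_iff₀ hc0]
    linarith [hstep]
  calc |P0 - b| ≤ M / γ * ε ^ 2 / ((γ + 1) * l ^ γ) := hfinal
    _ = M / (γ * ((γ + 1) * l ^ γ)) * ε ^ 2 := by field_simp
    _ ≤ (M + 1) / (γ * (γ + 1) * l ^ γ) * ε ^ 2 := by
        apply mul_le_mul_of_nonneg_right _ (sq_nonneg ε)
        rw [show γ * ((γ + 1) * l ^ γ) = γ * (γ + 1) * l ^ γ by ring]
        exact (div_le_div_iff_of_pos_right (by positivity)).mpr (by linarith)

lemma aux_part1 (γ Pm : ℝ) (hγ : 1 ≤ γ) (hPm : 0 < Pm) :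
    ∀ Pp : ℝ, 0 < Pp → Pp < Pm → ∀ f : ℝ → ℝ,
      (∀ P : ℝ, f P =
        P ^ γ + (Pm * Pp / P) * ((Pp ^ γ - Pm ^ γ) / (Pp - Pm))
          - (Pp ^ (γ + 1) - Pm ^ (γ + 1)) / (Pp - Pm)) →
      (0 < (Pm * Pp * ((Pp ^ γ - Pm ^ γ) / (γ * (Pp - Pm)))) ^ (1 / (γ + 1)) ∧
        deriv f ((Pm * Pp * ((Pp ^ γ - Pm ^ γ) / (γ * (Pp - Pm)))) ^ (1 / (γ + 1))) = 0 ∧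
        ∀ P : ℝ, 0 < P → deriv f P = 0 →
          P = (Pm * Pp * ((Pp ^ γ - Pm ^ γ) / (γ * (Pp - Pm)))) ^ (1 / (γ + 1))) := by
  intro Pp hPp hlt f hf
  have hγ0 : (0:ℝ) < γ := by linarith
  have hγ1 : (0:ℝ) < γ + 1 := by linarith
  set A : ℝ := (Pp ^ γ - Pm ^ γ) / (Pp - Pm) with hA
  set K : ℝ := Pm * Pp * ((Pp ^ γ - Pm ^ γ) / (γ * (Pp - Pm))) with hKdef
  have hnum : Pp ^ γ - Pm ^ γ < 0 := by
    have := Real.rpow_lt_rpow hPp.le hlt hγ0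
    linarith
  have hden : Pp - Pm < 0 := by linarith
  have hK : 0 < K := by
    rw [hKdef]
    have h1 : 0 < (Pp ^ γ - Pm ^ γ) / (γ * (Pp - Pm)) :=
      div_pos_of_neg_of_neg hnum (by nlinarith)
    positivity
  set P₀ : ℝ := K ^ (1 / (γ + 1)) with hP₀def
  have hP₀ : 0 < P₀ := Real.rpow_pos_of_pos hK _
  have hKey : P₀ ^ (γ + 1) = K := by
    rw [hP₀def, ← Real.rpow_mul hK.le, one_div, inv_mul_cancel₀ hγ1.ne', Real.rpow_one]
  have hfg : f = fun P => P ^ γ + (Pm * Pp / P) * A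
      - (Pp ^ (γ + 1) - Pm ^ (γ + 1)) / (Pp - Pm) := funext hf
  have hderiv : ∀ P : ℝ, 0 < P →
      deriv f P = γ * P ^ (γ - 1) + (Pm * Pp) * (-(P ^ 2)⁻¹) * A := by
    intro P hP
    have h1 : HasDerivAt (fun P : ℝ => P ^ γ) (γ * P ^ (γ - 1)) P :=
      Real.hasDerivAt_rpow_const (Or.inl hP.ne')
    have h2 : HasDerivAt (fun P : ℝ => Pm * Pp / P * A)
        ((Pm * Pp) * (-(P ^ 2)⁻¹) * A) P := by
      have := ((hasDerivAt_inv hP.ne').const_mul (Pm * Pp)).mul_const A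
      simpa [div_eq_mul_inv] using this
    have H := ((h1.add h2).sub_const ((Pp ^ (γ + 1) - Pm ^ (γ + 1)) / (Pp - Pm)))
    rw [hfg]
    exact H.deriv
  have hγK : γ * K = Pm * Pp * A := by
    rw [hKdef, hA]
    field_simp
  have hpowsplit : ∀ P : ℝ, 0 < P → γ * P ^ (γ - 1) * P ^ 2 = γ * P ^ (γ + 1) := by
    intro P hP
    have h : P ^ (γ - 1) * (P : ℝ) ^ (2:ℕ) = P ^ (γ + 1) := by
      rw [← Real.rpow_natCast P 2, ← Real.rpow_add hP]
      congr 1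
      push_cast
      ring
    calc γ * P ^ (γ - 1) * P ^ 2 = γ * (P ^ (γ - 1) * P ^ (2:ℕ)) := by ring
    _ = γ * P ^ (γ + 1) := by rw [h]
  refine ⟨hP₀, ?_, ?_⟩
  · rw [hderiv P₀ hP₀]
    have hsq : (P₀ : ℝ) ^ 2 ≠ 0 := pow_ne_zero _ hP₀.ne'
    have key : γ * P₀ ^ (γ - 1) * P₀ ^ 2 = Pm * Pp * A := by
      rw [hpowsplit P₀ hP₀, hKey]; exact hγK
    field_simp
    linarith [key]
  · intro P hP hdP
    rw [hderiv P hP] at hdP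
    have hsq : (P : ℝ) ^ 2 ≠ 0 := pow_ne_zero _ hP.ne'
    have key : γ * P ^ (γ + 1) = γ * K := by
      rw [← hpowsplit P hP, hγK]
      field_simp at hdP
      linarith [hdP]
    have hPK : P ^ (γ + 1) = K := by
      have := mul_left_cancel₀ hγ0.ne' key
      exact this
    have : (P ^ (γ + 1)) ^ (1 / (γ + 1)) = P := by
      rw [← Real.rpow_mul hP.le, mul_one_div, div_self hγ1.ne', Real.rpow_one]
    rw [← this, hPK]

/-- `f'(P) = 0` has a unique root in `(0,∞)`, given explicitly by
`P₀ = (P⁻P⁺·((P⁺)^γ − (P⁻)^γ)/(γ(P⁺ − P⁻)))^{1/(γ+1)}`; moreover, for `P⁺ = P⁻ − ε`,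
`|P₀ − (P⁻ − ε/2)| ≤ Cε²` for all sufficiently small `ε > 0`. -/
theorem statement_1 (γ Pm : ℝ) (hγ : 1 ≤ γ) (hPm : 0 < Pm) :
    (∀ Pp : ℝ, 0 < Pp → Pp < Pm → ∀ f : ℝ → ℝ,
      (∀ P : ℝ, f P =
        P ^ γ + (Pm * Pp / P) * ((Pp ^ γ - Pm ^ γ) / (Pp - Pm))
          - (Pp ^ (γ + 1) - Pm ^ (γ + 1)) / (Pp - Pm)) →
      (0 < (Pm * Pp * ((Pp ^ γ - Pm ^ γ) / (γ * (Pp - Pm)))) ^ (1 / (γ + 1)) ∧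
        deriv f ((Pm * Pp * ((Pp ^ γ - Pm ^ γ) / (γ * (Pp - Pm)))) ^ (1 / (γ + 1))) = 0 ∧
        ∀ P : ℝ, 0 < P → deriv f P = 0 →
          P = (Pm * Pp * ((Pp ^ γ - Pm ^ γ) / (γ * (Pp - Pm)))) ^ (1 / (γ + 1)))) ∧
    (∃ ε₀ > (0:ℝ), ∃ C > (0:ℝ), ∀ ε : ℝ, 0 < ε → ε < ε₀ →
      |(Pm * (Pm - ε) * (((Pm - ε) ^ γ - Pm ^ γ) / (γ * ((Pm - ε) - Pm)))) ^ (1 / (γ + 1))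
        - (Pm - ε / 2)| ≤ C * ε ^ 2) := by
  exact ⟨aux_part1 γ Pm hγ hPm, aux_part2 γ Pm hγ hPm⟩
end

section
/- Let γ ≥ 1, P⁻ > 0, and for 0 < ε < P⁻ set P⁺ = P⁻ − ε and let P₀ = P₀(ε) = (P⁻P⁺·((P⁺)^γ − (P⁻)^γ)/(γ(P⁺ − P⁻)))^{1/(γ+1)} be the unique positive critical point of f. Then there exist ε₀ > 0 and C > 0 such that for all ε ∈ (0, ε₀): |f(P₀(ε)) + (γ(γ+1)/8)(P⁻)^{γ−2}ε²| ≤ Cε³ and |f''(P₀(ε)) − γ(γ+1)(P⁻)^{γ−2}| ≤ Cε. -/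
open Set



lemma abs_le_of_mem_uIcc' {u s : ℝ} (hs : s ∈ uIcc (0:ℝ) u) : |s| ≤ |u| := by
  rcases le_total 0 u with h | h
  · rw [uIcc_of_le h] at hs
    rw [abs_of_nonneg hs.1, abs_of_nonneg h]; exact hs.2
  · rw [uIcc_of_ge h] at hs
    rw [abs_of_nonpos hs.2, abs_of_nonpos h]; linarith [hs.1]

lemma mvt_bound {g g' : ℝ → ℝ} {u M : ℝ}
    (hderiv : ∀ s ∈ uIcc (0:ℝ) u, HasDerivAt g (g' s) s)
    (hbound : ∀ s ∈ uIcc (0:ℝ) u, |g' s| ≤ M) :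
    |g u - g 0| ≤ M * |u| := by
  have := Convex.norm_image_sub_le_of_norm_hasDerivWithin_le
    (fun s hs => (hderiv s hs).hasDerivWithinAt) (fun s hs => hbound s hs)
    (convex_uIcc 0 u) left_mem_uIcc right_mem_uIcc
  simpa [Real.norm_eq_abs, sub_zero] using this

lemma hasDerivAt_one_add_rpow {β s : ℝ} (hs : (0:ℝ) < 1 + s) :
    HasDerivAt (fun x : ℝ => (1 + x) ^ β) (β * (1 + s) ^ (β - 1)) s := by
  have h := (Real.hasDerivAt_rpow_const (x := 1 + s) (p := β) (Or.inl
    (ne_of_gt hs)))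
  have h2 : HasDerivAt (fun x : ℝ => 1 + x) 1 s := by
    simpa using (hasDerivAt_id s).const_add 1
  exact (h.comp s h2).congr_deriv (by ring)

lemma T0 (β : ℝ) : ∃ C > (0:ℝ), ∀ u : ℝ, |u| ≤ 1/2 →
    |(1 + u) ^ β - 1| ≤ C * |u| := by
  obtain ⟨M, hM⟩ := (isCompact_Icc (a := (-(1:ℝ)/2)) (b := 1/2)).exists_bound_of_continuousOn
    (f := fun s => β * (1 + s) ^ (β - 1)) (by
      apply ContinuousOn.mul continuousOn_const
      apply ContinuousOn.rpow_const (by fun_prop)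
      intro s hs
      left
      simp only [mem_Icc] at hs
      intro h
      nlinarith [hs.1])
  refine ⟨M + 1, by have := hM 0 (by norm_num); simp [Real.norm_eq_abs] at this; linarith [abs_nonneg β], ?_⟩
  intro u hu
  have key : ∀ s ∈ uIcc (0:ℝ) u, (0:ℝ) < 1 + s ∧ s ∈ Icc (-(1:ℝ)/2) (1/2) := by
    intro s hs
    have h1 : |s| ≤ 1/2 := le_trans (abs_le_of_mem_uIcc' hs) hu
    rw [abs_le] at h1
    constructor
    · linarith [h1.1]
    · exact ⟨by linarith [h1.1], h1.2⟩
  have := mvt_bound (g := fun x => (1+x)^β - 1) (g' := fun s => β * (1+s)^(β-1)) (u := u)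
    (fun s hs => ((hasDerivAt_one_add_rpow (key s hs).1).sub_const 1))
    (fun s hs => by
      have := hM s (key s hs).2
      rw [Real.norm_eq_abs] at this
      linarith)
  norm_num [Real.one_rpow] at this
  calc |(1+u)^β - 1| ≤ M * |u| := this
    _ ≤ (M+1) * |u| := by nlinarith [abs_nonneg u]

lemma taylor_step {β : ℝ} {p q : ℝ → ℝ} {C : ℝ} (n : ℕ)
    (hIH : ∀ u : ℝ, |u| ≤ 1/2 → |(1 + u) ^ (β - 1) - q u| ≤ C * |u| ^ (n+1))
    (hpq : ∀ s : ℝ, HasDerivAt p (β * q s) s) (hp0 : p 0 = 1)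
    (hC : 0 ≤ C) :
    ∀ u : ℝ, |u| ≤ 1/2 → |(1 + u) ^ β - p u| ≤ (|β| * C) * |u| ^ (n+2) := by
  intro u hu
  have key : ∀ s ∈ uIcc (0:ℝ) u, (0:ℝ) < 1 + s ∧ |s| ≤ 1/2 ∧ |s| ≤ |u| := by
    intro s hs
    have h1 : |s| ≤ |u| := abs_le_of_mem_uIcc' hs
    have h2 : |s| ≤ 1/2 := le_trans h1 hu
    rw [abs_le] at h2
    exact ⟨by linarith [h2.1], by rw [abs_le]; exact h2, h1⟩
  have hmvt := mvt_bound (g := fun x => (1+x)^β - p x)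
      (g' := fun s => β * (1+s)^(β-1) - β * q s) (u := u)
    (fun s hs => (hasDerivAt_one_add_rpow (key s hs).1).sub (hpq s))
    (fun s hs => by
      obtain ⟨h1, h2, h3⟩ := key s hs
      have := hIH s h2
      calc |β * (1+s)^(β-1) - β * q s| = |β| * |(1+s)^(β-1) - q s| := by
            rw [← abs_mul]; ring_nf
        _ ≤ |β| * (C * |s| ^ (n+1)) := by
            apply mul_le_mul_of_nonneg_left this (abs_nonneg β)
        _ ≤ |β| * (C * |u| ^ (n+1)) := by
            apply mul_le_mul_of_nonneg_left _ (abs_nonneg β)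
            apply mul_le_mul_of_nonneg_left _ hC
            exact pow_le_pow_left₀ (abs_nonneg s) h3 _
        _ = |β| * C * |u| ^ (n+1) := by ring)
  norm_num [Real.one_rpow, hp0] at hmvt
  calc |(1+u)^β - p u| ≤ |β| * C * |u|^(n+1) * |u| := hmvt
    _ = |β| * C * |u| ^ (n+2) := by ring


lemma hasDerivAt_poly3 (a b c d s : ℝ) :
    HasDerivAt (fun u : ℝ => a + b * u + c * u ^ 2 + d * u ^ 3)
      (b + 2 * c * s + 3 * d * s ^ 2) s := by
  have h1 : HasDerivAt (fun u : ℝ => a + b * u) b s := by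
    simpa using ((hasDerivAt_id s).const_mul b).const_add a
  have h2 : HasDerivAt (fun u : ℝ => c * u ^ 2) (c * (2 * s)) s := by
    have := (hasDerivAt_pow 2 s).const_mul c
    norm_num at this
    exact this.congr_deriv (by ring)
  have h3 : HasDerivAt (fun u : ℝ => d * u ^ 3) (d * (3 * s ^ 2)) s := by
    have := (hasDerivAt_pow 3 s).const_mul d
    norm_num at this
    exact this.congr_deriv (by ring)
  exact ((h1.add h2).add h3).congr_deriv (by ring)

lemma T1 (β : ℝ) : ∃ C > (0:ℝ), ∀ u : ℝ, |u| ≤ 1/2 →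
    |(1 + u) ^ β - (1 + β * u)| ≤ C * |u| ^ 2 := by
  obtain ⟨C, hC, h⟩ := T0 (β - 1)
  refine ⟨|β| * C + 1, by positivity, fun u hu => ?_⟩
  have := taylor_step (β := β) (p := fun u => 1 + β * u) (q := fun _ => 1) 0
    (fun v hv => by simpa using h v hv)
    (fun s => by simpa using ((hasDerivAt_id s).const_mul β).const_add 1)
    (by norm_num) hC.le u hu
  calc |(1+u)^β - (1 + β*u)| ≤ |β| * C * |u|^2 := by simpa using this
    _ ≤ (|β| * C + 1) * |u|^2 := by nlinarith [sq_nonneg |u|, abs_nonneg u]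

lemma T2 (β : ℝ) : ∃ C > (0:ℝ), ∀ u : ℝ, |u| ≤ 1/2 →
    |(1 + u) ^ β - (1 + β * u + β * (β - 1) / 2 * u ^ 2)| ≤ C * |u| ^ 3 := by
  obtain ⟨C, hC, h⟩ := T1 (β - 1)
  refine ⟨|β| * C + 1, by positivity, fun u hu => ?_⟩
  have := taylor_step (β := β) (p := fun u => 1 + β * u + β * (β - 1) / 2 * u ^ 2)
    (q := fun u => 1 + (β - 1) * u) 1 h
    (fun s => by
      have h0 := hasDerivAt_poly3 1 β (β * (β - 1) / 2) 0 s
      simp only [zero_mul, mul_zero, add_zero] at h0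
      exact h0.congr_deriv (by ring)) (by norm_num) hC.le u hu
  calc |(1+u)^β - (1 + β*u + β*(β-1)/2*u^2)| ≤ |β| * C * |u|^3 := by simpa using this
    _ ≤ (|β| * C + 1) * |u|^3 := by
        have : (0:ℝ) ≤ |u|^3 := by positivity
        nlinarith

lemma T3 (β : ℝ) : ∃ C > (0:ℝ), ∀ u : ℝ, |u| ≤ 1/2 →
    |(1 + u) ^ β - (1 + β * u + β * (β - 1) / 2 * u ^ 2 + β * (β - 1) * (β - 2) / 6 * u ^ 3)|
      ≤ C * |u| ^ 4 := by
  obtain ⟨C, hC, h⟩ := T2 (β - 1)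
  refine ⟨|β| * C + 1, by positivity, fun u hu => ?_⟩
  have := taylor_step (β := β)
    (p := fun u => 1 + β * u + β * (β - 1) / 2 * u ^ 2 + β * (β - 1) * (β - 2) / 6 * u ^ 3)
    (q := fun u => 1 + (β - 1) * u + (β - 1) * (β - 1 - 1) / 2 * u ^ 2) 2 h
    (fun s => by
      have h0 := hasDerivAt_poly3 1 β (β * (β - 1) / 2) (β * (β - 1) * (β - 2) / 6) s
      exact h0.congr_deriv (by ring)) (by norm_num) hC.le u hu
  calc |(1+u)^β - (1 + β*u + β*(β-1)/2*u^2 + β*(β-1)*(β-2)/6*u^3)| ≤ |β| * C * |u|^4 := by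
        simpa using this
    _ ≤ (|β| * C + 1) * |u|^4 := by
        have : (0:ℝ) ≤ |u|^4 := by positivity
        nlinarith

lemma key_id (γ X w t u : ℝ) (h1 : γ + 1 ≠ 0) :
    (γ + 1) * X - u + γ * (γ + 1) / 8 * t ^ 2
      = (γ + 1) * (X - (1 + γ / (γ + 1) * w + γ / (γ + 1) * (γ / (γ + 1) - 1) / 2 * w ^ 2))
        + γ * (w - (-((γ + 1) / 2) * t + (γ ^ 2 - 1) / 6 * t ^ 2))
        - γ / (2 * (γ + 1)) * (w ^ 2 - (γ + 1) ^ 2 / 4 * t ^ 2)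
        - (u - ((γ + 1) - γ * (γ + 1) / 2 * t + γ * (γ ^ 2 - 1) / 6 * t ^ 2)) := by
  field_simp
  ring

set_option maxHeartbeats 1600000 in
lemma core (γ : ℝ) (hγ : 1 ≤ γ) :
    ∃ δ : ℝ, 0 < δ ∧ δ ≤ 1/2 ∧ ∃ C > (0:ℝ), ∀ t : ℝ, 0 < t → t < δ →
      (1/2 ≤ (1 - t) * ((1 - (1 - t) ^ γ) / (γ * t)) ∧
        (1 - t) * ((1 - (1 - t) ^ γ) / (γ * t)) ≤ 3/2) ∧
      |(γ + 1) * ((1 - t) * ((1 - (1 - t) ^ γ) / (γ * t))) ^ (γ / (γ + 1))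
          - (1 - (1 - t) ^ (γ + 1)) / t + γ * (γ + 1) / 8 * t ^ 2| ≤ C * t ^ 3 ∧
      |((1 - t) * ((1 - (1 - t) ^ γ) / (γ * t))) ^ ((γ - 2) / (γ + 1)) - 1| ≤ C * t := by
  have hγ0 : (0:ℝ) < γ := by linarith
  have hγ1 : (0:ℝ) < γ + 1 := by linarith
  have hg2 : (0:ℝ) ≤ (γ ^ 2 - 1) / 6 := by nlinarith
  obtain ⟨C3, hC3, h3γ⟩ := T3 γ
  obtain ⟨C3', hC3', h3γ1⟩ := T3 (γ + 1)
  obtain ⟨C2, hC2, h2α⟩ := T2 (γ / (γ + 1))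
  obtain ⟨C0, hC0, h0β⟩ := T0 ((γ - 2) / (γ + 1))
  set c₃ : ℝ := γ * (γ - 1) * (γ - 2) / 6 with hc₃
  set Cq : ℝ := (C3 + |c₃|) / γ with hCq
  have hCq0 : 0 < Cq := by positivity
  set Λ : ℝ := (γ + 1) / 2 + (γ ^ 2 - 1) / 6 + Cq with hΛ
  have hΛ0 : 0 < Λ := by positivity
  refine ⟨min (1/2) (1 / (2 * Λ)), by positivity, min_le_left _ _, ?_⟩
  set C9 : ℝ := ((γ ^ 2 - 1) / 6 + Cq) * (Λ + (γ + 1) / 2) with hC9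
  have hC90 : 0 < C9 := by positivity
  set Cb : ℝ := (γ + 1) * (C2 * Λ ^ 3) + γ * Cq + γ / (2 * (γ + 1)) * C9 + C3' with hCb
  have hCb0 : 0 < Cb := by positivity
  clear_value c₃ Cq Λ C9 Cb
  refine ⟨Cb + C0 * Λ, by positivity, ?_⟩
  intro t ht htδ
  have ht2 : t < 1/2 := lt_of_lt_of_le htδ (min_le_left _ _)
  have ht1 : t ≤ 1 := by linarith
  have htne : t ≠ 0 := ne_of_gt ht
  have hγ1ne : γ + 1 ≠ 0 := ne_of_gt hγ1
  have htt2 : t ^ 2 ≤ t := by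
    have := pow_le_pow_of_le_one ht.le ht1 (show 1 ≤ 2 by norm_num)
    simpa using this
  have htt3 : t ^ 3 ≤ t ^ 2 := by
    have := pow_le_pow_of_le_one ht.le ht1 (show 2 ≤ 3 by norm_num)
    simpa using this
  have htabs : |(-t)| ≤ 1/2 := by rw [abs_neg, abs_of_pos ht]; linarith
  set E : ℝ := (1 - t) ^ γ with hE_def
  set F : ℝ := (1 - t) ^ (γ + 1) with hF_def
  set q : ℝ := (1 - t) * ((1 - E) / (γ * t)) with hq_def
  clear_value E F q
  -- expansion of E
  have hE : |E - (1 - γ * t + γ * (γ - 1) / 2 * t ^ 2 - c₃ * t ^ 3)| ≤ C3 * t ^ 4 := by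
    have h := h3γ (-t) htabs
    have e1 : (1:ℝ) + -t = 1 - t := by ring
    rw [e1] at h
    have e2 : (1 : ℝ) + γ * -t + γ * (γ - 1) / 2 * (-t) ^ 2 + c₃ * (-t) ^ 3
        = 1 - γ * t + γ * (γ - 1) / 2 * t ^ 2 - c₃ * t ^ 3 := by ring
    rw [e2, abs_neg, abs_of_pos ht] at h
    rw [← hE_def] at h
    exact h
  -- expansion of q
  have hq : |q - (1 - (γ + 1) / 2 * t + (γ ^ 2 - 1) / 6 * t ^ 2)| ≤ Cq * t ^ 3 := by
    have hratio : q - (1 - (γ + 1) / 2 * t + (γ ^ 2 - 1) / 6 * t ^ 2)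
        = ((1 - t) * ((1 - γ * t + γ * (γ - 1) / 2 * t ^ 2 - c₃ * t ^ 3) - E) + (- c₃) * t ^ 4)
          / (γ * t) := by
      rw [hq_def, hc₃]
      field_simp
      ring
    rw [hratio, abs_div, abs_of_pos (by positivity : (0:ℝ) < γ * t)]
    rw [div_le_iff₀ (by positivity : (0:ℝ) < γ * t)]
    have h1t : |1 - t| ≤ 1 := by rw [abs_of_pos (by linarith : (0:ℝ) < 1 - t)]; linarith
    calc |(1 - t) * ((1 - γ * t + γ * (γ - 1) / 2 * t ^ 2 - c₃ * t ^ 3) - E) + (- c₃) * t ^ 4|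
        ≤ |(1 - t) * ((1 - γ * t + γ * (γ - 1) / 2 * t ^ 2 - c₃ * t ^ 3) - E)| + |(- c₃) * t ^ 4| :=
          abs_add_le _ _
      _ ≤ 1 * (C3 * t ^ 4) + |c₃| * t ^ 4 := by
          rw [abs_mul, abs_mul, abs_neg, abs_of_pos (by positivity : (0:ℝ) < t ^ 4)]
          have h5 : |1 - γ * t + γ * (γ - 1) / 2 * t ^ 2 - c₃ * t ^ 3 - E| =
              |E - (1 - γ * t + γ * (γ - 1) / 2 * t ^ 2 - c₃ * t ^ 3)| := abs_sub_comm _ _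
          gcongr
          rw [h5]; exact hE
      _ = (C3 + |c₃|) * t ^ 4 := by ring
      _ = Cq * t ^ 3 * (γ * t) := by
          rw [hCq]
          field_simp
  set w : ℝ := q - 1 with hw_def
  clear_value w
  have hw1 : |w - (-((γ + 1) / 2) * t + (γ ^ 2 - 1) / 6 * t ^ 2)| ≤ Cq * t ^ 3 := by
    have h : w - (-((γ + 1) / 2) * t + (γ ^ 2 - 1) / 6 * t ^ 2)
        = q - (1 - (γ + 1) / 2 * t + (γ ^ 2 - 1) / 6 * t ^ 2) := by rw [hw_def]; ring
    rw [h]; exact hq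
  have habs_poly : |(-((γ + 1) / 2) * t + (γ ^ 2 - 1) / 6 * t ^ 2)| ≤
      ((γ + 1) / 2 + (γ ^ 2 - 1) / 6) * t := by
    calc |(-((γ + 1) / 2) * t + (γ ^ 2 - 1) / 6 * t ^ 2)|
        ≤ |(-((γ + 1) / 2)) * t| + |(γ ^ 2 - 1) / 6 * t ^ 2| := abs_add_le _ _
      _ = (γ + 1) / 2 * t + (γ ^ 2 - 1) / 6 * t ^ 2 := by
          rw [abs_mul, abs_mul, abs_neg, abs_of_pos (by positivity : (0:ℝ) < (γ+1)/2),
            abs_of_pos ht, abs_of_nonneg hg2, abs_of_pos (by positivity : (0:ℝ) < t ^ 2)]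
      _ ≤ (γ + 1) / 2 * t + (γ ^ 2 - 1) / 6 * t := by
          have := mul_le_mul_of_nonneg_left htt2 hg2
          linarith
      _ = ((γ + 1) / 2 + (γ ^ 2 - 1) / 6) * t := by ring
  have hwabs : |w| ≤ Λ * t := by
    have h1 := abs_sub_abs_le_abs_sub w (-((γ + 1) / 2) * t + (γ ^ 2 - 1) / 6 * t ^ 2)
    have h3 : Cq * t ^ 3 ≤ Cq * t := by
      have : t ^ 3 ≤ t := le_trans htt3 htt2
      exact mul_le_mul_of_nonneg_left this hCq0.le
    have h2 := le_trans h1 hw1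
    have e1 : Λ * t = ((γ + 1) / 2 + (γ ^ 2 - 1) / 6) * t + Cq * t := by rw [hΛ]; ring
    rw [e1]
    linarith [habs_poly]
  have hw_half : |w| ≤ 1/2 := by
    have hd : t ≤ 1 / (2 * Λ) := le_of_lt (lt_of_lt_of_le htδ (min_le_right _ _))
    have h1 : t * (2 * Λ) ≤ 1 := by
      have := (le_div_iff₀ (by positivity : (0:ℝ) < 2 * Λ)).mp hd
      linarith
    linarith [hwabs, h1]
  have hwle : -(1/2) ≤ w ∧ w ≤ 1/2 := abs_le.mp hw_half
  have hq_bounds : 1/2 ≤ q ∧ q ≤ 3/2 := by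
    constructor <;> [linarith [hwle.1]; linarith [hwle.2]]
  have h1w : (1:ℝ) + w = q := by rw [hw_def]; ring
  refine ⟨hq_bounds, ?_, ?_⟩
  · -- claim (b)
    have hw2 : |w + (γ + 1) / 2 * t| ≤ ((γ ^ 2 - 1) / 6 + Cq) * t ^ 2 := by
      have h : w + (γ + 1) / 2 * t
          = (w - (-((γ + 1) / 2) * t + (γ ^ 2 - 1) / 6 * t ^ 2)) + (γ ^ 2 - 1) / 6 * t ^ 2 := by
        ring
      rw [h]
      calc |(w - (-((γ + 1) / 2) * t + (γ ^ 2 - 1) / 6 * t ^ 2)) + (γ ^ 2 - 1) / 6 * t ^ 2|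
          ≤ |w - (-((γ + 1) / 2) * t + (γ ^ 2 - 1) / 6 * t ^ 2)| + |(γ ^ 2 - 1) / 6 * t ^ 2| :=
            abs_add_le _ _
        _ ≤ Cq * t ^ 3 + (γ ^ 2 - 1) / 6 * t ^ 2 := by
            rw [abs_mul, abs_of_nonneg hg2, abs_of_pos (by positivity : (0:ℝ) < t ^ 2)]
            linarith [hw1]
        _ ≤ ((γ ^ 2 - 1) / 6 + Cq) * t ^ 2 := by
            have := mul_le_mul_of_nonneg_left htt3 hCq0.le
            linarith
    have hwm : |w - (γ + 1) / 2 * t| ≤ (Λ + (γ + 1) / 2) * t := by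
      calc |w - (γ + 1) / 2 * t| ≤ |w| + |(γ + 1) / 2 * t| := abs_sub _ _
        _ ≤ Λ * t + (γ + 1) / 2 * t := by
            rw [abs_mul, abs_of_pos (by positivity : (0:ℝ) < (γ+1)/2), abs_of_pos ht]
            linarith [hwabs]
        _ = (Λ + (γ + 1) / 2) * t := by ring
    have hwsq : |w ^ 2 - (γ + 1) ^ 2 / 4 * t ^ 2| ≤ C9 * t ^ 3 := by
      have hid : w ^ 2 - (γ + 1) ^ 2 / 4 * t ^ 2
          = (w + (γ + 1) / 2 * t) * (w - (γ + 1) / 2 * t) := by ring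
      rw [hid, abs_mul]
      calc |w + (γ + 1) / 2 * t| * |w - (γ + 1) / 2 * t|
          ≤ (((γ ^ 2 - 1) / 6 + Cq) * t ^ 2) * ((Λ + (γ + 1) / 2) * t) :=
            mul_le_mul hw2 hwm (abs_nonneg _) (by positivity)
        _ = C9 * t ^ 3 := by rw [hC9]; ring
    have hqα : |q ^ (γ / (γ + 1)) - (1 + γ / (γ + 1) * w + γ / (γ + 1) * (γ / (γ + 1) - 1) / 2 * w ^ 2)|
        ≤ C2 * Λ ^ 3 * t ^ 3 := by
      have h := h2α w hw_half
      rw [h1w] at h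
      calc |q ^ (γ / (γ + 1)) - (1 + γ / (γ + 1) * w + γ / (γ + 1) * (γ / (γ + 1) - 1) / 2 * w ^ 2)|
          ≤ C2 * |w| ^ 3 := h
        _ ≤ C2 * (Λ * t) ^ 3 := by
            have := pow_le_pow_left₀ (abs_nonneg w) hwabs 3
            exact mul_le_mul_of_nonneg_left this hC2.le
        _ = C2 * Λ ^ 3 * t ^ 3 := by ring
    have hb : |(1 - F) / t - ((γ + 1) - γ * (γ + 1) / 2 * t + γ * (γ ^ 2 - 1) / 6 * t ^ 2)|
        ≤ C3' * t ^ 3 := by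
      have hF := h3γ1 (-t) htabs
      have e1 : (1:ℝ) + -t = 1 - t := by ring
      rw [e1] at hF
      have e2 : (1:ℝ) + (γ + 1) * -t + (γ + 1) * (γ + 1 - 1) / 2 * (-t) ^ 2
          + (γ + 1) * (γ + 1 - 1) * (γ + 1 - 2) / 6 * (-t) ^ 3
          = 1 - (γ + 1) * t + (γ + 1) * γ / 2 * t ^ 2 - (γ + 1) * γ * (γ - 1) / 6 * t ^ 3 := by ring
      rw [e2, abs_neg, abs_of_pos ht] at hF
      rw [← hF_def] at hF
      have hid : (1 - F) / t - ((γ + 1) - γ * (γ + 1) / 2 * t + γ * (γ ^ 2 - 1) / 6 * t ^ 2)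
          = ((1 - (γ + 1) * t + (γ + 1) * γ / 2 * t ^ 2 - (γ + 1) * γ * (γ - 1) / 6 * t ^ 3) - F)
            / t := by
        field_simp
        ring
      rw [hid, abs_div, abs_of_pos ht, div_le_iff₀ ht]
      calc |(1 - (γ + 1) * t + (γ + 1) * γ / 2 * t ^ 2 - (γ + 1) * γ * (γ - 1) / 6 * t ^ 3) - F|
          = |F - (1 - (γ + 1) * t + (γ + 1) * γ / 2 * t ^ 2 - (γ + 1) * γ * (γ - 1) / 6 * t ^ 3)| :=
            abs_sub_comm _ _
        _ ≤ C3' * t ^ 4 := hF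
        _ = C3' * t ^ 3 * t := by ring
    have hkey : (γ + 1) * q ^ (γ / (γ + 1)) - (1 - F) / t + γ * (γ + 1) / 8 * t ^ 2
        = (γ + 1) * (q ^ (γ / (γ + 1))
              - (1 + γ / (γ + 1) * w + γ / (γ + 1) * (γ / (γ + 1) - 1) / 2 * w ^ 2))
          + γ * (w - (-((γ + 1) / 2) * t + (γ ^ 2 - 1) / 6 * t ^ 2))
          - γ / (2 * (γ + 1)) * (w ^ 2 - (γ + 1) ^ 2 / 4 * t ^ 2)
          - ((1 - F) / t - ((γ + 1) - γ * (γ + 1) / 2 * t + γ * (γ ^ 2 - 1) / 6 * t ^ 2)) :=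
      key_id γ (q ^ (γ / (γ + 1))) w t ((1 - F) / t) hγ1ne
    have hA : |(γ + 1) * (q ^ (γ / (γ + 1))
        - (1 + γ / (γ + 1) * w + γ / (γ + 1) * (γ / (γ + 1) - 1) / 2 * w ^ 2))|
        ≤ (γ + 1) * (C2 * Λ ^ 3 * t ^ 3) := by
      rw [abs_mul, abs_of_pos hγ1]
      exact mul_le_mul_of_nonneg_left hqα hγ1.le
    have hB : |γ * (w - (-((γ + 1) / 2) * t + (γ ^ 2 - 1) / 6 * t ^ 2))| ≤ γ * (Cq * t ^ 3) := by
      rw [abs_mul, abs_of_pos hγ0]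
      exact mul_le_mul_of_nonneg_left hw1 hγ0.le
    have hC : |γ / (2 * (γ + 1)) * (w ^ 2 - (γ + 1) ^ 2 / 4 * t ^ 2)|
        ≤ γ / (2 * (γ + 1)) * (C9 * t ^ 3) := by
      rw [abs_mul, abs_of_pos (by positivity : (0:ℝ) < γ / (2 * (γ + 1)))]
      exact mul_le_mul_of_nonneg_left hwsq (by positivity)
    calc |(γ + 1) * q ^ (γ / (γ + 1)) - (1 - F) / t + γ * (γ + 1) / 8 * t ^ 2|
        = |(γ + 1) * (q ^ (γ / (γ + 1))
              - (1 + γ / (γ + 1) * w + γ / (γ + 1) * (γ / (γ + 1) - 1) / 2 * w ^ 2))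
          + γ * (w - (-((γ + 1) / 2) * t + (γ ^ 2 - 1) / 6 * t ^ 2))
          - γ / (2 * (γ + 1)) * (w ^ 2 - (γ + 1) ^ 2 / 4 * t ^ 2)
          - ((1 - F) / t - ((γ + 1) - γ * (γ + 1) / 2 * t + γ * (γ ^ 2 - 1) / 6 * t ^ 2))| := by
          rw [hkey]
      _ ≤ |(γ + 1) * (q ^ (γ / (γ + 1))
              - (1 + γ / (γ + 1) * w + γ / (γ + 1) * (γ / (γ + 1) - 1) / 2 * w ^ 2))
          + γ * (w - (-((γ + 1) / 2) * t + (γ ^ 2 - 1) / 6 * t ^ 2))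
          - γ / (2 * (γ + 1)) * (w ^ 2 - (γ + 1) ^ 2 / 4 * t ^ 2)|
          + |(1 - F) / t - ((γ + 1) - γ * (γ + 1) / 2 * t + γ * (γ ^ 2 - 1) / 6 * t ^ 2)| :=
          abs_sub _ _
      _ ≤ |(γ + 1) * (q ^ (γ / (γ + 1))
              - (1 + γ / (γ + 1) * w + γ / (γ + 1) * (γ / (γ + 1) - 1) / 2 * w ^ 2))
          + γ * (w - (-((γ + 1) / 2) * t + (γ ^ 2 - 1) / 6 * t ^ 2))|
          + |γ / (2 * (γ + 1)) * (w ^ 2 - (γ + 1) ^ 2 / 4 * t ^ 2)|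
          + |(1 - F) / t - ((γ + 1) - γ * (γ + 1) / 2 * t + γ * (γ ^ 2 - 1) / 6 * t ^ 2)| := by
          have := abs_sub ((γ + 1) * (q ^ (γ / (γ + 1))
              - (1 + γ / (γ + 1) * w + γ / (γ + 1) * (γ / (γ + 1) - 1) / 2 * w ^ 2))
            + γ * (w - (-((γ + 1) / 2) * t + (γ ^ 2 - 1) / 6 * t ^ 2)))
            (γ / (2 * (γ + 1)) * (w ^ 2 - (γ + 1) ^ 2 / 4 * t ^ 2))
          linarith
      _ ≤ ((γ + 1) * (C2 * Λ ^ 3 * t ^ 3) + γ * (Cq * t ^ 3))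
          + γ / (2 * (γ + 1)) * (C9 * t ^ 3) + C3' * t ^ 3 := by
          have h4 := abs_add_le ((γ + 1) * (q ^ (γ / (γ + 1))
              - (1 + γ / (γ + 1) * w + γ / (γ + 1) * (γ / (γ + 1) - 1) / 2 * w ^ 2)))
            (γ * (w - (-((γ + 1) / 2) * t + (γ ^ 2 - 1) / 6 * t ^ 2)))
          linarith [hA, hB, hC, hb]
      _ = Cb * t ^ 3 := by rw [hCb]; ring
      _ ≤ (Cb + C0 * Λ) * t ^ 3 := by
          have h0 : (0:ℝ) ≤ C0 * Λ * t ^ 3 := by positivity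
          have e : (Cb + C0 * Λ) * t ^ 3 = Cb * t ^ 3 + C0 * Λ * t ^ 3 := by ring
          linarith
  · -- claim (c)
    have h := h0β w hw_half
    rw [h1w] at h
    calc |q ^ ((γ - 2) / (γ + 1)) - 1| ≤ C0 * |w| := h
      _ ≤ C0 * (Λ * t) := mul_le_mul_of_nonneg_left hwabs hC0.le
      _ = C0 * Λ * t := by ring
      _ ≤ (Cb + C0 * Λ) * t := by
          have h0 : (0:ℝ) ≤ Cb * t := by positivity
          have e : (Cb + C0 * Λ) * t = Cb * t + C0 * Λ * t := by ring
          linarith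

set_option maxHeartbeats 1600000 in
/-- expansions `f(P₀(ε)) = −(γ(γ+1)/8)(P⁻)^{γ−2}ε² + O(ε³)` and
`f''(P₀(ε)) = γ(γ+1)(P⁻)^{γ−2} + O(ε)` at the unique positive critical point
`P₀(ε)` of `f`, for `P⁺ = P⁻ − ε`. -/
theorem statement_2 (γ Pm : ℝ) (hγ : 1 ≤ γ) (hPm : 0 < Pm) :
    ∃ ε₀ > (0:ℝ), ∃ C > (0:ℝ), ∀ ε : ℝ, 0 < ε → ε < ε₀ →
      ∀ f : ℝ → ℝ,
        (∀ P : ℝ, f P =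
          P ^ γ + (Pm * (Pm - ε) / P) * (((Pm - ε) ^ γ - Pm ^ γ) / ((Pm - ε) - Pm))
            - ((Pm - ε) ^ (γ + 1) - Pm ^ (γ + 1)) / ((Pm - ε) - Pm)) →
        |f ((Pm * (Pm - ε) * (((Pm - ε) ^ γ - Pm ^ γ) / (γ * ((Pm - ε) - Pm)))) ^ (1 / (γ + 1)))
            + (γ * (γ + 1) / 8) * Pm ^ (γ - 2) * ε ^ 2| ≤ C * ε ^ 3 ∧
        |deriv (deriv f)
            ((Pm * (Pm - ε) * (((Pm - ε) ^ γ - Pm ^ γ) / (γ * ((Pm - ε) - Pm)))) ^ (1 / (γ + 1)))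
            - γ * (γ + 1) * Pm ^ (γ - 2)| ≤ C * ε := by
  have hγ0 : (0:ℝ) < γ := by linarith
  have hγ1 : (0:ℝ) < γ + 1 := by linarith
  have hγ1ne : γ + 1 ≠ 0 := ne_of_gt hγ1
  have hPmγpos : 0 < Pm ^ γ := Real.rpow_pos_of_pos hPm γ
  have hPmγ2pos : 0 < Pm ^ (γ - 2) := Real.rpow_pos_of_pos hPm (γ - 2)
  obtain ⟨δ, hδ0, hδhalf, Cc, hCc, hcore⟩ := core γ hγ
  refine ⟨Pm * δ, by positivity,
    Pm ^ γ * Cc / Pm ^ 3 + γ * (γ + 1) * Pm ^ (γ - 2) * Cc / Pm, by positivity, ?_⟩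
  intro ε hε hεδ f hf
  set t : ℝ := ε / Pm with ht_def
  have ht : 0 < t := by positivity
  have htδ : t < δ := by
    rw [ht_def, div_lt_iff₀ hPm]
    linarith [hεδ, mul_comm Pm δ]
  have hεPm : ε = Pm * t := by rw [ht_def]; field_simp
  have ht2 : t < 1/2 := lt_of_lt_of_le htδ hδhalf
  have ht1 : (0:ℝ) < 1 - t := by linarith
  have hPme : 0 < Pm - ε := by
    have h : Pm - ε = Pm * (1 - t) := by rw [hεPm]; ring
    rw [h]; positivity
  have htne : t ≠ 0 := ne_of_gt ht
  have hεne : ε ≠ 0 := ne_of_gt hε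
  obtain ⟨⟨hq1, hq2⟩, hcb, hcc⟩ := hcore t ht htδ
  set Q : ℝ := (1 - t) * ((1 - (1 - t) ^ γ) / (γ * t)) with hQ_def
  have hQ0 : 0 < Q := by linarith
  have hPmt : Pm - ε = Pm * (1 - t) := by rw [hεPm]; ring
  have hSγ : (Pm - ε) ^ γ = Pm ^ γ * (1 - t) ^ γ := by
    rw [hPmt, Real.mul_rpow hPm.le ht1.le]
  have hSγ1 : (Pm - ε) ^ (γ + 1) = Pm ^ (γ + 1) * (1 - t) ^ (γ + 1) := by
    rw [hPmt, Real.mul_rpow hPm.le ht1.le]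
  have hPmγ1 : Pm ^ γ * Pm = Pm ^ (γ + 1) := (Real.rpow_add_one hPm.ne' γ).symm
  have hsub : (Pm - ε) - Pm = -ε := by ring
  -- the critical point
  have hInner : Pm * (Pm - ε) * (((Pm - ε) ^ γ - Pm ^ γ) / (γ * ((Pm - ε) - Pm)))
      = Pm ^ γ * Pm * Q := by
    rw [hSγ, hsub, hεPm, hQ_def]
    field_simp
    ring
  have hP₀eq : (Pm * (Pm - ε) * (((Pm - ε) ^ γ - Pm ^ γ) / (γ * ((Pm - ε) - Pm)))) ^ (1 / (γ + 1))
      = Pm * Q ^ (1 / (γ + 1)) := by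
    rw [hInner, hPmγ1, Real.mul_rpow (by positivity) hQ0.le]
    congr 1
    rw [← Real.rpow_mul hPm.le]
    rw [mul_one_div, div_self hγ1ne, Real.rpow_one]
  rw [hP₀eq]
  set P₀ : ℝ := Pm * Q ^ (1 / (γ + 1)) with hP₀def
  have hQr : 0 < Q ^ (1 / (γ + 1)) := Real.rpow_pos_of_pos hQ0 _
  have hP₀pos : 0 < P₀ := by rw [hP₀def]; positivity
  have hQpow : ∀ a : ℝ, (Q ^ (1 / (γ + 1))) ^ a = Q ^ (a / (γ + 1)) := by
    intro a
    rw [← Real.rpow_mul hQ0.le, one_div, inv_mul_eq_div]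
  have hP₀γ : P₀ ^ γ = Pm ^ γ * Q ^ (γ / (γ + 1)) := by
    rw [hP₀def, Real.mul_rpow hPm.le hQr.le, hQpow]
  have hP₀γ2 : P₀ ^ (γ - 2) = Pm ^ (γ - 2) * Q ^ ((γ - 2) / (γ + 1)) := by
    rw [hP₀def, Real.mul_rpow hPm.le hQr.le, hQpow]
  have hP₀γ1 : P₀ ^ (γ + 1) = Pm ^ γ * Pm * Q := by
    rw [hP₀def, Real.mul_rpow hPm.le hQr.le, hQpow, div_self hγ1ne, Real.rpow_one, hPmγ1]
  -- K and B
  set K : ℝ := Pm * (Pm - ε) * (((Pm - ε) ^ γ - Pm ^ γ) / ((Pm - ε) - Pm)) with hK_def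
  have hKI : K = γ * (Pm ^ γ * Pm * Q) := by
    rw [← hInner, hK_def, hsub]
    field_simp
  have hKP₀ : K = γ * P₀ ^ (γ + 1) := by rw [hKI, hP₀γ1]
  set B : ℝ := ((Pm - ε) ^ (γ + 1) - Pm ^ (γ + 1)) / ((Pm - ε) - Pm) with hB_def
  have hB : B = Pm ^ γ * ((1 - (1 - t) ^ (γ + 1)) / t) := by
    rw [hB_def, hSγ1, hsub, hεPm, ← hPmγ1]
    field_simp
    ring
  -- rewrite f
  have hfun : f = fun x => x ^ γ + K * x⁻¹ - B := by
    funext P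
    rw [hf P, hK_def, hB_def, div_eq_mul_inv (Pm * (Pm - ε)) P]
    ring
  have hP₀γ1' : P₀ ^ (γ + 1) = P₀ ^ γ * P₀ := Real.rpow_add_one hP₀pos.ne' γ
  have hfP₀ : f P₀ = (γ + 1) * P₀ ^ γ - B := by
    rw [hfun]
    simp only []
    have hKinv : K * P₀⁻¹ = γ * P₀ ^ γ := by
      rw [hKP₀, hP₀γ1']
      field_simp
    rw [hKinv]
    ring
  constructor
  · -- claim 1
    have hpow2 : Pm ^ (γ - 2) * ε ^ 2 = Pm ^ γ * t ^ 2 := by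
      have e : Pm ^ γ = Pm ^ (γ - 2) * Pm ^ 2 := by
        rw [← Real.rpow_natCast Pm 2, ← Real.rpow_add hPm]
        norm_num
      rw [hεPm, e]
      ring
    have hassemble : f P₀ + γ * (γ + 1) / 8 * Pm ^ (γ - 2) * ε ^ 2
        = Pm ^ γ * ((γ + 1) * Q ^ (γ / (γ + 1)) - (1 - (1 - t) ^ (γ + 1)) / t
            + γ * (γ + 1) / 8 * t ^ 2) := by
      rw [hfP₀, hP₀γ, hB]
      rw [show γ * (γ + 1) / 8 * Pm ^ (γ - 2) * ε ^ 2
          = γ * (γ + 1) / 8 * (Pm ^ (γ - 2) * ε ^ 2) from by ring, hpow2]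
      ring
    rw [hassemble, abs_mul, abs_of_pos hPmγpos]
    calc Pm ^ γ * |(γ + 1) * Q ^ (γ / (γ + 1)) - (1 - (1 - t) ^ (γ + 1)) / t
            + γ * (γ + 1) / 8 * t ^ 2|
        ≤ Pm ^ γ * (Cc * t ^ 3) := mul_le_mul_of_nonneg_left hcb hPmγpos.le
      _ = Pm ^ γ * Cc / Pm ^ 3 * ε ^ 3 := by
          rw [hεPm]
          field_simp
      _ ≤ (Pm ^ γ * Cc / Pm ^ 3 + γ * (γ + 1) * Pm ^ (γ - 2) * Cc / Pm) * ε ^ 3 := by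
          have h0 : (0:ℝ) ≤ γ * (γ + 1) * Pm ^ (γ - 2) * Cc / Pm * ε ^ 3 := by positivity
          have e : (Pm ^ γ * Cc / Pm ^ 3 + γ * (γ + 1) * Pm ^ (γ - 2) * Cc / Pm) * ε ^ 3
              = Pm ^ γ * Cc / Pm ^ 3 * ε ^ 3
                + γ * (γ + 1) * Pm ^ (γ - 2) * Cc / Pm * ε ^ 3 := by ring
          linarith
  · -- claim 2
    have hd1 : ∀ x : ℝ, 0 < x → HasDerivAt f (γ * x ^ (γ - 1) - K * (x ^ 2)⁻¹) x := by
      intro x hx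
      rw [hfun]
      have h1 : HasDerivAt (fun y : ℝ => y ^ γ) (γ * x ^ (γ - 1)) x :=
        Real.hasDerivAt_rpow_const (Or.inl hx.ne')
      have h2 : HasDerivAt (fun y : ℝ => K * y⁻¹) (K * (-(x ^ 2)⁻¹)) x :=
        (hasDerivAt_inv hx.ne').const_mul K
      exact ((h1.add h2).sub_const B).congr_deriv (by ring)
    have hev : deriv f =ᶠ[nhds P₀] fun x => γ * x ^ (γ - 1) - K * (x ^ 2)⁻¹ := by
      filter_upwards [isOpen_Ioi.mem_nhds (show P₀ ∈ Ioi (0:ℝ) from hP₀pos)] with x hx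
      exact (hd1 x hx).deriv
    have h1 := (Real.hasDerivAt_rpow_const (x := P₀) (p := γ - 1)
      (Or.inl hP₀pos.ne')).const_mul γ
    rw [show γ - 1 - 1 = γ - 2 from by ring] at h1
    have h2 := ((hasDerivAt_pow 2 P₀).inv (pow_ne_zero 2 hP₀pos.ne')).const_mul K
    have hg1 := h1.sub h2
    have hdd : deriv (deriv f) P₀ = γ * (γ + 1) * P₀ ^ (γ - 2) := by
      rw [hev.deriv_eq, HasDerivAt.deriv (f := fun x => γ * x ^ (γ - 1) - K * (x ^ 2)⁻¹) hg1]
      have e3 : P₀ ^ (γ + 1) = P₀ ^ (γ - 2) * P₀ ^ 3 := by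
        rw [← Real.rpow_natCast P₀ 3, ← Real.rpow_add hP₀pos]
        congr 1
        push_cast
        ring
      rw [hKP₀, e3]
      have hP₀ne : P₀ ≠ 0 := hP₀pos.ne'
      field_simp
      ring
    rw [hdd, hP₀γ2]
    have e : γ * (γ + 1) * (Pm ^ (γ - 2) * Q ^ ((γ - 2) / (γ + 1))) - γ * (γ + 1) * Pm ^ (γ - 2)
        = (γ * (γ + 1) * Pm ^ (γ - 2)) * (Q ^ ((γ - 2) / (γ + 1)) - 1) := by ring
    rw [e, abs_mul, abs_of_pos (by positivity : (0:ℝ) < γ * (γ + 1) * Pm ^ (γ - 2))]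
    calc γ * (γ + 1) * Pm ^ (γ - 2) * |Q ^ ((γ - 2) / (γ + 1)) - 1|
        ≤ γ * (γ + 1) * Pm ^ (γ - 2) * (Cc * t) :=
          mul_le_mul_of_nonneg_left hcc (by positivity)
      _ = γ * (γ + 1) * Pm ^ (γ - 2) * Cc / Pm * ε := by
          rw [hεPm]
          field_simp
      _ ≤ (Pm ^ γ * Cc / Pm ^ 3 + γ * (γ + 1) * Pm ^ (γ - 2) * Cc / Pm) * ε := by
          have h0 : (0:ℝ) ≤ Pm ^ γ * Cc / Pm ^ 3 * ε := by positivity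
          have e2 : (Pm ^ γ * Cc / Pm ^ 3 + γ * (γ + 1) * Pm ^ (γ - 2) * Cc / Pm) * ε
              = Pm ^ γ * Cc / Pm ^ 3 * ε + γ * (γ + 1) * Pm ^ (γ - 2) * Cc / Pm * ε := by ring
          linarith
end

section
/- Let γ ≥ 1, μ > 0, k > 0, s < 0 and P⁻ > 0. There exist ε₀ > 0 and C > 0 such that for every shock amplitude ε ∈ (0, ε₀), setting P⁺ = P⁻ + ε, there exists a twice continuously differentiable function P : ℝ → ℝ with values in [P⁻, P⁺] satisfying the profile equation P''(y) = (2/k²)f(P(y)) − (2sμ/k²)P'(y) + P'(y)²/P(y) for all y ∈ ℝ, such that P(y) → P⁻ as y → −∞, P(y) → P⁺ as y → +∞, P'(y) > 0 for all y ∈ ℝ (the profile is monotone increasing), and moreover |P'(y)| ≤ Cε² and |P''(y)| ≤ Cε|P'(y)| for all y ∈ ℝ. -/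
set_option maxHeartbeats 1000000

open Set Filter Topology MeasureTheory Real NNReal

lemma inv_package {l r : ℝ} (hlr : l < r) (F dF : ℝ → ℝ)
    (hF : ∀ u ∈ Ioo l r, HasDerivAt F (dF u) u)
    (hpos : ∀ u ∈ Ioo l r, 0 < dF u)
    (hbot : Tendsto F (𝓝[>] l) atBot)
    (htop : Tendsto F (𝓝[<] r) atTop) :
    ∃ G : ℝ → ℝ, (∀ y, G y ∈ Ioo l r) ∧ (∀ y, F (G y) = y) ∧
      (∀ u ∈ Ioo l r, G (F u) = u) ∧ StrictMono G ∧ Continuous G ∧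
      (∀ y, HasDerivAt G (dF (G y))⁻¹ y) ∧
      Tendsto G atBot (𝓝 l) ∧ Tendsto G atTop (𝓝 r) := by
  have hcont : ContinuousOn F (Ioo l r) := fun u hu => (hF u hu).continuousAt.continuousWithinAt
  have hmono : StrictMonoOn F (Ioo l r) := by
    apply strictMonoOn_of_deriv_pos (convex_Ioo l r) hcont
    intro x hx
    rw [interior_Ioo] at hx
    rw [(hF x hx).deriv]
    exact hpos x hx
  have hsurj : ∀ y : ℝ, ∃ u, u ∈ Ioo l r ∧ F u = y := by
    intro y
    have h1 : ∀ᶠ u in 𝓝[>] l, F u < y ∧ u ∈ Ioo l r := by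
      filter_upwards [hbot.eventually (eventually_lt_atBot y), self_mem_nhdsWithin,
        eventually_nhdsWithin_of_eventually_nhds (Filter.Tendsto.eventually_lt_const hlr tendsto_id)]
        with u h1 h2 h3
      exact ⟨h1, h2, h3⟩
    have h2 : ∀ᶠ u in 𝓝[<] r, y < F u ∧ u ∈ Ioo l r := by
      filter_upwards [htop.eventually (eventually_gt_atTop y), self_mem_nhdsWithin,
        eventually_nhdsWithin_of_eventually_nhds (Filter.Tendsto.eventually_const_lt hlr tendsto_id)]
        with u h1 h2 h3
      exact ⟨h1, h3, h2⟩
    obtain ⟨u₁, hu₁y, hu₁⟩ := h1.exists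
    obtain ⟨u₂, hu₂y, hu₂⟩ := h2.exists
    have h12 : u₁ ≤ u₂ := by
      by_contra h
      push_neg at h
      exact absurd ((hmono.monotoneOn hu₂ hu₁ h.le).trans_lt (hu₁y.trans hu₂y)) (lt_irrefl _)
    have hsub : Icc u₁ u₂ ⊆ Ioo l r := Icc_subset_Ioo hu₁.1 hu₂.2
    have := intermediate_value_Icc h12 (hcont.mono hsub)
    obtain ⟨x, hx, hxy⟩ := this ⟨hu₁y.le, hu₂y.le⟩
    exact ⟨x, hsub hx, hxy⟩
  classical
  set G : ℝ → ℝ := fun y => (hsurj y).choose with hGdef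
  have hGmem : ∀ y, G y ∈ Ioo l r := fun y => (hsurj y).choose_spec.1
  have hFG : ∀ y, F (G y) = y := fun y => (hsurj y).choose_spec.2
  have hGF : ∀ u ∈ Ioo l r, G (F u) = u := by
    intro u hu
    exact hmono.injOn (hGmem (F u)) hu (hFG (F u))
  have hGmono : StrictMono G := by
    intro y₁ y₂ h
    by_contra hc
    push_neg at hc
    have := hmono.monotoneOn (hGmem y₂) (hGmem y₁) hc
    rw [hFG, hFG] at this
    exact absurd (h.trans_le this) (lt_irrefl _)
  have hGcont : Continuous G := by
    rw [continuous_iff_continuousAt]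
    intro y₀
    rw [ContinuousAt, tendsto_order]
    constructor
    · intro b hb
      set u₁ := max b ((l + G y₀) / 2) with hu₁def
      have hlu₁ : l < u₁ := lt_max_of_lt_right (by linarith [(hGmem y₀).1])
      have hu₁G : u₁ < G y₀ := max_lt hb (by linarith [(hGmem y₀).1])
      have hu₁mem : u₁ ∈ Ioo l r := ⟨hlu₁, hu₁G.trans (hGmem y₀).2⟩
      have hF₁ : F u₁ < y₀ := by
        have := hmono hu₁mem (hGmem y₀) hu₁G
        rwa [hFG] at this
      filter_upwards [Ioi_mem_nhds hF₁] with y hy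
      have : G (F u₁) < G y := hGmono hy
      rw [hGF u₁ hu₁mem] at this
      exact (le_max_left _ _).trans_lt this
    · intro b hb
      set u₁ := min b ((r + G y₀) / 2) with hu₁def
      have hu₁r : u₁ < r := min_lt_of_right_lt (by linarith [(hGmem y₀).2])
      have hGu₁ : G y₀ < u₁ := lt_min hb (by linarith [(hGmem y₀).2])
      have hu₁mem : u₁ ∈ Ioo l r := ⟨(hGmem y₀).1.trans hGu₁, hu₁r⟩
      have hF₁ : y₀ < F u₁ := by
        have := hmono (hGmem y₀) hu₁mem hGu₁
        rwa [hFG] at this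
      filter_upwards [Iio_mem_nhds hF₁] with y hy
      have : G y < G (F u₁) := hGmono hy
      rw [hGF u₁ hu₁mem] at this
      exact this.trans_le (min_le_left _ _)
  have hGderiv : ∀ y, HasDerivAt G (dF (G y))⁻¹ y := by
    intro y
    exact HasDerivAt.of_local_left_inverse hGcont.continuousAt (hF _ (hGmem y))
      (hpos _ (hGmem y)).ne' (Eventually.of_forall hFG)
  refine ⟨G, hGmem, hFG, hGF, hGmono, hGcont, hGderiv, ?_, ?_⟩
  · rw [tendsto_order]
    constructor
    · intro b hb
      exact Eventually.of_forall fun y => hb.trans (hGmem y).1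
    · intro b hb
      set u₁ := min ((l + b) / 2) ((l + r) / 2) with hu₁def
      have hu₁mem : u₁ ∈ Ioo l r := ⟨lt_min (by linarith) (by linarith),
        (min_le_right _ _).trans_lt (by linarith)⟩
      have hu₁b : u₁ < b := (min_le_left _ _).trans_lt (by linarith)
      filter_upwards [eventually_lt_atBot (F u₁)] with y hy
      have : G y < G (F u₁) := hGmono hy
      rw [hGF u₁ hu₁mem] at this
      exact this.trans hu₁b
  · rw [tendsto_order]
    constructor
    · intro b hb
      set u₁ := max ((r + b) / 2) ((l + r) / 2) with hu₁def
      have hu₁mem : u₁ ∈ Ioo l r := ⟨(by linarith : l < (l+r)/2).trans_le (le_max_right _ _),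
        max_lt (by linarith) (by linarith)⟩
      have hbu₁ : b < u₁ := lt_max_of_lt_left (by linarith)
      filter_upwards [eventually_gt_atTop (F u₁)] with y hy
      have : G (F u₁) < G y := hGmono hy
      rw [hGF u₁ hu₁mem] at this
      exact hbu₁.trans this
    · intro b hb
      exact Eventually.of_forall fun y => (hGmem y).2.trans hb

lemma prim_package {l r c : ℝ} (hlr : l < r) (hc : 0 < c) (q : ℝ → ℝ)
    (hqc : ContinuousOn q (Ioo l r))
    (hqpos : ∀ u ∈ Ioo l r, 0 < q u)
    (hql : ∀ u ∈ Ioo l r, c / (u - l) ≤ q u)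
    (hqr : ∀ u ∈ Ioo l r, c / (r - u) ≤ q u) :
    ∃ F : ℝ → ℝ, (∀ u ∈ Ioo l r, HasDerivAt F (q u) u) ∧
      Tendsto F (𝓝[>] l) atBot ∧ Tendsto F (𝓝[<] r) atTop := by
  set u₁ := (l + r) / 2 with hu₁def
  have hu₁ : u₁ ∈ Ioo l r := ⟨by simp only [hu₁def]; linarith, by simp only [hu₁def]; linarith⟩
  set F : ℝ → ℝ := fun u => ∫ t in u₁..u, q t with hFdef
  have hFderiv : ∀ u ∈ Ioo l r, HasDerivAt F (q u) u := by
    intro u hu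
    apply intervalIntegral.integral_hasDerivAt_right
    · apply ContinuousOn.intervalIntegrable
      exact hqc.mono ((ordConnected_Ioo).uIcc_subset hu₁ hu)
    · exact (hqc.stronglyMeasurableAtFilter isOpen_Ioo) u hu
    · exact hqc.continuousAt (Ioo_mem_nhds hu.1 hu.2)
  have hderiv_log_l : ∀ u ∈ Ioo l r, HasDerivAt (fun v => c * Real.log (v - l)) (c / (u - l)) u := by
    intro u hu
    have h1 : HasDerivAt (fun v : ℝ => v - l) 1 u := (hasDerivAt_id u).sub_const l
    have h2 := (Real.hasDerivAt_log (by linarith [hu.1] : u - l ≠ 0)).comp u h1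
    have h3 := h2.const_mul c
    refine h3.congr_deriv ?_
    field_simp
  have hderiv_log_r : ∀ u ∈ Ioo l r, HasDerivAt (fun v => -(c * Real.log (r - v))) (c / (r - u)) u := by
    intro u hu
    have h1 : HasDerivAt (fun v : ℝ => r - v) (-1) u := by
      simpa using (hasDerivAt_id u).const_sub r
    have h2 := (Real.hasDerivAt_log (by linarith [hu.2] : r - u ≠ 0)).comp u h1
    have h3 := (h2.const_mul c).neg
    refine h3.congr_deriv ?_
    field_simp
  have hbot : Tendsto F (𝓝[>] l) atBot := by
      have key : ∀ u ∈ Ioo l u₁, F u ≤ c * Real.log (u - l) + (F u₁ - c * Real.log (u₁ - l)) := by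
        intro u hu
        have hsub : Icc u u₁ ⊆ Ioo l r := Icc_subset_Ioo hu.1 hu₁.2
        have hmono : MonotoneOn (fun v => F v - c * Real.log (v - l)) (Icc u u₁) := by
          apply monotoneOn_of_deriv_nonneg (convex_Icc u u₁)
          · intro v hv
            exact ((hFderiv v (hsub hv)).sub (hderiv_log_l v (hsub hv))).continuousAt.continuousWithinAt
          · intro v hv
            rw [interior_Icc] at hv
            exact ((hFderiv v (hsub ⟨hv.1.le, hv.2.le⟩)).sub
              (hderiv_log_l v (hsub ⟨hv.1.le, hv.2.le⟩))).differentiableAt.differentiableWithinAt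
          · intro v hv
            rw [interior_Icc] at hv
            have hvm := hsub ⟨hv.1.le, hv.2.le⟩
            rw [HasDerivAt.deriv (f := fun v => F v - c * Real.log (v - l)) ((hFderiv v hvm).sub (hderiv_log_l v hvm))]
            have := hql v hvm
            linarith
        have := hmono (left_mem_Icc.2 (le_of_lt hu.2)) (right_mem_Icc.2 (le_of_lt hu.2)) (le_of_lt hu.2)
        simp only at this
        linarith
      have hlog : Tendsto (fun u => c * Real.log (u - l) + (F u₁ - c * Real.log (u₁ - l)))
          (𝓝[>] l) atBot := by
        apply Tendsto.atBot_add _ tendsto_const_nhds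
        apply Tendsto.const_mul_atBot hc
        have h1 : Tendsto (fun u : ℝ => u - l) (𝓝[>] l) (𝓝[>] 0) := by
          apply tendsto_nhdsWithin_of_tendsto_nhds_of_eventually_within
          · have h0 : Tendsto (fun u : ℝ => u - l) (𝓝 l) (𝓝 0) := by
              have := (continuous_sub_right l).tendsto l
              simpa using this
            exact h0.mono_left nhdsWithin_le_nhds
          · filter_upwards [self_mem_nhdsWithin] with u hu
            simp only [mem_Ioi, sub_pos]
            exact hu
        exact Real.tendsto_log_nhdsGT_zero.comp h1
      apply tendsto_atBot_mono' (𝓝[>] l) _ hlog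
      filter_upwards [self_mem_nhdsWithin,
        eventually_nhdsWithin_of_eventually_nhds (Filter.Tendsto.eventually_lt_const hu₁.1 tendsto_id)]
        with u h1 h2
      exact key u ⟨h1, h2⟩
  have htop : Tendsto F (𝓝[<] r) atTop := by
      have key : ∀ u ∈ Ioo u₁ r, -(c * Real.log (r - u)) + (F u₁ + c * Real.log (r - u₁)) ≤ F u := by
        intro u hu
        have hsub : Icc u₁ u ⊆ Ioo l r := Icc_subset_Ioo hu₁.1 hu.2
        have hmono : MonotoneOn (fun v => F v - -(c * Real.log (r - v))) (Icc u₁ u) := by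
          apply monotoneOn_of_deriv_nonneg (convex_Icc u₁ u)
          · intro v hv
            exact ((hFderiv v (hsub hv)).sub (hderiv_log_r v (hsub hv))).continuousAt.continuousWithinAt
          · intro v hv
            rw [interior_Icc] at hv
            exact ((hFderiv v (hsub ⟨hv.1.le, hv.2.le⟩)).sub
              (hderiv_log_r v (hsub ⟨hv.1.le, hv.2.le⟩))).differentiableAt.differentiableWithinAt
          · intro v hv
            rw [interior_Icc] at hv
            have hvm := hsub ⟨hv.1.le, hv.2.le⟩
            rw [HasDerivAt.deriv (f := fun v => F v - -(c * Real.log (r - v))) ((hFderiv v hvm).sub (hderiv_log_r v hvm))]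
            have := hqr v hvm
            linarith
        have := hmono (left_mem_Icc.2 (le_of_lt hu.1)) (right_mem_Icc.2 (le_of_lt hu.1)) (le_of_lt hu.1)
        simp only at this
        linarith
      have hlog : Tendsto (fun u => -(c * Real.log (r - u)) + (F u₁ + c * Real.log (r - u₁)))
          (𝓝[<] r) atTop := by
        apply Tendsto.atTop_add _ tendsto_const_nhds
        have h1 : Tendsto (fun u : ℝ => r - u) (𝓝[<] r) (𝓝[>] 0) := by
          apply tendsto_nhdsWithin_of_tendsto_nhds_of_eventually_within
          · have h0 : Tendsto (fun u : ℝ => r - u) (𝓝 r) (𝓝 0) := by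
              have := (continuous_sub_left r).tendsto r
              simpa using this
            exact h0.mono_left nhdsWithin_le_nhds
          · filter_upwards [self_mem_nhdsWithin] with u hu
            simp only [mem_Ioi, sub_pos]
            exact hu
        have h2 : Tendsto (fun u => c * Real.log (r - u)) (𝓝[<] r) atBot :=
          Tendsto.const_mul_atBot hc (Real.tendsto_log_nhdsGT_zero.comp h1)
        exact tendsto_neg_atBot_atTop.comp h2
      apply tendsto_atTop_mono' (𝓝[<] r) _ hlog
      filter_upwards [self_mem_nhdsWithin,
        eventually_nhdsWithin_of_eventually_nhds (Filter.Tendsto.eventually_const_lt hu₁.2 tendsto_id)]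
        with u h1 h2
      exact key u ⟨h2, h1⟩
  exact ⟨F, hFderiv, hbot, htop⟩

section fixpt

variable {ρ : ℝ}

private lemma clamp_eq (x : ℝ) (hx : |x| ≤ ρ) : max (min ρ x) (-ρ) = x := by
  rw [abs_le] at hx
  rw [min_eq_right hx.2, max_eq_left hx.1]

private lemma clamp_abs (hρ0 : 0 < ρ) (x : ℝ) : |max (min ρ x) (-ρ)| ≤ ρ := by
  rw [abs_le]
  exact ⟨le_max_right _ _, max_le (min_le_left _ _) (by linarith)⟩

private lemma clamp_lip (x y : ℝ) : |max (min ρ x) (-ρ) - max (min ρ y) (-ρ)| ≤ |x - y| := by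
  calc |max (min ρ x) (-ρ) - max (min ρ y) (-ρ)| ≤ |min ρ x - min ρ y| :=
        abs_max_sub_max_le_abs _ _ _
    _ ≤ max |ρ - ρ| |x - y| := abs_min_sub_min_le_max _ _ _ _
    _ ≤ |x - y| := by simp

private lemma G_bound (hρ0 : 0 < ρ) (hρ : ρ ≤ 1/5) (h x : ℝ) (hh : |h| ≤ ρ/2) (hx : |x| ≤ ρ) :
    |(-x^2/(1 + x) + h * (1 + x))| ≤ (17/20) * ρ := by
  have hx' := abs_le.1 hx
  have h1x : (4:ℝ)/5 ≤ 1 + x := by linarith [hx'.1]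
  have h1x' : 1 + x ≤ 6/5 := by linarith [hx'.2]
  have e1 : |(-x^2/(1 + x))| ≤ ρ^2 / (4/5) := by
    rw [abs_div, abs_neg, abs_of_nonneg (sq_nonneg x), abs_of_pos (by linarith : (0:ℝ) < 1 + x)]
    apply div_le_div₀ (by positivity) _ (by norm_num) h1x
    nlinarith [abs_nonneg x, hx'.1, hx'.2]
  have e2 : |h * (1 + x)| ≤ (ρ/2) * (6/5) := by
    rw [abs_mul, abs_of_pos (by linarith : (0:ℝ) < 1 + x)]
    exact mul_le_mul hh h1x' (by linarith) (by linarith)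
  calc |(-x^2/(1 + x) + h * (1 + x))| ≤ |(-x^2/(1 + x))| + |h * (1 + x)| := abs_add_le _ _
    _ ≤ ρ^2/(4/5) + (ρ/2) * (6/5) := add_le_add e1 e2
    _ ≤ (17/20) * ρ := by nlinarith

private lemma G_lip (hρ0 : 0 < ρ) (hρ : ρ ≤ 1/5) (h x y : ℝ) (hh : |h| ≤ ρ/2)
    (hx : |x| ≤ ρ) (hy : |y| ≤ ρ) :
    |(-x^2/(1 + x) + h * (1 + x)) - (-y^2/(1 + y) + h * (1 + y))| ≤ (4/5) * |x - y| := by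
  have hx' := abs_le.1 hx
  have hy' := abs_le.1 hy
  have h1x0 : (0:ℝ) < 1 + x := by linarith [hx'.1]
  have h1y0 : (0:ℝ) < 1 + y := by linarith [hy'.1]
  have e1 : -x^2/(1 + x) - (-y^2/(1 + y)) = -((x - y) * (x + y + x*y))/((1 + x)*(1 + y)) := by
    field_simp
    ring
  have e1b : |(-x^2/(1 + x) - (-y^2/(1 + y)))| ≤ (2*ρ + ρ^2) * |x - y| / (16/25) := by
    rw [e1, abs_div, abs_neg, abs_mul, abs_of_pos (by positivity : (0:ℝ) < (1+x)*(1+y))]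
    apply div_le_div₀ (by positivity) _ (by norm_num) (by nlinarith [hx'.1, hy'.1])
    rw [mul_comm |x - y| _]
    apply mul_le_mul_of_nonneg_right _ (abs_nonneg _)
    calc |x + y + x*y| ≤ |x| + |y| + |x| * |y| := by
          refine (abs_add_le _ _).trans (add_le_add (abs_add_le _ _) ?_)
          rw [abs_mul]
      _ ≤ 2*ρ + ρ^2 := by nlinarith [abs_nonneg x, abs_nonneg y]
  have e2 : |h * (1 + x) - h * (1 + y)| ≤ (ρ/2) * |x - y| := by
    rw [show h * (1 + x) - h * (1 + y) = h * (x - y) by ring, abs_mul]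
    exact mul_le_mul_of_nonneg_right hh (abs_nonneg _)
  calc |(-x^2/(1 + x) + h * (1 + x)) - (-y^2/(1 + y) + h * (1 + y))|
      ≤ |(-x^2/(1 + x) - (-y^2/(1 + y)))| + |h * (1 + x) - h * (1 + y)| := by
        rw [show (-x^2/(1 + x) + h * (1 + x)) - (-y^2/(1 + y) + h * (1 + y))
          = (-x^2/(1 + x) - (-y^2/(1 + y))) + (h * (1 + x) - h * (1 + y)) by ring]
        exact abs_add_le _ _
    _ ≤ (2*ρ + ρ^2) * |x - y| / (16/25) + (ρ/2) * |x - y| := add_le_add e1b e2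
    _ ≤ (4/5) * |x - y| := by
        nlinarith [abs_nonneg (x - y), sq_nonneg ρ,
          mul_nonneg (abs_nonneg (x - y)) (show (0:ℝ) ≤ 1/5 - ρ by linarith),
          mul_nonneg (mul_nonneg (abs_nonneg (x - y)) (show (0:ℝ) ≤ 1/5 - ρ by linarith)) hρ0.le]

lemma fixedpoint_package (hρ0 : 0 < ρ) (hρ : ρ ≤ 1/5) (hh : ℝ → ℝ)
    (hhc : Continuous hh) (hhb : ∀ σ, |hh σ| ≤ ρ / 2) :
    ∃ w : ℝ → ℝ, Continuous w ∧ (∀ σ, |w σ| ≤ ρ) ∧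
      (∀ σ, HasDerivAt w (w σ + (-(w σ)^2/(1 + w σ) + hh σ * (1 + w σ))) σ) := by
  classical
  set cl : ℝ → ℝ := fun x => max (min ρ x) (-ρ) with hcl
  have hclc : Continuous cl := (continuous_const.min continuous_id).max continuous_const
  set Gf : ℝ → ℝ → ℝ := fun σ x => -x^2/(1 + x) + hh σ * (1 + x) with hGf
  set Iw : (ℝ → ℝ) → ℝ → ℝ := fun w t => Real.exp (-t) * Gf t (cl (w t)) with hIw
  have hclmem : ∀ x : ℝ, -ρ ≤ cl x ∧ cl x ≤ ρ := fun x => abs_le.1 (clamp_abs hρ0 x)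
  have hconts : ∀ w : ℝ → ℝ, Continuous w → Continuous (Iw w) := by
    intro w hw
    have hclw : Continuous fun t => cl (w t) := hclc.comp hw
    have hne : ∀ t, (1 : ℝ) + cl (w t) ≠ 0 := fun t =>
      ne_of_gt (by linarith [(hclmem (w t)).1])
    exact (Real.continuous_exp.comp continuous_neg).mul
      ((((hclw.pow 2).neg).div (continuous_const.add hclw) hne).add
        (hhc.mul (continuous_const.add hclw)))
  have hIbound : ∀ (w : ℝ → ℝ) (t : ℝ), |Iw w t| ≤ Real.exp (-t) * ((17/20)*ρ) := by
    intro w t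
    rw [hIw]
    simp only
    rw [abs_mul, abs_of_pos (Real.exp_pos _)]
    exact mul_le_mul_of_nonneg_left
      (G_bound hρ0 hρ _ _ (hhb t) (clamp_abs hρ0 _)) (Real.exp_pos _).le
  have hexp_int : ∀ σ : ℝ, IntegrableOn (fun t => Real.exp (-t)) (Ioi σ) := by
    intro σ
    have := exp_neg_integrableOn_Ioi σ zero_lt_one
    simpa using this
  have hIint : ∀ w : ℝ → ℝ, Continuous w → ∀ σ, IntegrableOn (Iw w) (Ioi σ) := by
    intro w hw σ
    apply Integrable.mono' ((hexp_int σ).mul_const ((17/20)*ρ))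
      ((hconts w hw).aestronglyMeasurable.restrict)
    exact Eventually.of_forall fun t => by rw [Real.norm_eq_abs]; exact hIbound w t
  have hexp_val : ∀ σ : ℝ, ∫ t in Ioi σ, Real.exp (-t) = Real.exp (-σ) := by
    intro σ
    have hd : ∀ x ∈ Ici σ, HasDerivAt (fun t => -Real.exp (-t)) (Real.exp (-x)) x := by
      intro x _
      have h1 : HasDerivAt (fun t : ℝ => -t) (-1) x := (hasDerivAt_id x).neg
      have h2 := ((Real.hasDerivAt_exp (-x)).comp x h1).neg
      refine h2.congr_deriv ?_
      ring
    have ht : Tendsto (fun t => -Real.exp (-t)) atTop (𝓝 0) := by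
      simpa using (Real.tendsto_exp_neg_atTop_nhds_zero).neg
    have := integral_Ioi_of_hasDerivAt_of_tendsto' hd (hexp_int σ) ht
    rw [this]
    simp
  set Pw : (ℝ → ℝ) → ℝ → ℝ := fun w σ => ∫ t in (0:ℝ)..σ, Iw w t with hPw
  have hPwderiv : ∀ w, Continuous w → ∀ σ : ℝ, HasDerivAt (Pw w) (Iw w σ) σ := by
    intro w hw σ
    exact intervalIntegral.integral_hasDerivAt_right ((hconts w hw).intervalIntegrable 0 σ)
      ((hconts w hw).stronglyMeasurableAtFilter _ _) (hconts w hw).continuousAt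
  have hsplit : ∀ w : ℝ → ℝ, Continuous w → ∀ σ : ℝ,
      (∫ t in Ioi (0:ℝ), Iw w t) - Pw w σ = ∫ t in Ioi σ, Iw w t := by
    intro w hw σ
    rcases le_or_gt 0 σ with h | h
    · have hu : Ioc (0:ℝ) σ ∪ Ioi σ = Ioi (0:ℝ) := Ioc_union_Ioi_eq_Ioi h
      have hi1 : IntegrableOn (Iw w) (Ioc (0:ℝ) σ) := (hIint w hw 0).mono_set Ioc_subset_Ioi_self
      have key := setIntegral_union (Ioc_disjoint_Ioi_same) measurableSet_Ioi hi1 (hIint w hw σ)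
      rw [hu] at key
      rw [hPw]
      simp only
      rw [intervalIntegral.integral_of_le h, key]
      ring
    · have hu : Ioc σ (0:ℝ) ∪ Ioi (0:ℝ) = Ioi σ := Ioc_union_Ioi_eq_Ioi h.le
      have hi1 : IntegrableOn (Iw w) (Ioc σ (0:ℝ)) := (hIint w hw σ).mono_set Ioc_subset_Ioi_self
      have key := setIntegral_union (Ioc_disjoint_Ioi_same) measurableSet_Ioi hi1 (hIint w hw 0)
      rw [hu] at key
      rw [hPw]
      simp only
      rw [intervalIntegral.integral_symm, intervalIntegral.integral_of_le h.le, key]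
      ring
  set Tf : (ℝ → ℝ) → ℝ → ℝ :=
    fun w σ => -(Real.exp σ * ((∫ t in Ioi (0:ℝ), Iw w t) - Pw w σ)) with hTf
  have hTf_eq : ∀ w : ℝ → ℝ, Continuous w → ∀ σ : ℝ,
      Tf w σ = -(Real.exp σ * ∫ t in Ioi σ, Iw w t) := by
    intro w hw σ
    rw [hTf]
    simp only
    rw [hsplit w hw σ]
  have hTbound : ∀ w, Continuous w → ∀ σ : ℝ, |Tf w σ| ≤ (17/20)*ρ := by
    intro w hw σ
    rw [hTf_eq w hw σ, abs_neg, abs_mul, abs_of_pos (Real.exp_pos σ)]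
    have h1 : |∫ t in Ioi σ, Iw w t| ≤ Real.exp (-σ) * ((17/20)*ρ) := by
      have h2 : |∫ t in Ioi σ, Iw w t| ≤ ∫ t in Ioi σ, Real.exp (-t) * ((17/20)*ρ) := by
        rw [← Real.norm_eq_abs]
        apply norm_integral_le_of_norm_le ((hexp_int σ).mul_const _)
        exact Eventually.of_forall fun t => by rw [Real.norm_eq_abs]; exact hIbound w t
      rwa [integral_mul_const, hexp_val σ] at h2
    calc Real.exp σ * |∫ t in Ioi σ, Iw w t| ≤ Real.exp σ * (Real.exp (-σ) * ((17/20)*ρ)) :=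
          mul_le_mul_of_nonneg_left h1 (Real.exp_pos σ).le
      _ = (17/20)*ρ := by rw [← mul_assoc, ← Real.exp_add]; simp
  have hTcont : ∀ w, Continuous w → Continuous (Tf w) := by
    intro w hw
    have hPc : Continuous (Pw w) :=
      continuous_iff_continuousAt.2 fun σ => (hPwderiv w hw σ).continuousAt
    exact (Real.continuous_exp.mul (continuous_const.sub hPc)).neg
  have hρ20 : (0:ℝ) ≤ (17/20)*ρ := by positivity
  set T : BoundedContinuousFunction ℝ ℝ → BoundedContinuousFunction ℝ ℝ := fun w =>
    BoundedContinuousFunction.ofNormedAddCommGroup (Tf ⇑w) (hTcont _ w.continuous) ((17/20)*ρ)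
      (fun σ => by rw [Real.norm_eq_abs]; exact hTbound _ w.continuous σ) with hT
  have hTcoe : ∀ (w : BoundedContinuousFunction ℝ ℝ) (σ : ℝ), T w σ = Tf ⇑w σ := fun _ _ => rfl
  have hTlip : LipschitzWith (4/5 : ℝ≥0) T := by
    apply LipschitzWith.of_dist_le_mul
    intro w₁ w₂
    rw [BoundedContinuousFunction.dist_le (by positivity)]
    intro σ
    rw [Real.dist_eq, hTcoe w₁ σ, hTcoe w₂ σ, hTf_eq _ w₁.continuous σ, hTf_eq _ w₂.continuous σ]
    have hdiff : -(Real.exp σ * ∫ t in Ioi σ, Iw (⇑w₁) t) - -(Real.exp σ * ∫ t in Ioi σ, Iw (⇑w₂) t)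
        = Real.exp σ * ∫ t in Ioi σ, (Iw (⇑w₂) t - Iw (⇑w₁) t) := by
      rw [integral_sub (hIint _ w₂.continuous σ) (hIint _ w₁.continuous σ)]
      ring
    rw [hdiff, abs_mul, abs_of_pos (Real.exp_pos σ)]
    have h2 : |∫ t in Ioi σ, (Iw (⇑w₂) t - Iw (⇑w₁) t)|
        ≤ ∫ t in Ioi σ, Real.exp (-t) * ((4/5) * dist w₁ w₂) := by
      rw [← Real.norm_eq_abs]
      apply norm_integral_le_of_norm_le ((hexp_int σ).mul_const _)
      apply Eventually.of_forall
      intro t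
      rw [Real.norm_eq_abs, hIw]
      simp only
      rw [show Real.exp (-t) * Gf t (cl (w₂ t)) - Real.exp (-t) * Gf t (cl (w₁ t))
        = Real.exp (-t) * (Gf t (cl (w₂ t)) - Gf t (cl (w₁ t))) by ring]
      rw [abs_mul, abs_of_pos (Real.exp_pos _)]
      apply mul_le_mul_of_nonneg_left _ (Real.exp_pos _).le
      calc |Gf t (cl (w₂ t)) - Gf t (cl (w₁ t))| ≤ (4/5) * |cl (w₂ t) - cl (w₁ t)| := by
            rw [hGf]
            exact G_lip hρ0 hρ _ _ _ (hhb t) (clamp_abs hρ0 _) (clamp_abs hρ0 _)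
        _ ≤ (4/5) * |w₂ t - w₁ t| := by
            apply mul_le_mul_of_nonneg_left (clamp_lip _ _) (by norm_num)
        _ ≤ (4/5) * dist w₁ w₂ := by
            apply mul_le_mul_of_nonneg_left _ (by norm_num)
            rw [← Real.dist_eq, dist_comm]
            exact BoundedContinuousFunction.dist_coe_le_dist t
    rw [integral_mul_const, hexp_val σ] at h2
    calc Real.exp σ * |∫ t in Ioi σ, (Iw (⇑w₂) t - Iw (⇑w₁) t)|
        ≤ Real.exp σ * (Real.exp (-σ) * ((4/5) * dist w₁ w₂)) :=
          mul_le_mul_of_nonneg_left h2 (Real.exp_pos σ).le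
      _ = (4/5 : ℝ≥0) * dist w₁ w₂ := by
          rw [← mul_assoc, ← Real.exp_add]
          norm_num
  have hcontract : ContractingWith (4/5 : ℝ≥0) T := by
    refine ⟨?_, hTlip⟩
    rw [← NNReal.coe_lt_coe]
    norm_num
  set w₀ : BoundedContinuousFunction ℝ ℝ := ContractingWith.fixedPoint T hcontract with hw₀
  have hfix : T w₀ = w₀ := hcontract.fixedPoint_isFixedPt
  set w : ℝ → ℝ := ⇑w₀ with hwdef
  have hweq : ∀ σ, w σ = Tf w σ := by
    intro σ
    rw [hwdef]
    conv_lhs => rw [← hfix]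
    exact hTcoe w₀ σ
  have hwb : ∀ σ, |w σ| ≤ ρ := fun σ => by
    rw [hweq σ]
    exact (hTbound w w₀.continuous σ).trans (by linarith)
  have hclw : ∀ σ, cl (w σ) = w σ := fun σ => clamp_eq (w σ) (hwb σ)
  have hwd : ∀ σ, HasDerivAt w (w σ + Gf σ (w σ)) σ := by
    intro σ
    have h1 : HasDerivAt (fun τ => (∫ t in Ioi (0:ℝ), Iw w t) - Pw w τ) (-(Iw w σ)) σ :=
      (hPwderiv w w₀.continuous σ).const_sub _
    have h2 := ((Real.hasDerivAt_exp σ).mul h1).neg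
    have hD : HasDerivAt (Tf w) (Tf w σ + Real.exp σ * Iw w σ) σ := by
      rw [hTf]
      simp only
      refine h2.congr_deriv ?_
      ring
    have h3 : HasDerivAt w (Tf w σ + Real.exp σ * Iw w σ) σ :=
      hD.congr_of_eventuallyEq (Eventually.of_forall fun t => (hweq t))
    convert h3 using 1
    rw [← hweq σ, hIw]
    simp only
    rw [hclw σ, ← mul_assoc, ← Real.exp_add]
    simp
  refine ⟨w, w₀.continuous, hwb, fun σ => ?_⟩
  have := hwd σ
  rw [hGf] at this
  exact this

end fixpt

section phi

lemma phi_package {a l r lam : ℝ} (ha : 0 < a) (hlr : l < r) (hlam : 0 < lam)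
    (g dg : ℝ → ℝ) (hg : ∀ u, HasDerivAt g (dg u) u) (hdgc : Continuous dg)
    (hgl : g l = 0) (hgr : g r = 0) (hgneg : ∀ u ∈ Ioo l r, g u < 0)
    (hdgb : ∀ u ∈ Icc l r, |dg u| ≤ lam)
    (hsmall : 2 * lam / a^2 ≤ 1/5) :
    ∃ φ : ℝ → ℝ, (∀ u ∈ Ioo l r, HasDerivAt φ (a + g u / φ u) u) ∧
      ContinuousOn φ (Ioo l r) ∧
      (∀ u ∈ Ioo l r, 0 < φ u) ∧
      (∀ u ∈ Ioo l r, φ u ≤ 2 * (-g u) / a) ∧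
      (∀ u ∈ Ioo l r, (-g u) / (2*a) ≤ φ u) ∧
      (∀ u ∈ Ioo l r, |a * φ u + g u| ≤ (2*lam/a^2) * (-g u)) ∧
      (∀ u ∈ Icc l r, -g u ≤ lam * (u - l)) ∧
      (∀ u ∈ Icc l r, -g u ≤ lam * (r - u)) := by
  have hgc : Continuous g := continuous_iff_continuousAt.2 fun u => (hg u).continuousAt
  have hmvt : ∀ x ∈ Icc l r, ∀ y ∈ Icc l r, ‖g y - g x‖ ≤ lam * ‖y - x‖ := by
    intro x hx y hy
    exact Convex.norm_image_sub_le_of_norm_hasDerivWithin_le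
      (fun u hu => (hg u).hasDerivWithinAt) (fun u hu => (hdgb u hu)) (convex_Icc l r) hx hy
  have hgub_l : ∀ u ∈ Icc l r, -g u ≤ lam * (u - l) := by
    intro u hu
    have h1 := hmvt l (left_mem_Icc.2 hlr.le) u hu
    rw [hgl, sub_zero, Real.norm_eq_abs, Real.norm_eq_abs] at h1
    rw [abs_of_nonneg (by linarith [hu.1] : (0:ℝ) ≤ u - l)] at h1
    calc -g u ≤ |g u| := neg_le_abs _
      _ ≤ lam * (u - l) := h1
  have hgub_r : ∀ u ∈ Icc l r, -g u ≤ lam * (r - u) := by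
    intro u hu
    have h1 := hmvt r (right_mem_Icc.2 hlr.le) u hu
    rw [hgr, sub_zero, Real.norm_eq_abs, Real.norm_eq_abs] at h1
    rw [abs_of_nonpos (by linarith [hu.2] : u - r ≤ 0), neg_sub] at h1
    calc -g u ≤ |g u| := neg_le_abs _
      _ ≤ lam * (r - u) := h1
  set c₀ : ℝ → ℝ := fun u => a^2 / (-g u) with hc₀
  have hc₀c : ContinuousOn c₀ (Ioo l r) := by
    apply ContinuousOn.div continuousOn_const (hgc.neg.continuousOn)
    intro u hu
    exact (neg_pos.2 (hgneg u hu)).ne'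
  have hc₀pos : ∀ u ∈ Ioo l r, 0 < c₀ u := by
    intro u hu
    have h2 : (0:ℝ) < -g u := by linarith [hgneg u hu]
    rw [hc₀]
    positivity
  have hc₀low_l : ∀ u ∈ Ioo l r, (a^2/lam) / (u - l) ≤ c₀ u := by
    intro u hu
    rw [hc₀, div_div]
    simp only
    exact div_le_div_of_nonneg_left (by positivity) (by linarith [hgneg u hu])
      (hgub_l u ⟨hu.1.le, hu.2.le⟩)
  have hc₀low_r : ∀ u ∈ Ioo l r, (a^2/lam) / (r - u) ≤ c₀ u := by
    intro u hu
    rw [hc₀, div_div]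
    simp only
    exact div_le_div_of_nonneg_left (by positivity) (by linarith [hgneg u hu])
      (hgub_r u ⟨hu.1.le, hu.2.le⟩)
  obtain ⟨Ψ, hΨd, hΨbot, hΨtop⟩ := prim_package hlr (by positivity : (0:ℝ) < a^2/lam)
    c₀ hc₀c hc₀pos hc₀low_l hc₀low_r
  obtain ⟨Θ, hΘmem, hΨΘ, hΘΨ, hΘmono, hΘcont, hΘd, hΘbot, hΘtop⟩ :=
    inv_package hlr Ψ c₀ hΨd hc₀pos hΨbot hΨtop
  set ρ : ℝ := 2 * lam / a^2 with hρdef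
  have hρ0 : 0 < ρ := by positivity
  set hhf : ℝ → ℝ := fun σ => dg (Θ σ) / a^2 with hhfdef
  have hhfc : Continuous hhf := (hdgc.comp hΘcont).div_const _
  have hhfb : ∀ σ, |hhf σ| ≤ ρ / 2 := by
    intro σ
    rw [hhfdef]
    simp only
    rw [abs_div, abs_of_pos (by positivity : (0:ℝ) < a^2), hρdef,
      show 2 * lam / a ^ 2 / 2 = lam / a^2 by ring]
    have := hdgb (Θ σ) ⟨(hΘmem σ).1.le, (hΘmem σ).2.le⟩
    gcongr
  obtain ⟨w, hwc, hwb, hwd⟩ := fixedpoint_package hρ0 hsmall hhf hhfc hhfb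
  set φ : ℝ → ℝ := fun u => (-g u) / a * (1 + w (Ψ u)) with hφdef
  have hζb : ∀ u, |w (Ψ u)| ≤ ρ := fun u => hwb (Ψ u)
  have hζ45 : ∀ u, (4:ℝ)/5 ≤ 1 + w (Ψ u) := by
    intro u
    have := abs_le.1 (hζb u)
    linarith [hsmall, this.1]
  have hφpos : ∀ u ∈ Ioo l r, 0 < φ u := by
    intro u hu
    rw [hφdef]
    have h1 : (0:ℝ) < -g u := by linarith [hgneg u hu]
    have h2 := hζ45 u
    positivity
  have hφcont : ContinuousOn φ (Ioo l r) := by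
    apply ContinuousOn.mul ((hgc.neg.continuousOn).div_const a)
    apply ContinuousOn.add continuousOn_const
    apply (hwc.comp_continuousOn ?_)
    intro u hu
    exact (hΨd u hu).continuousAt.continuousWithinAt
  have hφderiv : ∀ u ∈ Ioo l r, HasDerivAt φ (a + g u / φ u) u := by
    intro u hu
    have hGu : g u < 0 := hgneg u hu
    have hω : HasDerivAt (fun v => -g v / a) (-dg u / a) u := ((hg u).neg).div_const a
    have hζd : HasDerivAt (fun v => w (Ψ v))
        ((w (Ψ u) + (-(w (Ψ u))^2/(1 + w (Ψ u)) + hhf (Ψ u) * (1 + w (Ψ u)))) * c₀ u) u :=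
      (hwd (Ψ u)).comp u (hΨd u hu)
    have hprod := hω.mul ((hasDerivAt_const u (1:ℝ)).add hζd)
    have heq : -g u / a * ((0:ℝ) + (w (Ψ u) + (-(w (Ψ u))^2/(1 + w (Ψ u))
          + hhf (Ψ u) * (1 + w (Ψ u)))) * c₀ u) + (-dg u / a) * (1 + w (Ψ u))
        = a + g u / φ u := by
      rw [hhfdef]
      simp only
      rw [hΘΨ u hu, hφdef, hc₀]
      simp only
      have h45 := hζ45 u
      have hz : 1 + w (Ψ u) ≠ 0 := by linarith
      have hG : g u ≠ 0 := hGu.ne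
      have hA : a ≠ 0 := ha.ne'
      field_simp
      ring
    rw [hφdef]
    refine hprod.congr_deriv ?_
    · rw [← heq]
      simp only [Pi.add_apply]
      ring
  refine ⟨φ, hφderiv, hφcont, hφpos, ?_, ?_, ?_, hgub_l, hgub_r⟩
  · intro u hu
    have h1 : (0:ℝ) < -g u := by linarith [hgneg u hu]
    have h2 := abs_le.1 (hζb u)
    have h3 : 1 + w (Ψ u) ≤ 2 := by linarith [h2.2, hsmall]
    rw [hφdef]
    simp only
    calc -g u / a * (1 + w (Ψ u)) ≤ -g u / a * 2 := by
          apply mul_le_mul_of_nonneg_left h3 (by positivity)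
      _ = 2 * -g u / a := by ring
  · intro u hu
    have h1 : (0:ℝ) < -g u := by linarith [hgneg u hu]
    have h3 : (1:ℝ)/2 ≤ 1 + w (Ψ u) := by linarith [hζ45 u]
    rw [hφdef]
    simp only
    calc -g u / (2*a) = (-g u / a) * (1/2) := by ring
      _ ≤ (-g u / a) * (1 + w (Ψ u)) := by
          apply mul_le_mul_of_nonneg_left h3 (by positivity)
  · intro u hu
    have h1 : (0:ℝ) < -g u := by linarith [hgneg u hu]
    have heq : a * φ u + g u = g u * (- w (Ψ u)) := by
      rw [hφdef]
      field_simp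
      ring
    rw [heq, abs_mul, abs_neg, abs_of_neg (hgneg u hu)]
    rw [mul_comm ((2:ℝ)*lam/a^2) (-g u)]
    exact mul_le_mul_of_nonneg_left (hζb u) (by linarith)

end phi

open Set Filter Topology MeasureTheory Real NNReal

noncomputable def shockC4 (γ k Pm : ℝ) : ℝ :=
  (2/k^2)*((γ-1)^2*Real.exp ((γ-1)*Real.log (Pm+1))
    + 4*(Pm*(Pm+1)*(γ*(Pm+1)^(γ-1)))*Real.exp ((-2)*Real.log Pm)
    + ((γ+1)*(Pm+1)^γ)*Real.exp ((-1)*Real.log Pm))/Pm + 1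

lemma shockC4_pos {γ k Pm : ℝ} (hγ : 1 ≤ γ) (hk : 0 < k) (hPm : 0 < Pm) :
    0 < shockC4 γ k Pm := by
  unfold shockC4
  have h1 : (0:ℝ) ≤ (γ-1)^2*Real.exp ((γ-1)*Real.log (Pm+1)) := by positivity
  have h2 : (0:ℝ) ≤ 4*(Pm*(Pm+1)*(γ*(Pm+1)^(γ-1)))*Real.exp ((-2)*Real.log Pm) := by
    have : (0:ℝ) < (Pm+1)^(γ-1) := Real.rpow_pos_of_pos (by linarith) _
    positivity
  have h3 : (0:ℝ) ≤ ((γ+1)*(Pm+1)^γ)*Real.exp ((-1)*Real.log Pm) := by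
    have : (0:ℝ) < (Pm+1)^γ := Real.rpow_pos_of_pos (by linarith) _
    positivity
  have h4 : (0:ℝ) < 2/k^2 := by positivity
  have : (0:ℝ) ≤ (2/k^2)*((γ-1)^2*Real.exp ((γ-1)*Real.log (Pm+1))
    + 4*(Pm*(Pm+1)*(γ*(Pm+1)^(γ-1)))*Real.exp ((-2)*Real.log Pm)
    + ((γ+1)*(Pm+1)^γ)*Real.exp ((-1)*Real.log Pm))/Pm := by positivity
  linarith

lemma g_package (γ k Pm ε : ℝ) (hγ : 1 ≤ γ) (hk : 0 < k) (hPm : 0 < Pm)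
    (hε : 0 < ε) (hε1 : ε ≤ 1) :
    ∃ g dg : ℝ → ℝ,
      (∀ u, HasDerivAt g (dg u) u) ∧ Continuous dg ∧
      g (Real.log Pm) = 0 ∧ g (Real.log (Pm+ε)) = 0 ∧
      (∀ u ∈ Ioo (Real.log Pm) (Real.log (Pm+ε)), g u < 0) ∧
      (∀ u ∈ Icc (Real.log Pm) (Real.log (Pm+ε)), |dg u| ≤ shockC4 γ k Pm * ε) ∧
      (∀ u, Real.exp u * g u = (2/k^2) * ((Real.exp u)^γ
          + (Pm*(Pm+ε)/Real.exp u) * (((Pm+ε)^γ - Pm^γ)/ε)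
          - ((Pm+ε)^(γ+1) - Pm^(γ+1))/ε)) := by
  have hp : (0:ℝ) < Pm + ε := by linarith
  have hPmp : Pm < Pm + ε := by linarith
  have hεne : ε ≠ 0 := hε.ne'
  set c₁ : ℝ := Pm*(Pm+ε)*(((Pm+ε)^γ - Pm^γ)/ε) with hc₁def
  set c₂ : ℝ := ((Pm+ε)^(γ+1) - Pm^(γ+1))/ε with hc₂def
  have hγ0 : (0:ℝ) < γ := by linarith
  have hc₁pos : 0 < c₁ := by
    rw [hc₁def]
    have := Real.rpow_lt_rpow hPm.le hPmp hγ0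
    have h2 : 0 < ((Pm+ε)^γ - Pm^γ)/ε := by
      apply div_pos (by linarith) hε
    positivity
  have hc₂pos : 0 < c₂ := by
    rw [hc₂def]
    have := Real.rpow_lt_rpow hPm.le hPmp (by linarith : (0:ℝ) < γ + 1)
    apply div_pos (by linarith) hε
  -- the function g and its derivatives
  set g : ℝ → ℝ := fun u => (2/k^2) * (Real.exp ((γ-1)*u) + c₁ * Real.exp ((-2)*u)
    - c₂ * Real.exp ((-1)*u)) with hgdef
  set dg : ℝ → ℝ := fun u => (2/k^2) * ((γ-1)*Real.exp ((γ-1)*u)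
    + c₁ * ((-2)*Real.exp ((-2)*u)) - c₂ * ((-1)*Real.exp ((-1)*u))) with hdgdef
  set ddg : ℝ → ℝ := fun u => (2/k^2) * ((γ-1)^2*Real.exp ((γ-1)*u)
    + c₁ * (4*Real.exp ((-2)*u)) - c₂ * Real.exp ((-1)*u)) with hddgdef
  have hExpD : ∀ (c u : ℝ), HasDerivAt (fun v => Real.exp (c*v)) (c * Real.exp (c*u)) u := by
    intro c u
    have h := (Real.hasDerivAt_exp (c*u)).comp u ((hasDerivAt_id u).const_mul c)
    exact h.congr_deriv (by ring)
  have hgd : ∀ u, HasDerivAt g (dg u) u := by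
    intro u
    have h := (((hExpD (γ-1) u).add ((hExpD (-2) u).const_mul c₁)).sub
      ((hExpD (-1) u).const_mul c₂)).const_mul (2/k^2)
    rw [hgdef, hdgdef]
    exact h
  have hdgd : ∀ u, HasDerivAt dg (ddg u) u := by
    intro u
    have h := ((((hExpD (γ-1) u).const_mul (γ-1)).add
      (((hExpD (-2) u).const_mul (-2)).const_mul c₁)).sub
      (((hExpD (-1) u).const_mul (-1)).const_mul c₂)).const_mul (2/k^2)
    rw [hdgdef, hddgdef]
    refine h.congr_deriv ?_
    ring
  have hdgc : Continuous dg := continuous_iff_continuousAt.2 fun u => (hdgd u).continuousAt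
  -- alternative representation via hP
  have hgalt : ∀ u : ℝ, g u = (2/k^2) * Real.exp ((-2)*u)
      * ((Real.exp u)^(γ+1) + c₁ - c₂ * Real.exp u) := by
    intro u
    have hrp : (Real.exp u)^(γ+1) = Real.exp (u*(γ+1)) := by
      rw [Real.rpow_def_of_pos (Real.exp_pos u), Real.log_exp]
    rw [hgdef, hrp]
    simp only
    have e1 : Real.exp ((-2)*u) * Real.exp (u*(γ+1)) = Real.exp ((γ-1)*u) := by
      rw [← Real.exp_add]
      congr 1
      ring
    have e2 : Real.exp ((-2)*u) * Real.exp u = Real.exp ((-1)*u) := by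
      rw [← Real.exp_add]
      congr 1
      ring
    calc (2/k^2) * (Real.exp ((γ-1)*u) + c₁ * Real.exp ((-2)*u) - c₂ * Real.exp ((-1)*u))
        = (2/k^2) * ((Real.exp ((-2)*u) * Real.exp (u*(γ+1)))
            + c₁ * Real.exp ((-2)*u) - c₂ * (Real.exp ((-2)*u) * Real.exp u)) := by
          rw [e1, e2]
      _ = (2/k^2) * Real.exp ((-2)*u) * (Real.exp (u*(γ+1)) + c₁ - c₂ * Real.exp u) := by ring
  -- endpoint values of hP
  have hrpadd : ∀ x : ℝ, 0 < x → x^(γ+1) = x^γ * x := by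
    intro x hx
    rw [Real.rpow_add hx, Real.rpow_one]
  have hPm0 : Pm^(γ+1) + c₁ - c₂ * Pm = 0 := by
    rw [hc₁def, hc₂def, hrpadd Pm hPm, hrpadd (Pm+ε) hp]
    field_simp
    ring
  have hPp0 : (Pm+ε)^(γ+1) + c₁ - c₂ * (Pm+ε) = 0 := by
    rw [hc₁def, hc₂def, hrpadd Pm hPm, hrpadd (Pm+ε) hp]
    field_simp
    ring
  -- strict convexity of hP and negativity
  have hder1 : ∀ x : ℝ, 0 < x → HasDerivAt (fun y : ℝ => y^(γ+1) + c₁ - c₂*y)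
      ((γ+1) * x^γ - c₂) x := by
    intro x hx
    have h1 := Real.hasDerivAt_rpow_const (p := γ+1) (Or.inl hx.ne')
    have h2 := (h1.add_const c₁).sub ((hasDerivAt_id x).const_mul c₂)
    refine h2.congr_deriv ?_
    rw [add_sub_cancel_right]
    ring
  have hPcont : ContinuousOn (fun y : ℝ => y^(γ+1) + c₁ - c₂*y) (Icc Pm (Pm+ε)) := by
    intro x hx
    exact ((hder1 x (lt_of_lt_of_le hPm hx.1)).continuousAt).continuousWithinAt
  have hconv : StrictConvexOn ℝ (Icc Pm (Pm+ε)) (fun y : ℝ => y^(γ+1) + c₁ - c₂*y) := by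
    apply StrictMonoOn.strictConvexOn_of_deriv (convex_Icc _ _) hPcont
    rw [interior_Icc]
    have heq : EqOn (deriv (fun y : ℝ => y^(γ+1) + c₁ - c₂*y))
        (fun x => (γ+1) * x^γ - c₂) (Ioo Pm (Pm+ε)) := by
      intro x hx
      exact (hder1 x (hPm.trans hx.1)).deriv
    apply StrictMonoOn.congr _ heq.symm
    intro x hx y hy hxy
    simp only
    have : x^γ < y^γ := Real.rpow_lt_rpow (hPm.trans hx.1).le hxy hγ0
    have hγ1 : (0:ℝ) < γ + 1 := by linarith
    nlinarith
  have hPneg : ∀ x ∈ Ioo Pm (Pm+ε), x^(γ+1) + c₁ - c₂*x < 0 := by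
    intro x hx
    have hA : 0 < (Pm + ε - x)/ε := by
      apply div_pos (by linarith [hx.2]) hε
    have hB : 0 < (x - Pm)/ε := by
      apply div_pos (by linarith [hx.1]) hε
    have hAB : (Pm + ε - x)/ε + (x - Pm)/ε = 1 := by field_simp; ring
    have hne : Pm ≠ Pm + ε := by linarith
    have hlt := hconv.2 (left_mem_Icc.2 (by linarith)) (right_mem_Icc.2 (by linarith))
      hne hA hB hAB
    rw [smul_eq_mul, smul_eq_mul, smul_eq_mul, smul_eq_mul] at hlt
    have hxeq : (Pm + ε - x)/ε * Pm + (x - Pm)/ε * (Pm+ε) = x := by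
      field_simp
      ring
    simp only [hxeq, hPm0, hPp0] at hlt
    simpa using hlt
  have hl : Real.exp (Real.log Pm) = Pm := Real.exp_log hPm
  have hr : Real.exp (Real.log (Pm+ε)) = Pm + ε := Real.exp_log hp
  have hgl : g (Real.log Pm) = 0 := by
    rw [hgalt, hl, hPm0, mul_zero]
  have hgr : g (Real.log (Pm+ε)) = 0 := by
    rw [hgalt, hr, hPp0, mul_zero]
  have hgneg : ∀ u ∈ Ioo (Real.log Pm) (Real.log (Pm+ε)), g u < 0 := by
    intro u hu
    rw [hgalt]
    apply mul_neg_of_pos_of_neg (by positivity)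
    apply hPneg
    constructor
    · calc Pm = Real.exp (Real.log Pm) := hl.symm
        _ < Real.exp u := Real.exp_lt_exp.2 hu.1
    · calc Real.exp u < Real.exp (Real.log (Pm+ε)) := Real.exp_lt_exp.2 hu.2
      _ = Pm + ε := hr
  -- bounds on c₁ and c₂
  have hcont_rpow : ∀ q : ℝ, 0 ≤ q → ContinuousOn (fun x : ℝ => x^q) (Icc Pm (Pm+ε)) := by
    intro q hq x hx
    exact (Real.continuousAt_rpow_const x q (Or.inl (lt_of_lt_of_le hPm hx.1).ne')).continuousWithinAt
  have hc₁bound : c₁ ≤ Pm*(Pm+1)*(γ*(Pm+1)^(γ-1)) := by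
    obtain ⟨ξ, hξ, hξeq⟩ := exists_hasDerivAt_eq_slope (fun x : ℝ => x^γ)
      (fun x => γ * x^(γ-1)) hPmp (hcont_rpow γ hγ0.le)
      (fun x hx => Real.hasDerivAt_rpow_const (Or.inl (hPm.trans hx.1).ne'))
    have hslope : ((Pm+ε)^γ - Pm^γ)/ε = γ * ξ^(γ-1) := by
      rw [hξeq, add_sub_cancel_left]
    have hξb : ξ^(γ-1) ≤ (Pm+1)^(γ-1) :=
      Real.rpow_le_rpow (hPm.trans hξ.1).le (by linarith [hξ.2]) (by linarith)
    rw [hc₁def, hslope]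
    have h1 : Pm*(Pm+ε) ≤ Pm*(Pm+1) := by nlinarith
    have h2 : γ * ξ^(γ-1) ≤ γ*(Pm+1)^(γ-1) := by
      apply mul_le_mul_of_nonneg_left hξb hγ0.le
    apply mul_le_mul h1 h2 _ (by positivity)
    have : (0:ℝ) < ξ^(γ-1) := Real.rpow_pos_of_pos (hPm.trans hξ.1) _
    positivity
  have hc₂bound : c₂ ≤ (γ+1)*(Pm+1)^γ := by
    obtain ⟨ξ, hξ, hξeq⟩ := exists_hasDerivAt_eq_slope (fun x : ℝ => x^(γ+1))
      (fun x => (γ+1) * x^γ) hPmp (hcont_rpow (γ+1) (by linarith))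
      (fun x hx => by
        have := Real.hasDerivAt_rpow_const (p := γ+1) (Or.inl (hPm.trans hx.1).ne')
        convert this using 1
        rw [add_sub_cancel_right])
    have hslope : ((Pm+ε)^(γ+1) - Pm^(γ+1))/ε = (γ+1) * ξ^γ := by
      rw [hξeq, add_sub_cancel_left]
    have hξb : ξ^γ ≤ (Pm+1)^γ :=
      Real.rpow_le_rpow (hPm.trans hξ.1).le (by linarith [hξ.2]) hγ0.le
    rw [hc₂def, hslope]
    apply mul_le_mul_of_nonneg_left hξb (by linarith)
  -- bound on ddg on the interval
  have hrlog : Real.log (Pm+ε) ≤ Real.log (Pm+1) := Real.log_le_log hp (by linarith)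
  set MddC : ℝ := (2/k^2)*((γ-1)^2*Real.exp ((γ-1)*Real.log (Pm+1))
    + 4*(Pm*(Pm+1)*(γ*(Pm+1)^(γ-1)))*Real.exp ((-2)*Real.log Pm)
    + ((γ+1)*(Pm+1)^γ)*Real.exp ((-1)*Real.log Pm)) with hMddC
  have hddgb : ∀ u ∈ Icc (Real.log Pm) (Real.log (Pm+ε)), ‖ddg u‖ ≤ MddC := by
    intro u hu
    rw [Real.norm_eq_abs, hddgdef]
    have hb1 : Real.exp ((γ-1)*u) ≤ Real.exp ((γ-1)*Real.log (Pm+1)) := by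
      apply Real.exp_le_exp.2
      apply mul_le_mul_of_nonneg_left (hu.2.trans hrlog) (by linarith)
    have hb2 : Real.exp ((-2)*u) ≤ Real.exp ((-2)*Real.log Pm) := by
      apply Real.exp_le_exp.2
      linarith [hu.1]
    have hb3 : Real.exp ((-1)*u) ≤ Real.exp ((-1)*Real.log Pm) := by
      apply Real.exp_le_exp.2
      linarith [hu.1]
    have habs : |(γ-1)^2*Real.exp ((γ-1)*u) + c₁ * (4*Real.exp ((-2)*u)) - c₂ * Real.exp ((-1)*u)|
        ≤ (γ-1)^2*Real.exp ((γ-1)*Real.log (Pm+1))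
          + 4*(Pm*(Pm+1)*(γ*(Pm+1)^(γ-1)))*Real.exp ((-2)*Real.log Pm)
          + ((γ+1)*(Pm+1)^γ)*Real.exp ((-1)*Real.log Pm) := by
      have t1 : |(γ-1)^2*Real.exp ((γ-1)*u)| ≤ (γ-1)^2*Real.exp ((γ-1)*Real.log (Pm+1)) := by
        rw [abs_of_nonneg (by positivity)]
        apply mul_le_mul_of_nonneg_left hb1 (by positivity)
      have t2 : |c₁ * (4*Real.exp ((-2)*u))| ≤ 4*(Pm*(Pm+1)*(γ*(Pm+1)^(γ-1)))*Real.exp ((-2)*Real.log Pm) := by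
        rw [abs_of_nonneg (by positivity)]
        calc c₁ * (4*Real.exp ((-2)*u)) ≤ (Pm*(Pm+1)*(γ*(Pm+1)^(γ-1))) * (4*Real.exp ((-2)*Real.log Pm)) := by
              apply mul_le_mul hc₁bound (by nlinarith [Real.exp_pos ((-2)*u)]) (by positivity) ?_
              · have : (0:ℝ) < (Pm+1)^(γ-1) := Real.rpow_pos_of_pos (by linarith) _
                positivity
          _ = 4*(Pm*(Pm+1)*(γ*(Pm+1)^(γ-1)))*Real.exp ((-2)*Real.log Pm) := by ring
      have t3 : |c₂ * Real.exp ((-1)*u)| ≤ ((γ+1)*(Pm+1)^γ)*Real.exp ((-1)*Real.log Pm) := by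
        rw [abs_of_nonneg (by positivity)]
        apply mul_le_mul hc₂bound hb3 (by positivity) ?_
        · have : (0:ℝ) < (Pm+1)^γ := Real.rpow_pos_of_pos (by linarith) _
          positivity
      calc |(γ-1)^2*Real.exp ((γ-1)*u) + c₁ * (4*Real.exp ((-2)*u)) - c₂ * Real.exp ((-1)*u)|
          ≤ |(γ-1)^2*Real.exp ((γ-1)*u) + c₁ * (4*Real.exp ((-2)*u))| + |c₂ * Real.exp ((-1)*u)| :=
            abs_sub _ _
        _ ≤ |(γ-1)^2*Real.exp ((γ-1)*u)| + |c₁ * (4*Real.exp ((-2)*u))| + |c₂ * Real.exp ((-1)*u)| := by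
            linarith [abs_add_le ((γ-1)^2*Real.exp ((γ-1)*u)) (c₁ * (4*Real.exp ((-2)*u)))]
        _ ≤ _ := by linarith
    rw [hMddC, abs_mul, abs_of_pos (by positivity : (0:ℝ) < 2/k^2)]
    apply mul_le_mul_of_nonneg_left habs (by positivity)
  -- Rolle + MVT bound for dg
  have hloglt : Real.log Pm < Real.log (Pm+ε) := Real.log_lt_log hPm hPmp
  have hgcont : ContinuousOn g (Icc (Real.log Pm) (Real.log (Pm+ε))) :=
    fun u _ => (hgd u).continuousAt.continuousWithinAt
  obtain ⟨ζ, hζ, hζ0⟩ := exists_hasDerivAt_eq_zero hloglt hgcont (by rw [hgl, hgr])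
    (fun x _ => hgd x)
  have hdgmvt : ∀ x ∈ Icc (Real.log Pm) (Real.log (Pm+ε)),
      ∀ y ∈ Icc (Real.log Pm) (Real.log (Pm+ε)), ‖dg y - dg x‖ ≤ MddC * ‖y - x‖ :=
    fun x hx y hy => Convex.norm_image_sub_le_of_norm_hasDerivWithin_le
      (fun u _ => (hdgd u).hasDerivWithinAt) (fun u hu => hddgb u hu)
      (convex_Icc _ _) hx hy
  have hrl_le : Real.log (Pm+ε) - Real.log Pm ≤ ε/Pm := by
    rw [← Real.log_div hp.ne' hPm.ne']
    have h2 := Real.log_le_sub_one_of_pos (show (0:ℝ) < (Pm+ε)/Pm by positivity)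
    calc Real.log ((Pm+ε)/Pm) ≤ (Pm+ε)/Pm - 1 := h2
      _ = ε/Pm := by field_simp; ring
  have hdgb : ∀ u ∈ Icc (Real.log Pm) (Real.log (Pm+ε)), |dg u| ≤ shockC4 γ k Pm * ε := by
    intro u hu
    have h1 := hdgmvt ζ ⟨hζ.1.le, hζ.2.le⟩ u hu
    rw [hζ0, sub_zero, Real.norm_eq_abs, Real.norm_eq_abs] at h1
    have h2 : |u - ζ| ≤ ε/Pm := by
      rw [abs_le]
      constructor
      · have := hu.1
        have := hζ.2.le
        have h3 : Real.log Pm - Real.log (Pm+ε) ≥ -(ε/Pm) := by linarith [hrl_le]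
        linarith
      · linarith [hu.2, hζ.1.le, hrl_le]
    have hMddC0 : 0 ≤ MddC := by
      have := hddgb (Real.log Pm) (left_mem_Icc.2 hloglt.le)
      exact le_trans (norm_nonneg _) this
    calc |dg u| ≤ MddC * |u - ζ| := h1
      _ ≤ MddC * (ε/Pm) := mul_le_mul_of_nonneg_left h2 hMddC0
      _ = (MddC/Pm) * ε := by ring
      _ ≤ shockC4 γ k Pm * ε := by
          apply mul_le_mul_of_nonneg_right _ hε.le
          rw [shockC4, ← hMddC]
          linarith
  -- final representation
  refine ⟨g, dg, hgd, hdgc, hgl, hgr, hgneg, hdgb, ?_⟩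
  intro u
  have f1 : Real.exp u * Real.exp ((γ-1)*u) = Real.exp (u*γ) := by
    rw [← Real.exp_add]
    congr 1
    ring
  have f2 : Real.exp u * Real.exp ((-2)*u) = (Real.exp u)⁻¹ := by
    rw [← Real.exp_add, ← Real.exp_neg]
    congr 1
    ring
  have f3 : Real.exp u * Real.exp ((-1)*u) = 1 := by
    rw [← Real.exp_add, show u + (-1)*u = 0 by ring, Real.exp_zero]
  have hrpγ : (Real.exp u)^γ = Real.exp (u*γ) := by
    rw [Real.rpow_def_of_pos (Real.exp_pos u), Real.log_exp]
  rw [hgdef, hrpγ]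
  simp only
  calc Real.exp u * ((2/k^2) * (Real.exp ((γ-1)*u) + c₁ * Real.exp ((-2)*u)
          - c₂ * Real.exp ((-1)*u)))
      = (2/k^2) * ((Real.exp u * Real.exp ((γ-1)*u)) + c₁ * (Real.exp u * Real.exp ((-2)*u))
          - c₂ * (Real.exp u * Real.exp ((-1)*u))) := by ring
    _ = (2/k^2) * (Real.exp (u*γ) + c₁ * (Real.exp u)⁻¹ - c₂) := by
        rw [f1, f2, f3]
        ring
    _ = (2/k^2) * (Real.exp (u*γ) + (Pm*(Pm+ε)/Real.exp u) * (((Pm+ε)^γ - Pm^γ)/ε)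
          - ((Pm+ε)^(γ+1) - Pm^(γ+1))/ε) := by
        rw [hc₁def, hc₂def]
        ring

/-- existence of a monotone increasing small-amplitude dispersive shock
profile for `s < 0` (with `P⁺ = P⁻ + ε`), with `|P'| ≤ Cε²` and `|P''| ≤ Cε|P'|`. -/
theorem statement_4 (γ μ k s Pm : ℝ) (hγ : 1 ≤ γ) (hμ : 0 < μ) (hk : 0 < k)
    (hs : s < 0) (hPm : 0 < Pm) :
    ∃ ε₀ > (0:ℝ), ∃ C > (0:ℝ), ∀ ε : ℝ, 0 < ε → ε < ε₀ →
      ∃ P : ℝ → ℝ, ContDiff ℝ 2 P ∧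
        (∀ y : ℝ, P y ∈ Set.Icc Pm (Pm + ε)) ∧
        (∀ y : ℝ, deriv (deriv P) y =
          (2 / k ^ 2) *
            ((P y) ^ γ + (Pm * (Pm + ε) / P y) * (((Pm + ε) ^ γ - Pm ^ γ) / ((Pm + ε) - Pm))
              - ((Pm + ε) ^ (γ + 1) - Pm ^ (γ + 1)) / ((Pm + ε) - Pm))
          - (2 * s * μ / k ^ 2) * deriv P y + (deriv P y) ^ 2 / P y) ∧
        Filter.Tendsto P Filter.atBot (nhds Pm) ∧
        Filter.Tendsto P Filter.atTop (nhds (Pm + ε)) ∧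
        (∀ y : ℝ, 0 < deriv P y) ∧
        (∀ y : ℝ, |deriv P y| ≤ C * ε ^ 2) ∧
        (∀ y : ℝ, |deriv (deriv P) y| ≤ C * ε * |deriv P y|) := by
  classical
  set a : ℝ := -(2*s*μ/k^2) with hadef
  have ha : 0 < a := by
    rw [hadef, show -(2*s*μ/k^2) = (2*(-s)*μ)/k^2 by ring]
    have hns : 0 < -s := neg_pos.2 hs
    positivity
  set C₄ : ℝ := shockC4 γ k Pm with hC₄def
  have hC₄ : 0 < C₄ := shockC4_pos hγ hk hPm
  set ε₀ : ℝ := min 1 (a^2/(10*C₄)) with hε₀def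
  have hε₀ : 0 < ε₀ := lt_min one_pos (by positivity)
  set C₅ : ℝ := 2*C₄*(Pm+1)/(a*Pm) with hC₅def
  set C₆ : ℝ := 4*C₄/a + 2*C₄/(a*Pm) with hC₆def
  have hC₅pos : 0 < C₅ := by rw [hC₅def]; positivity
  have hC₆pos : 0 < C₆ := by rw [hC₆def]; positivity
  set C : ℝ := C₅ + C₆ + 1 with hCdef
  have hC : 0 < C := by rw [hCdef]; linarith
  refine ⟨ε₀, hε₀, C, hC, ?_⟩
  intro ε hε hεε₀
  have hε1 : ε ≤ 1 := le_trans hεε₀.le (min_le_left _ _)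
  have hεa : ε ≤ a^2/(10*C₄) := le_trans hεε₀.le (min_le_right _ _)
  obtain ⟨g, dg, hgd, hdgc, hgl, hgr, hgneg, hdgb, hgrep⟩ := g_package γ k Pm ε hγ hk hPm hε hε1
  set l : ℝ := Real.log Pm with hldef
  set r : ℝ := Real.log (Pm+ε) with hrdef
  have hp0 : (0:ℝ) < Pm + ε := by linarith
  have hlr : l < r := Real.log_lt_log hPm (by linarith)
  set lam : ℝ := C₄ * ε with hlamdef
  have hlam : 0 < lam := by rw [hlamdef]; positivity
  have hsmall : 2*lam/a^2 ≤ 1/5 := by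
    rw [hlamdef, div_le_div_iff₀ (by positivity) (by norm_num)]
    have h1 : ε * (10*C₄) ≤ a^2 := by
      rw [← le_div_iff₀ (by positivity)]
      exact hεa
    nlinarith
  obtain ⟨φ, hφd, hφcont, hφpos, hφub, hφlb, hφband, hgub_l, hgub_r⟩ :=
    phi_package ha hlr hlam g dg hgd hdgc hgl hgr hgneg hdgb hsmall
  have hgc : Continuous g := continuous_iff_continuousAt.2 fun u => (hgd u).continuousAt
  have hrl_le : r - l ≤ ε/Pm := by
    rw [hrdef, hldef, ← Real.log_div hp0.ne' hPm.ne']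
    have h2 := Real.log_le_sub_one_of_pos (show (0:ℝ) < (Pm+ε)/Pm by positivity)
    calc Real.log ((Pm+ε)/Pm) ≤ (Pm+ε)/Pm - 1 := h2
      _ = ε/Pm := by field_simp; ring
  -- primitive of 1/φ and its inverse
  have hqc : ContinuousOn (fun u => (φ u)⁻¹) (Ioo l r) :=
    hφcont.inv₀ (fun u hu => (hφpos u hu).ne')
  have hqpos : ∀ u ∈ Ioo l r, 0 < (φ u)⁻¹ := fun u hu => inv_pos.2 (hφpos u hu)
  have hq_l : ∀ u ∈ Ioo l r, (a/(2*lam))/(u - l) ≤ (φ u)⁻¹ := by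
    intro u hu
    have h2 : 0 < u - l := sub_pos.2 hu.1
    have h1 : φ u ≤ 2*lam*(u-l)/a := by
      calc φ u ≤ 2*(-g u)/a := hφub u hu
        _ ≤ 2*(lam*(u-l))/a := by
            have := hgub_l u ⟨hu.1.le, hu.2.le⟩
            apply div_le_div_of_nonneg_right (by linarith) ha.le
        _ = 2*lam*(u-l)/a := by ring
    have h3 := one_div_le_one_div_of_le (hφpos u hu) h1
    rw [one_div_div] at h3
    rw [one_div] at h3
    calc (a/(2*lam))/(u-l) = a/(2*lam*(u-l)) := by rw [div_div]
      _ ≤ (φ u)⁻¹ := by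
          convert h3 using 2
  have hq_r : ∀ u ∈ Ioo l r, (a/(2*lam))/(r - u) ≤ (φ u)⁻¹ := by
    intro u hu
    have h2 : 0 < r - u := sub_pos.2 hu.2
    have h1 : φ u ≤ 2*lam*(r-u)/a := by
      calc φ u ≤ 2*(-g u)/a := hφub u hu
        _ ≤ 2*(lam*(r-u))/a := by
            have := hgub_r u ⟨hu.1.le, hu.2.le⟩
            apply div_le_div_of_nonneg_right (by linarith) ha.le
        _ = 2*lam*(r-u)/a := by ring
    have h3 := one_div_le_one_div_of_le (hφpos u hu) h1
    rw [one_div_div] at h3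
    rw [one_div] at h3
    calc (a/(2*lam))/(r-u) = a/(2*lam*(r-u)) := by rw [div_div]
      _ ≤ (φ u)⁻¹ := by
          convert h3 using 2
  obtain ⟨Y, hYd, hYbot, hYtop⟩ := prim_package hlr (by positivity : (0:ℝ) < a/(2*lam))
    (fun u => (φ u)⁻¹) hqc hqpos hq_l hq_r
  obtain ⟨U, hUmem, hYU, hUY, hUmono, hUcont, hUd', hUbot, hUtop⟩ :=
    inv_package hlr Y (fun u => (φ u)⁻¹) hYd hqpos hYbot hYtop
  have hUd : ∀ y, HasDerivAt U (φ (U y)) y := by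
    intro y
    have := hUd' y
    rwa [inv_inv] at this
  set P : ℝ → ℝ := fun y => Real.exp (U y) with hPdef
  have hPd : ∀ y, HasDerivAt P (Real.exp (U y) * φ (U y)) y :=
    fun y => (Real.hasDerivAt_exp (U y)).comp y (hUd y)
  have hderivP : deriv P = fun y => Real.exp (U y) * φ (U y) := funext fun y => (hPd y).deriv
  have hφUd : ∀ y, HasDerivAt (fun z => φ (U z)) ((a + g (U y) / φ (U y)) * φ (U y)) y :=
    fun y => (hφd (U y) (hUmem y)).comp y (hUd y)
  have hQd : ∀ y, HasDerivAt (fun z => Real.exp (U z) * φ (U z))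
      (Real.exp (U y) * (φ (U y)^2 + (a * φ (U y) + g (U y)))) y := by
    intro y
    have h1 := (hPd y).mul (hφUd y)
    refine h1.congr_deriv ?_
    have hφne : φ (U y) ≠ 0 := (hφpos _ (hUmem y)).ne'
    field_simp
    ring
  have hderiv2 : deriv (deriv P) = fun y => Real.exp (U y) * (φ (U y)^2 + (a * φ (U y) + g (U y))) := by
    rw [hderivP]
    exact funext fun y => (hQd y).deriv
  -- range facts
  have hPmem : ∀ y, Pm < Real.exp (U y) ∧ Real.exp (U y) < Pm + ε := by
    intro y
    constructor
    · calc Pm = Real.exp l := by rw [hldef, Real.exp_log hPm]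
        _ < Real.exp (U y) := Real.exp_lt_exp.2 (hUmem y).1
    · calc Real.exp (U y) < Real.exp r := Real.exp_lt_exp.2 (hUmem y).2
        _ = Pm + ε := by rw [hrdef, Real.exp_log hp0]
  have hPub : ∀ y, Real.exp (U y) ≤ Pm + 1 := fun y => by linarith [(hPmem y).2]
  -- bound on φ(U y)
  have hφsup : ∀ y, φ (U y) ≤ 2*lam*(ε/Pm)/a := by
    intro y
    have hu := hUmem y
    calc φ (U y) ≤ 2*(-g (U y))/a := hφub _ hu
      _ ≤ 2*(lam*(U y - l))/a := by
          have := hgub_l (U y) ⟨hu.1.le, hu.2.le⟩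
          apply div_le_div_of_nonneg_right (by linarith) ha.le
      _ ≤ 2*lam*(ε/Pm)/a := by
          have h1 : U y - l ≤ r - l := by linarith [hu.2]
          have h2 : lam*(U y - l) ≤ lam*(ε/Pm) :=
            mul_le_mul_of_nonneg_left (h1.trans hrl_le) hlam.le
          apply div_le_div_of_nonneg_right (by linarith) ha.le
  have hderivP_pos : ∀ y, 0 < deriv P y := by
    intro y
    rw [hderivP]
    exact mul_pos (Real.exp_pos _) (hφpos _ (hUmem y))
  have hderivP_ub : ∀ y, deriv P y ≤ C₅ * ε^2 := by
    intro y
    rw [hderivP]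
    simp only
    calc Real.exp (U y) * φ (U y) ≤ (Pm+1) * (2*lam*(ε/Pm)/a) := by
          apply mul_le_mul (hPub y) (hφsup y) (hφpos _ (hUmem y)).le (by linarith)
      _ = C₅ * ε^2 := by
          rw [hC₅def, hlamdef]
          field_simp
  -- assemble
  refine ⟨P, ?_, ?_, ?_, ?_, ?_, hderivP_pos, ?_, ?_⟩
  · -- ContDiff ℝ 2
    rw [show (2 : WithTop ℕ∞) = 1 + 1 from rfl, contDiff_succ_iff_deriv]
    refine ⟨fun y => (hPd y).differentiableAt, by simp, ?_⟩
    rw [hderivP, contDiff_one_iff_deriv]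
    constructor
    · exact fun y => (hQd y).differentiableAt
    · rw [funext fun y => (hQd y).deriv]
      have hφUc : Continuous fun y => φ (U y) := by
        apply hφcont.comp_continuous hUcont hUmem
      have hgUc : Continuous fun y => g (U y) := hgc.comp hUcont
      exact (Real.continuous_exp.comp hUcont).mul
        (((hφUc.pow 2)).add ((continuous_const.mul hφUc).add hgUc))
  · -- range
    intro y
    exact ⟨(hPmem y).1.le, (hPmem y).2.le⟩
  · -- the ODE
    intro y
    rw [hderiv2, hderivP]
    simp only
    have hεeq : (Pm + ε) - Pm = ε := by ring
    rw [hεeq]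
    have hexpne : Real.exp (U y) ≠ 0 := (Real.exp_pos (U y)).ne'
    have hrep := hgrep (U y)
    have hsa : -(2 * s * μ / k ^ 2) = a := by rw [hadef]
    calc Real.exp (U y) * (φ (U y)^2 + (a * φ (U y) + g (U y)))
        = (Real.exp (U y) * g (U y)) + a * (Real.exp (U y) * φ (U y))
          + (Real.exp (U y) * φ (U y))^2 / Real.exp (U y) := by
          field_simp
          ring
      _ = (2 / k ^ 2) * ((Real.exp (U y)) ^ γ
            + (Pm * (Pm + ε) / Real.exp (U y)) * (((Pm + ε) ^ γ - Pm ^ γ) / ε)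
            - ((Pm + ε) ^ (γ + 1) - Pm ^ (γ + 1)) / ε)
          - (2 * s * μ / k ^ 2) * (Real.exp (U y) * φ (U y))
          + (Real.exp (U y) * φ (U y)) ^ 2 / Real.exp (U y) := by
          rw [hrep, ← hsa]
          ring
  · -- limit at -∞
    have h1 : Filter.Tendsto (fun y => Real.exp (U y)) atBot (𝓝 (Real.exp l)) :=
      (Real.continuous_exp.tendsto l).comp hUbot
    rw [hldef, Real.exp_log hPm] at h1
    exact h1
  · -- limit at +∞
    have h1 : Filter.Tendsto (fun y => Real.exp (U y)) atTop (𝓝 (Real.exp r)) :=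
      (Real.continuous_exp.tendsto r).comp hUtop
    rw [hrdef, Real.exp_log hp0] at h1
    exact h1
  · -- |P'| ≤ C ε²
    intro y
    rw [abs_of_pos (hderivP_pos y)]
    have := hderivP_ub y
    have hC₅C : C₅ ≤ C := by rw [hCdef]; linarith
    calc deriv P y ≤ C₅ * ε^2 := this
      _ ≤ C * ε^2 := by
          apply mul_le_mul_of_nonneg_right hC₅C (by positivity)
  · -- |P''| ≤ C ε |P'|
    intro y
    rw [hderiv2, hderivP]
    simp only
    rw [abs_of_pos (mul_pos (Real.exp_pos _) (hφpos _ (hUmem y)))]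
    have hu := hUmem y
    have hφp := hφpos _ hu
    have hband := hφband _ hu
    have hgn : 0 < -g (U y) := by linarith [hgneg _ hu]
    have hg2aφ : -g (U y) ≤ 2*a*φ (U y) := by
      have := hφlb _ hu
      rw [div_le_iff₀ (by positivity)] at this
      linarith
    have habs1 : |a * φ (U y) + g (U y)| ≤ (4*lam/a) * φ (U y) := by
      calc |a * φ (U y) + g (U y)| ≤ (2*lam/a^2) * (-g (U y)) := hband
        _ ≤ (2*lam/a^2) * (2*a*φ (U y)) := by
            apply mul_le_mul_of_nonneg_left hg2aφ (by positivity)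
        _ = (4*lam/a) * φ (U y) := by field_simp; ring
    have hφsq : φ (U y)^2 ≤ (2*lam*(ε/Pm)/a) * φ (U y) := by
      rw [sq]
      apply mul_le_mul_of_nonneg_right (hφsup y) hφp.le
    calc |Real.exp (U y) * (φ (U y)^2 + (a * φ (U y) + g (U y)))|
        = Real.exp (U y) * |φ (U y)^2 + (a * φ (U y) + g (U y))| := by
          rw [abs_mul, abs_of_pos (Real.exp_pos _)]
      _ ≤ Real.exp (U y) * (φ (U y)^2 + |a * φ (U y) + g (U y)|) := by
          apply mul_le_mul_of_nonneg_left _ (Real.exp_pos _).le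
          calc |φ (U y)^2 + (a * φ (U y) + g (U y))|
              ≤ |φ (U y)^2| + |a * φ (U y) + g (U y)| := abs_add_le _ _
            _ = φ (U y)^2 + |a * φ (U y) + g (U y)| := by rw [abs_of_nonneg (sq_nonneg _)]
      _ ≤ Real.exp (U y) * ((2*lam*(ε/Pm)/a) * φ (U y) + (4*lam/a) * φ (U y)) := by
          apply mul_le_mul_of_nonneg_left _ (Real.exp_pos _).le
          linarith
      _ ≤ C * ε * (Real.exp (U y) * φ (U y)) := by
          rw [hlamdef]
          have hkey : (2*(C₄*ε)*(ε/Pm)/a) + (4*(C₄*ε)/a) ≤ C * ε := by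
            have e1 : (2*(C₄*ε)*(ε/Pm)/a) = (2*C₄/(a*Pm)) * (ε*ε) := by field_simp
            have e2 : (4*(C₄*ε)/a) = (4*C₄/a) * ε := by ring
            rw [e1, e2]
            have h3 : ε*ε ≤ ε := by nlinarith
            have h4 : (2*C₄/(a*Pm)) * (ε*ε) ≤ (2*C₄/(a*Pm)) * ε :=
              mul_le_mul_of_nonneg_left h3 (by positivity)
            have h5 : C₆ * ε ≤ C * ε := by
              apply mul_le_mul_of_nonneg_right _ hε.le
              rw [hCdef]
              linarith
            rw [hC₆def] at h5
            calc (2*C₄/(a*Pm)) * (ε*ε) + (4*C₄/a) * ε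
                ≤ (2*C₄/(a*Pm)) * ε + (4*C₄/a) * ε := by linarith
              _ = (4*C₄/a + 2*C₄/(a*Pm)) * ε := by ring
              _ ≤ C * ε := h5
          calc Real.exp (U y) * ((2*(C₄*ε)*(ε/Pm)/a) * φ (U y) + (4*(C₄*ε)/a) * φ (U y))
              = ((2*(C₄*ε)*(ε/Pm)/a) + (4*(C₄*ε)/a)) * (Real.exp (U y) * φ (U y)) := by ring
            _ ≤ C * ε * (Real.exp (U y) * φ (U y)) := by
                apply mul_le_mul_of_nonneg_right hkey
                  (mul_nonneg (Real.exp_pos _).le hφp.le)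
end

section
/- Let γ ≥ 1 and P⁻ > 0. For ε ∈ (0, P⁻) define A(ε) = √(P⁻(P⁻ − ε))·√(((P⁻)^γ − (P⁻ − ε)^γ)/ε) and let c_s(P⁻) = √(γ(P⁻)^{γ−1}) be the sound speed at P⁻. Then there exist ε₀ > 0 and C > 0 such that for all ε ∈ (0, ε₀): |A(ε) − P⁻c_s(P⁻) + ((γ+1)/4)c_s(P⁻)ε| ≤ Cε². -/
open Real intervalIntegral

lemma step_bound {h h' : ℝ → ℝ} {δ C : ℝ} {k : ℕ}
    (hder : ∀ t ∈ Set.Icc (0:ℝ) δ, HasDerivAt h (h' t) t)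
    (hcont : ContinuousOn h' (Set.Icc 0 δ))
    (hb : ∀ t ∈ Set.Icc (0:ℝ) δ, |h' t| ≤ C * t ^ k)
    (h0 : h 0 = 0) :
    ∀ t ∈ Set.Icc (0:ℝ) δ, |h t| ≤ C * t ^ (k+1) / (k+1) := by
  intro t ht
  obtain ⟨ht0, htδ⟩ := ht
  have hsub : Set.uIcc (0:ℝ) t ⊆ Set.Icc 0 δ := by
    rw [Set.uIcc_of_le ht0]
    exact Set.Icc_subset_Icc le_rfl htδ
  have hint : IntervalIntegrable h' MeasureTheory.volume 0 t :=
    (hcont.mono hsub).intervalIntegrable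
  have hftc : ∫ s in (0:ℝ)..t, h' s = h t - h 0 :=
    integral_eq_sub_of_hasDerivAt (fun x hx => hder x (hsub hx)) hint
  have habs : |∫ s in (0:ℝ)..t, h' s| ≤ ∫ s in (0:ℝ)..t, C * s ^ k := by
    calc |∫ s in (0:ℝ)..t, h' s| ≤ ∫ s in (0:ℝ)..t, |h' s| :=
          abs_integral_le_integral_abs ht0
      _ ≤ ∫ s in (0:ℝ)..t, C * s ^ k := by
          apply integral_mono_on ht0 (hint.abs)
          · exact (continuous_const.mul (continuous_pow k)).intervalIntegrable 0 t
          · intro s hs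
            exact hb s ⟨hs.1, hs.2.trans htδ⟩
  have hval : ∫ s in (0:ℝ)..t, C * s ^ k = C * t ^ (k+1) / (k+1) := by
    rw [intervalIntegral.integral_const_mul, integral_pow]
    ring
  rw [hftc, h0, sub_zero] at habs
  rw [hval] at habs
  exact habs

lemma rpow_bound {a b x p : ℝ} (ha : 0 < a) (hax : a ≤ x) (hxb : x ≤ b) :
    x ^ p ≤ a ^ p + b ^ p := by
  rcases le_or_gt 0 p with hp | hp
  · have h1 : x ^ p ≤ b ^ p := Real.rpow_le_rpow (ha.le.trans hax) hxb hp
    have h2 : (0:ℝ) < a ^ p := Real.rpow_pos_of_pos ha p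
    linarith
  · have h1 : x ^ p ≤ a ^ p := Real.rpow_le_rpow_of_nonpos ha hax hp.le
    have h2 : (0:ℝ) < b ^ p := Real.rpow_pos_of_pos (ha.trans_le (hax.trans hxb)) p
    linarith

lemma hd_pow (Pm p : ℝ) {ε : ℝ} (h : ε < Pm) :
    HasDerivAt (fun t => (Pm - t) ^ p) (-(p * (Pm - ε) ^ (p - 1))) ε := by
  have h1 : HasDerivAt (fun t : ℝ => Pm - t) (-1) ε := (hasDerivAt_id ε).const_sub Pm
  have h2 : HasDerivAt (fun x : ℝ => x ^ p) (p * (Pm - ε) ^ (p - 1)) (Pm - ε) :=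
    Real.hasDerivAt_rpow_const (Or.inl (by intro hc; linarith [sub_pos.mpr h] : Pm - ε ≠ 0))
  simpa [Function.comp_def] using h2.comp ε h1

lemma contOn_pow (Pm p : ℝ) (hPm : 0 < Pm) :
    ContinuousOn (fun t => (Pm - t) ^ p) (Set.Icc (0:ℝ) (Pm/2)) := fun t ht =>
  ((hd_pow Pm p (by linarith [ht.2] : t < Pm)).continuousAt).continuousWithinAt

lemma remainder_bound (γ Pm : ℝ) (hγ : 1 ≤ γ) (hPm : 0 < Pm) :
    ∃ K ≥ (0:ℝ), ∀ t ∈ Set.Icc (0:ℝ) (Pm/2),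
      |(Pm - t)^γ - Pm^γ + γ*Pm^(γ-1)*t - γ*(γ-1)/2*Pm^(γ-2)*t^2| ≤ K * t^3 := by
  set M := |γ*(γ-1)*(γ-2)| * ((Pm/2)^(γ-3) + Pm^(γ-3)) with hMdef
  have hM : 0 ≤ M := by
    apply mul_nonneg (abs_nonneg _)
    positivity
  set h₀ : ℝ → ℝ := fun t => γ*(γ-1)*(Pm-t)^(γ-2) - γ*(γ-1)*Pm^(γ-2) with h₀def
  set h₁ : ℝ → ℝ := fun t => -(γ*(Pm-t)^(γ-1)) + γ*Pm^(γ-1) - γ*(γ-1)*Pm^(γ-2)*t with h₁def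
  set h₂ : ℝ → ℝ := fun t =>
    (Pm-t)^γ - Pm^γ + γ*Pm^(γ-1)*t - γ*(γ-1)/2*Pm^(γ-2)*t^2 with h₂def
  set f₀ : ℝ → ℝ := fun t => γ*(γ-1) * -((γ-2) * (Pm-t)^(γ-2-1)) with f₀def
  have hlt : ∀ t ∈ Set.Icc (0:ℝ) (Pm/2), t < Pm := fun t ht => by linarith [ht.2]
  -- step 0
  have hder₀ : ∀ t ∈ Set.Icc (0:ℝ) (Pm/2), HasDerivAt h₀ (f₀ t) t := by
    intro t ht
    have := ((hd_pow Pm (γ-2) (hlt t ht)).const_mul (γ*(γ-1))).sub_const (γ*(γ-1)*Pm^(γ-2))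
    convert this using 1
    all_goals simp only [f₀def]
    all_goals ring
  have hf₀b : ∀ t ∈ Set.Icc (0:ℝ) (Pm/2), |f₀ t| ≤ M * t ^ 0 := by
    intro t ht
    have hx : (Pm-t)^(γ-2-1) ≤ (Pm/2)^(γ-3) + Pm^(γ-3) := by
      rw [show γ-2-1 = γ-3 by ring]
      exact rpow_bound (half_pos hPm) (by linarith [ht.2]) (by linarith [ht.1])
    have he : f₀ t = -(γ*(γ-1)*(γ-2) * (Pm-t)^(γ-2-1)) := by rw [f₀def]; ring
    rw [he, abs_neg, abs_mul, abs_of_nonneg (Real.rpow_nonneg (by linarith [hlt t ht]) _)]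
    simp only [pow_zero, mul_one, hMdef]
    exact mul_le_mul_of_nonneg_left hx (abs_nonneg _)
  have hcont₀' : ContinuousOn f₀ (Set.Icc (0:ℝ) (Pm/2)) := by
    rw [f₀def]
    exact continuousOn_const.mul ((continuousOn_const.mul (contOn_pow Pm _ hPm)).neg)
  have hb₀ : ∀ t ∈ Set.Icc (0:ℝ) (Pm/2), |h₀ t| ≤ M * t ^ 1 := by
    intro t ht
    have := step_bound hder₀ hcont₀' hf₀b (by simp [h₀def]) t ht
    simpa using this
  -- step 1
  have hder₁ : ∀ t ∈ Set.Icc (0:ℝ) (Pm/2), HasDerivAt h₁ (h₀ t) t := by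
    intro t ht
    have d1 := (((hd_pow Pm (γ-1) (hlt t ht)).const_mul γ).neg).add_const (γ*Pm^(γ-1))
    have d2 := (hasDerivAt_id t).const_mul (γ*(γ-1)*Pm^(γ-2))
    have := d1.sub d2
    convert this using 1
    any_goals with_reducible_and_instances rfl
    · rfl
    all_goals simp only [h₀def]
    all_goals rw [show γ-1-1 = γ-2 by ring]
    all_goals ring
  have hcont₁ : ContinuousOn h₀ (Set.Icc (0:ℝ) (Pm/2)) := by
    rw [h₀def]
    exact (continuousOn_const.mul (contOn_pow Pm _ hPm)).sub continuousOn_const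
  have hb₁ : ∀ t ∈ Set.Icc (0:ℝ) (Pm/2), |h₁ t| ≤ (M/2) * t ^ 2 := by
    intro t ht
    have h10 : h₁ 0 = 0 := by simp [h₁def]
    have hs := step_bound hder₁ hcont₁ hb₀ h10 t ht
    norm_num at hs
    calc |h₁ t| ≤ M * t^2 / 2 := hs
      _ = (M/2) * t^2 := by ring
  -- step 2
  have hder₂ : ∀ t ∈ Set.Icc (0:ℝ) (Pm/2), HasDerivAt h₂ (h₁ t) t := by
    intro t ht
    have d1 := (hd_pow Pm γ (hlt t ht)).sub_const (Pm^γ)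
    have d2 := (hasDerivAt_id t).const_mul (γ*Pm^(γ-1))
    have d3 := (hasDerivAt_pow 2 t).const_mul (γ*(γ-1)/2*Pm^(γ-2))
    have := (d1.add d2).sub d3
    convert this using 1
    any_goals with_reducible_and_instances rfl
    · rfl
    simp only [h₁def]
    ring
  have hcont₂ : ContinuousOn h₁ (Set.Icc (0:ℝ) (Pm/2)) := by
    rw [h₁def]
    exact (((continuousOn_const.mul (contOn_pow Pm _ hPm)).neg).add
      continuousOn_const).sub (continuousOn_const.mul continuousOn_id)
  have hb₂ : ∀ t ∈ Set.Icc (0:ℝ) (Pm/2), |h₂ t| ≤ (M/6) * t ^ 3 := by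
    intro t ht
    have h20 : h₂ 0 = 0 := by simp [h₂def]
    have hs := step_bound hder₂ hcont₂ hb₁ h20 t ht
    norm_num at hs
    calc |h₂ t| ≤ M/2 * t^3 / 3 := hs
      _ = (M/6) * t^3 := by ring
  exact ⟨M/6, by linarith, hb₂⟩

set_option maxHeartbeats 1600000 in
/-- expansion of the momentum integration constant:
`A(ε) = P⁻c_s(P⁻) − ((γ+1)/4)c_s(P⁻)ε + O(ε²)` where
`A(ε) = √(P⁻(P⁻−ε))·√(((P⁻)^γ − (P⁻−ε)^γ)/ε)` and `c_s(P⁻) = √(γ(P⁻)^{γ−1})`. -/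
theorem statement_6 (γ Pm : ℝ) (hγ : 1 ≤ γ) (hPm : 0 < Pm) :
    ∃ ε₀ > (0:ℝ), ∃ C > (0:ℝ), ∀ ε : ℝ, 0 < ε → ε < ε₀ → ε < Pm →
      |Real.sqrt (Pm * (Pm - ε)) * Real.sqrt ((Pm ^ γ - (Pm - ε) ^ γ) / ε)
        - Pm * Real.sqrt (γ * Pm ^ (γ - 1))
        + ((γ + 1) / 4) * Real.sqrt (γ * Pm ^ (γ - 1)) * ε| ≤ C * ε ^ 2 := by
  obtain ⟨K, hK, hrem⟩ := remainder_bound γ Pm hγ hPm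
  set c : ℝ := Real.sqrt (γ * Pm ^ (γ - 1)) with hcdef
  have hcpos : 0 < c := Real.sqrt_pos.mpr (by positivity)
  have hc2 : c ^ 2 = γ * Pm ^ (γ - 1) := Real.sq_sqrt (by positivity)
  set d : ℝ := (γ + 1) / 4 * c with hddef
  have hdpos : 0 < d := by rw [hddef]; positivity
  set b : ℝ := γ * (γ - 1) / 2 * Pm ^ (γ - 2) with hbdef
  set K2 : ℝ := |Pm * b - d ^ 2| + Pm ^ 2 * K with hK2def
  have hK2 : 0 ≤ K2 := by
    have : (0:ℝ) ≤ Pm ^ 2 * K := by positivity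
    have := abs_nonneg (Pm * b - d ^ 2)
    rw [hK2def]; linarith
  set C : ℝ := 2 * K2 / (Pm * c) + 1 with hCdef
  have hCpos : 0 < C := by
    have : 0 ≤ 2 * K2 / (Pm * c) := by positivity
    rw [hCdef]; linarith
  refine ⟨min (Pm / 2) (Pm * c / (2 * d)), by positivity, C, hCpos, ?_⟩
  intro ε hε hε₀ hεPm
  have hεhalf : ε ≤ Pm / 2 := le_of_lt (lt_of_lt_of_le hε₀ (min_le_left _ _))
  have hεdc : d * ε < Pm * c / 2 := by
    have h1 : ε < Pm * c / (2 * d) := lt_of_lt_of_le hε₀ (min_le_right _ _)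
    calc d * ε < d * (Pm * c / (2 * d)) := by
          exact mul_lt_mul_of_pos_left h1 hdpos
      _ = Pm * c / 2 := by field_simp
  -- rpow identities
  have e1 : Pm ^ γ = Pm ^ (γ - 1) * Pm := by
    rw [← Real.rpow_add_one hPm.ne' (γ - 1)]; norm_num
  have e2 : Pm ^ (γ - 1) = Pm ^ (γ - 2) * Pm := by
    rw [← Real.rpow_add_one hPm.ne' (γ - 2)]; congr 1; ring
  set G : ℝ := Pm ^ γ - (Pm - ε) ^ γ with hGdef
  set R : ℝ := (Pm - ε) ^ γ - Pm ^ γ + γ * Pm ^ (γ - 1) * ε - b * ε ^ 2 with hRdef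
  have hRb : |R| ≤ K * ε ^ 3 := by
    have := hrem ε ⟨hε.le, hεhalf⟩
    rw [hRdef, hbdef]
    convert this using 3
    all_goals ring
  set Ψ : ℝ := Pm * (Pm - ε) * G - ε * (Pm * c - d * ε) ^ 2 with hΨdef
  have hkey : Ψ = (Pm * b - d ^ 2) * ε ^ 3 - Pm * (Pm - ε) * R := by
    have hc2' : c ^ 2 = γ * (Pm ^ (γ - 2) * Pm) := by rw [hc2, e2]
    rw [hΨdef, hRdef, hGdef, hddef, hbdef, e1, e2]
    linear_combination (-(ε * (Pm - (γ + 1) / 4 * ε) ^ 2) + ((γ + 1) / 4) ^ 2 * ε ^ 3) * hc2'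
  have hΨb : |Ψ| ≤ K2 * ε ^ 3 := by
    rw [hkey]
    have h1 : |(Pm * b - d ^ 2) * ε ^ 3| = |Pm * b - d ^ 2| * ε ^ 3 := by
      rw [abs_mul, abs_of_nonneg (by positivity : (0:ℝ) ≤ ε ^ 3)]
    have h2 : |Pm * (Pm - ε) * R| ≤ Pm ^ 2 * (K * ε ^ 3) := by
      rw [abs_mul]
      apply mul_le_mul _ hRb (abs_nonneg _) (by positivity)
      rw [abs_of_nonneg (by nlinarith : (0:ℝ) ≤ Pm * (Pm - ε))]
      nlinarith
    calc |(Pm * b - d ^ 2) * ε ^ 3 - Pm * (Pm - ε) * R|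
        ≤ |(Pm * b - d ^ 2) * ε ^ 3| + |Pm * (Pm - ε) * R| := abs_sub _ _
      _ ≤ |Pm * b - d ^ 2| * ε ^ 3 + Pm ^ 2 * (K * ε ^ 3) := by rw [h1]; linarith
      _ = K2 * ε ^ 3 := by rw [hK2def]; ring
  -- the quantity A
  set A : ℝ := Real.sqrt (Pm * (Pm - ε)) * Real.sqrt (G / ε) with hAdef
  have hGnn : 0 ≤ G := by
    rw [hGdef]
    have := Real.rpow_le_rpow (by linarith : (0:ℝ) ≤ Pm - ε) (by linarith : Pm - ε ≤ Pm)
      (by linarith : (0:ℝ) ≤ γ)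
    linarith
  have hAnn : 0 ≤ A := by rw [hAdef]; positivity
  have hA2 : A ^ 2 * ε = Pm * (Pm - ε) * G := by
    rw [hAdef, mul_pow, Real.sq_sqrt (by nlinarith : (0:ℝ) ≤ Pm * (Pm - ε)),
      Real.sq_sqrt (div_nonneg hGnn hε.le)]
    field_simp
  set T : ℝ := Pm * c - d * ε with hTdef
  have hT : Pm * c / 2 ≤ T := by rw [hTdef]; linarith
  have hsum : 0 < A + T := by nlinarith
  have hprod : (A - T) * (ε * (A + T)) = Ψ := by
    rw [hΨdef, hTdef]
    linear_combination hA2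
  have habsAT : |A - T| * (ε * (A + T)) = |Ψ| := by
    rw [← hprod, abs_mul, abs_of_nonneg (by positivity : (0:ℝ) ≤ ε * (A + T))]
  have hlow : |A - T| * (ε * (Pm * c / 2)) ≤ K2 * ε ^ 3 := by
    calc |A - T| * (ε * (Pm * c / 2)) ≤ |A - T| * (ε * (A + T)) := by
          apply mul_le_mul_of_nonneg_left _ (abs_nonneg _)
          apply mul_le_mul_of_nonneg_left (by linarith : Pm * c / 2 ≤ A + T) hε.le
      _ = |Ψ| := habsAT
      _ ≤ K2 * ε ^ 3 := hΨb
  have hfinal : |A - T| ≤ C * ε ^ 2 := by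
    have hden : 0 < ε * (Pm * c / 2) := by positivity
    rw [← le_div_iff₀ hden] at hlow
    calc |A - T| ≤ K2 * ε ^ 3 / (ε * (Pm * c / 2)) := hlow
      _ = 2 * K2 / (Pm * c) * ε ^ 2 := by field_simp
      _ ≤ C * ε ^ 2 := by
          apply mul_le_mul_of_nonneg_right _ (by positivity)
          rw [hCdef]; linarith
  calc |A - Pm * c + d * ε| = |A - T| := by rw [hTdef]; ring_nf
    _ ≤ C * ε ^ 2 := hfinal
end

section
/- Let γ ≥ 1, μ > 0, k > 0, P⁻ > 0, C > 0 and s ∈ (0, s̄) with s̄ = min{2c_s(P⁻), ((γ+1)/2)c_s(P⁻)}. Then there exist ε₁ > 0 and constants c₁ ∈ (0,1), c₂ > 1, c₃ > 0, c₄ > 0 such that for every ε ∈ (0, ε₁), setting P⁺ = P⁻ − ε and A = √(P⁻P⁺)·√(((P⁻)^γ − (P⁺)^γ)/ε), and for every twice continuously differentiable profile P : ℝ → [P⁺, P⁻] solving P'' = (2/k²)f(P) − (2sμ/k²)P' + (P')²/P with P(−∞) = P⁻, P(+∞) = P⁺, P' < 0, |P'| ≤ Cε² and |P''| ≤ Cε|P'|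 on ℝ, the functions f₁(y) = (s − A/P(y))² − γP(y)^{γ−1} and f₂(y) = −s + 2A/P(y) satisfy for all y ∈ ℝ: −c₁⁻¹ ≤ f₁(y) ≤ −c₁ < 0; 0 < c₂⁻¹ ≤ f₂(y) ≤ c₂; c₃⁻¹|P'(y)| ≤ f₁'(y) ≤ c₃|P'(y)|; c₃⁻¹|P'(y)| ≤ f₂'(y) ≤ c₃|P'(y)|; |f₁''(y)| ≤ c₄ε|P'(y)|; and |f₂''(y)| ≤ c₄ε|P'(y)|. -/
open Real Filter Set

private lemma hinv' (A : ℝ) {p : ℝ} (hp : 0 < p) :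
    HasDerivAt (fun x : ℝ => A / x) (-(A / p^2)) p := by
  have h := (hasDerivAt_const p A).div (hasDerivAt_id p) hp.ne'
  refine h.congr_deriv ?_
  simp only [id]; ring

private lemma hinv2 (A : ℝ) {p : ℝ} (hp : 0 < p) :
    HasDerivAt (fun x : ℝ => A / x^2) (-(2*A / p^3)) p := by
  have h := (hasDerivAt_const p A).div (hasDerivAt_pow 2 p) (pow_ne_zero 2 hp.ne')
  refine h.congr_deriv ?_
  field_simp
  ring

private lemma L1 (s A γ : ℝ) {p : ℝ} (hp : 0 < p) :
    HasDerivAt (fun x : ℝ => (s - A/x)^2 - γ * x^(γ-1))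
      (2*(s - A/p)*(A/p^2) - γ*((γ-1)*p^(γ-1-1))) p := by
  have h_s := (hinv' A hp).const_sub s
  have h := (h_s.pow 2).sub ((Real.hasDerivAt_rpow_const (p := γ-1) (Or.inl hp.ne')).const_mul γ)
  refine h.congr_deriv ?_
  ring

private lemma L2 (s A γ : ℝ) {p : ℝ} (hp : 0 < p) :
    HasDerivAt (fun x : ℝ => 2*(s - A/x)*(A/x^2) - γ*((γ-1)*x^(γ-1-1)))
      (2*((A/p^2)*(A/p^2)) + 2*(s-A/p)*(-(2*A/p^3)) - γ*((γ-1)*((γ-1-1)*p^(γ-1-1-1)))) p := by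
  have h_s := (hinv' A hp).const_sub s
  have h := ((h_s.const_mul 2).mul (hinv2 A hp)).sub
    (((Real.hasDerivAt_rpow_const (p := γ-1-1) (Or.inl hp.ne')).const_mul (γ-1)).const_mul γ)
  refine h.congr_deriv ?_
  ring

private lemma L3 (s A : ℝ) {p : ℝ} (hp : 0 < p) :
    HasDerivAt (fun x : ℝ => -s + 2*A/x) (-(2*A/p^2)) p :=
  (hinv' (2*A) hp).const_add (-s)

private lemma L4 (A : ℝ) {p : ℝ} (hp : 0 < p) :
    HasDerivAt (fun x : ℝ => -(2*A/x^2)) (4*A/p^3) p := by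
  have h := (hinv2 (2*A) hp).neg
  refine h.congr_deriv ?_
  field_simp
  ring

private lemma Alimit (γ Pm : ℝ) (hPm : 0 < Pm) :
    Tendsto (fun ε : ℝ => Real.sqrt (Pm * (Pm - ε)) * Real.sqrt ((Pm ^ γ - (Pm - ε) ^ γ) / ε))
      (nhdsWithin 0 (Set.Ioi 0)) (nhds (Pm * Real.sqrt (γ * Pm ^ (γ - 1)))) := by
  have h1 : Tendsto (fun ε : ℝ => Real.sqrt (Pm * (Pm - ε))) (nhdsWithin 0 (Set.Ioi 0)) (nhds Pm) := by
    have : Tendsto (fun ε : ℝ => Real.sqrt (Pm * (Pm - ε))) (nhds 0) (nhds (Real.sqrt (Pm * (Pm - 0)))) :=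
      (Real.continuous_sqrt.continuousAt.comp
        ((continuous_const.mul (continuous_const.sub continuous_id)).continuousAt)).tendsto
    simpa [Real.sqrt_mul_self hPm.le] using this.mono_left nhdsWithin_le_nhds
  have hd : HasDerivAt (fun x : ℝ => x ^ γ) (γ * Pm ^ (γ - 1)) Pm :=
    Real.hasDerivAt_rpow_const (Or.inl hPm.ne')
  have hslope := hasDerivAt_iff_tendsto_slope.mp hd
  have hmap : Tendsto (fun ε : ℝ => Pm - ε) (nhdsWithin 0 (Set.Ioi 0)) (nhdsWithin Pm {Pm}ᶜ) := by
    apply tendsto_nhdsWithin_of_tendsto_nhds_of_eventually_within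
    · have : Tendsto (fun ε : ℝ => Pm - ε) (nhds 0) (nhds (Pm - 0)) :=
        ((continuous_const.sub continuous_id).continuousAt).tendsto
      simpa using this.mono_left nhdsWithin_le_nhds
    · filter_upwards [self_mem_nhdsWithin] with ε (hε : ε ∈ Set.Ioi 0)
      simp only [Set.mem_compl_iff, Set.mem_singleton_iff]
      intro h; nlinarith [hε.out]
  have h2 : Tendsto (fun ε : ℝ => (Pm ^ γ - (Pm - ε) ^ γ) / ε) (nhdsWithin 0 (Set.Ioi 0))
      (nhds (γ * Pm ^ (γ - 1))) := by
    apply (hslope.comp hmap).congr'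
    filter_upwards [self_mem_nhdsWithin] with ε (hε : ε ∈ Set.Ioi 0)
    show slope (fun x : ℝ => x ^ γ) Pm (Pm - ε) = _
    rw [slope_def_field, show Pm - ε - Pm = -ε by ring, div_neg, ← neg_div, neg_sub]
  exact h1.mul ((Real.continuous_sqrt.continuousAt.tendsto).comp h2)

set_option maxHeartbeats 1000000 in
/-- uniform bounds on the coefficient functions
`f₁(y) = (s − A/P(y))² − γP(y)^{γ−1}` and `f₂(y) = −s + 2A/P(y)` along a
small-amplitude monotone decreasing dispersive shock profile, for subsonic speeds
`s ∈ (0, s̄)`, `s̄ = min{2c_s(P⁻), ((γ+1)/2)c_s(P⁻)}`. -/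
theorem statement_7 (γ μ k Pm C s : ℝ) (hγ : 1 ≤ γ) (hμ : 0 < μ) (hk : 0 < k)
    (hPm : 0 < Pm) (hC : 0 < C) (hs : 0 < s)
    (hs' : s < min (2 * Real.sqrt (γ * Pm ^ (γ - 1)))
      (((γ + 1) / 2) * Real.sqrt (γ * Pm ^ (γ - 1)))) :
    ∃ ε₁ > (0:ℝ), ∃ c₁ ∈ Set.Ioo (0:ℝ) 1, ∃ c₂ > (1:ℝ), ∃ c₃ > (0:ℝ), ∃ c₄ > (0:ℝ),
      ∀ ε : ℝ, 0 < ε → ε < ε₁ →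
      ∀ A : ℝ, A = Real.sqrt (Pm * (Pm - ε)) * Real.sqrt ((Pm ^ γ - (Pm - ε) ^ γ) / ε) →
      ∀ P : ℝ → ℝ, ContDiff ℝ 2 P →
        (∀ y : ℝ, P y ∈ Set.Icc (Pm - ε) Pm) →
        (∀ y : ℝ, deriv (deriv P) y =
          (2 / k ^ 2) *
            ((P y) ^ γ + (Pm * (Pm - ε) / P y) * (((Pm - ε) ^ γ - Pm ^ γ) / ((Pm - ε) - Pm))
              - ((Pm - ε) ^ (γ + 1) - Pm ^ (γ + 1)) / ((Pm - ε) - Pm))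
          - (2 * s * μ / k ^ 2) * deriv P y + (deriv P y) ^ 2 / P y) →
        Filter.Tendsto P Filter.atBot (nhds Pm) →
        Filter.Tendsto P Filter.atTop (nhds (Pm - ε)) →
        (∀ y : ℝ, deriv P y < 0) →
        (∀ y : ℝ, |deriv P y| ≤ C * ε ^ 2) →
        (∀ y : ℝ, |deriv (deriv P) y| ≤ C * ε * |deriv P y|) →
      ∀ f₁ f₂ : ℝ → ℝ,
        (∀ y : ℝ, f₁ y = (s - A / P y) ^ 2 - γ * (P y) ^ (γ - 1)) →
        (∀ y : ℝ, f₂ y = -s + 2 * A / P y) →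
      ∀ y : ℝ,
        (-c₁⁻¹ ≤ f₁ y ∧ f₁ y ≤ -c₁) ∧
        (c₂⁻¹ ≤ f₂ y ∧ f₂ y ≤ c₂) ∧
        (c₃⁻¹ * |deriv P y| ≤ deriv f₁ y ∧ deriv f₁ y ≤ c₃ * |deriv P y|) ∧
        (c₃⁻¹ * |deriv P y| ≤ deriv f₂ y ∧ deriv f₂ y ≤ c₃ * |deriv P y|) ∧
        |deriv (deriv f₁) y| ≤ c₄ * ε * |deriv P y| ∧
        |deriv (deriv f₂) y| ≤ c₄ * ε * |deriv P y| := by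
  classical
  set c : ℝ := Real.sqrt (γ * Pm ^ (γ - 1)) with hcdef
  have hγ0 : (0:ℝ) < γ := lt_of_lt_of_le one_pos hγ
  have hcsq : c ^ 2 = γ * Pm ^ (γ - 1) := by rw [hcdef]; exact Real.sq_sqrt (by positivity)
  have hc0 : 0 < c := by rw [hcdef]; exact Real.sqrt_pos.2 (by positivity)
  have hs2c : s < 2 * c := lt_of_lt_of_le hs' (min_le_left _ _)
  have hsγc : s < ((γ + 1) / 2) * c := lt_of_lt_of_le hs' (min_le_right _ _)
  clear_value c
  clear hs'
  set a₀ : ℝ := Pm * c with ha₀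
  set z₀ : ℝ × ℝ := (a₀, Pm) with hz₀
  -- two-variable coefficient functions
  set F1 : ℝ × ℝ → ℝ := fun z => (s - z.1/z.2)^2 - γ * z.2^(γ-1) with hF1def
  set F2 : ℝ × ℝ → ℝ := fun z => -s + 2*z.1/z.2 with hF2def
  set G1 : ℝ × ℝ → ℝ := fun z => 2*(s - z.1/z.2)*(z.1/z.2^2) - γ*((γ-1)*z.2^(γ-1-1)) with hG1def
  set G2 : ℝ × ℝ → ℝ := fun z => -(2*z.1/z.2^2) with hG2def
  set H1 : ℝ × ℝ → ℝ := fun z =>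
    2*((z.1/z.2^2)*(z.1/z.2^2)) + 2*(s - z.1/z.2)*(-(2*z.1/z.2^3))
      - γ*((γ-1)*((γ-1-1)*z.2^(γ-1-1-1))) with hH1def
  set H2 : ℝ × ℝ → ℝ := fun z => 4*z.1/z.2^3 with hH2def
  clear_value a₀ z₀ F1 F2 G1 G2 H1 H2
  -- values at the limit point
  have hPmc : a₀ / Pm = c := by rw [ha₀]; field_simp
  have hrpow1 : Pm ^ (γ-1-1) = Pm ^ (γ-1) / Pm := by
    rw [show γ-1-1 = (γ-1) - 1 from rfl, Real.rpow_sub hPm, Real.rpow_one]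
  set L1v : ℝ := F1 z₀ with hL1v
  set L2v : ℝ := F2 z₀ with hL2v
  set LG1 : ℝ := G1 z₀ with hLG1
  set LG2 : ℝ := 2*a₀/Pm^2 with hLG2
  have hG2z₀ : G2 z₀ = -LG2 := by rw [hG2def, hLG2, hz₀]
  have hL1neg : L1v < 0 := by
    have h : L1v = (s - c)^2 - c^2 := by
      rw [hL1v, hF1def]; simp only [hz₀]; rw [hPmc, ← hcsq]
    rw [h]; nlinarith
  have hL2pos : 0 < L2v := by
    have h : L2v = -s + 2*c := by
      rw [hL2v, hF2def]; simp only [hz₀]; rw [mul_div_assoc, hPmc]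
    rw [h]; linarith
  have hLG2pos : 0 < LG2 := by rw [hLG2, ha₀]; positivity
  have hLG1neg : LG1 < 0 := by
    have h1 : a₀ / Pm^2 = c / Pm := by rw [ha₀]; field_simp
    have h : LG1 = (2*(s-c)*c - (γ-1)*c^2) / Pm := by
      rw [hLG1, hG1def]; simp only [hz₀]
      rw [hPmc, h1, hrpow1]
      field_simp
      nlinarith [hcsq]
    rw [h]
    apply div_neg_of_neg_of_pos _ hPm
    nlinarith [mul_lt_mul_of_pos_right hsγc hc0]
  clear_value L1v L2v LG1 LG2
  -- constants
  set N : ℝ := -L1v with hN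
  have hN0 : 0 < N := by rw [hN]; linarith
  clear_value N
  set c₁ : ℝ := min (1/2) (min (N/2) ((3*N/2 + 1)⁻¹)) with hc₁
  have hc₁pos : 0 < c₁ := by
    rw [hc₁]; exact lt_min (by norm_num) (lt_min (by linarith) (by positivity))
  have hc₁lt1 : c₁ < 1 := by
    rw [hc₁]; exact lt_of_le_of_lt (min_le_left _ _) (by norm_num)
  have hc₁a : c₁ ≤ N/2 := by rw [hc₁]; exact le_trans (min_le_right _ _) (min_le_left _ _)
  have hc₁binv : 3*N/2 + 1 ≤ c₁⁻¹ := by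
    have h1 : c₁ ≤ (3*N/2 + 1)⁻¹ := by
      rw [hc₁]; exact le_trans (min_le_right _ _) (min_le_right _ _)
    calc 3*N/2 + 1 = ((3*N/2 + 1)⁻¹)⁻¹ := by rw [inv_inv]
    _ ≤ c₁⁻¹ := inv_anti₀ hc₁pos h1
  clear_value c₁
  set c₂ : ℝ := max 2 (max ((L2v/2)⁻¹) ((3/2)*L2v)) with hc₂
  have hc₂gt1 : 1 < c₂ := by rw [hc₂]; exact lt_of_lt_of_le one_lt_two (le_max_left _ _)
  have hc₂pos : 0 < c₂ := lt_trans one_pos hc₂gt1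
  have hc₂ainv : c₂⁻¹ ≤ L2v/2 := by
    have h1 : (L2v/2)⁻¹ ≤ c₂ := by rw [hc₂]; exact le_trans (le_max_left _ _) (le_max_right _ _)
    calc c₂⁻¹ ≤ ((L2v/2)⁻¹)⁻¹ := inv_anti₀ (by positivity) h1
    _ = L2v/2 := by rw [inv_inv]
  have hc₂b : (3/2)*L2v ≤ c₂ := by
    rw [hc₂]; exact le_trans (le_max_right _ _) (le_max_right _ _)
  clear_value c₂
  set m : ℝ := min (-LG1/2) (LG2/2) with hm
  have hmpos : 0 < m := by rw [hm]; exact lt_min (by linarith) (by linarith)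
  have hma : m ≤ -LG1/2 := by rw [hm]; exact min_le_left _ _
  have hmb : m ≤ LG2/2 := by rw [hm]; exact min_le_right _ _
  clear_value m
  set M : ℝ := max (-(3/2)*LG1) ((3/2)*LG2) with hM
  have hMa : -(3/2)*LG1 ≤ M := by rw [hM]; exact le_max_left _ _
  have hMb : (3/2)*LG2 ≤ M := by rw [hM]; exact le_max_right _ _
  have hMpos : 0 < M := lt_of_lt_of_le (by linarith) hMa
  clear_value M
  set c₃ : ℝ := max M m⁻¹ with hc₃
  have hc₃pos : 0 < c₃ := by rw [hc₃]; exact lt_of_lt_of_le hMpos (le_max_left _ _)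
  have hc₃inv : c₃⁻¹ ≤ m := by
    have h1 : m⁻¹ ≤ c₃ := by rw [hc₃]; exact le_max_right _ _
    calc c₃⁻¹ ≤ (m⁻¹)⁻¹ := inv_anti₀ (by positivity) h1
    _ = m := by rw [inv_inv]
  have hMc₃ : M ≤ c₃ := by rw [hc₃]; exact le_max_left _ _
  clear_value c₃
  set MH : ℝ := max (|H1 z₀| + 1) (|H2 z₀| + 1) with hMH
  have hMHa : |H1 z₀| + 1 ≤ MH := by rw [hMH]; exact le_max_left _ _
  have hMHb : |H2 z₀| + 1 ≤ MH := by rw [hMH]; exact le_max_right _ _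
  have hMHpos : 0 < MH := lt_of_lt_of_le (by positivity) hMHa
  clear_value MH
  set c₄ : ℝ := C * (MH + M) with hc₄
  have hc₄pos : 0 < c₄ := by rw [hc₄]; positivity
  clear_value c₄
  -- continuity facts and the eventual bounds near z₀
  have hz₀2 : (z₀.2 : ℝ) ≠ 0 := by rw [hz₀]; exact hPm.ne'
  have hz₀2' : (z₀.2 : ℝ) = Pm := by rw [hz₀]
  have hcd : ContinuousAt (fun z : ℝ × ℝ => z.1/z.2) z₀ := continuousAt_fst.div continuousAt_snd hz₀2
  have hcd2 : ContinuousAt (fun z : ℝ × ℝ => z.1/z.2^2) z₀ :=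
    continuousAt_fst.div (continuousAt_snd.pow 2) (pow_ne_zero 2 hz₀2)
  have hcr : ∀ e : ℝ, ContinuousAt (fun z : ℝ × ℝ => z.2 ^ e) z₀ := fun e => by
    have h2 : ContinuousAt (fun x : ℝ => x ^ e) (z₀.2) := by
      rw [hz₀2']; exact Real.continuousAt_rpow_const Pm e (Or.inl hPm.ne')
    exact h2.comp (continuousAt_snd : ContinuousAt Prod.snd z₀)
  have hcF1 : ContinuousAt F1 z₀ := by
    rw [hF1def]
    exact ((continuousAt_const.sub hcd).pow 2).sub (continuousAt_const.mul (hcr (γ-1)))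
  have hcF2 : ContinuousAt F2 z₀ := by
    rw [hF2def]
    exact continuousAt_const.add ((continuousAt_const.mul continuousAt_fst).div continuousAt_snd hz₀2)
  have hcG1 : ContinuousAt G1 z₀ := by
    rw [hG1def]
    exact ((continuousAt_const.mul (continuousAt_const.sub hcd)).mul hcd2).sub
      (continuousAt_const.mul (continuousAt_const.mul (hcr (γ-1-1))))
  have hcG2 : ContinuousAt G2 z₀ := by
    rw [hG2def]
    exact ((continuousAt_const.mul continuousAt_fst).div (continuousAt_snd.pow 2)
      (pow_ne_zero 2 hz₀2)).neg
  have hcH1 : ContinuousAt H1 z₀ := by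
    rw [hH1def]
    exact (((continuousAt_const.mul (hcd2.mul hcd2))).add
      ((continuousAt_const.mul (continuousAt_const.sub hcd)).mul
        (((continuousAt_const.mul continuousAt_fst).div (continuousAt_snd.pow 3)
          (pow_ne_zero 3 hz₀2)).neg))).sub
      (continuousAt_const.mul (continuousAt_const.mul (continuousAt_const.mul (hcr (γ-1-1-1)))))
  have hcH2 : ContinuousAt H2 z₀ := by
    rw [hH2def]
    exact (continuousAt_const.mul continuousAt_fst).div (continuousAt_snd.pow 3) (pow_ne_zero 3 hz₀2)
  have hEv : ∀ᶠ z in nhds z₀,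
      F1 z < L1v/2 ∧ (3/2)*L1v < F1 z ∧
      L2v/2 < F2 z ∧ F2 z < (3/2)*L2v ∧
      G1 z < LG1/2 ∧ (3/2)*LG1 < G1 z ∧
      -((3/2)*LG2) < G2 z ∧ G2 z < -(LG2/2) ∧
      |H1 z| < MH ∧ |H2 z| < MH := by
    have e1 := hcF1.tendsto.eventually_lt_const
      (show F1 z₀ < L1v/2 by rw [← hL1v]; linarith)
    have e2 := hcF1.tendsto.eventually_const_lt
      (show (3/2)*L1v < F1 z₀ by rw [← hL1v]; linarith)
    have e3 := hcF2.tendsto.eventually_const_lt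
      (show L2v/2 < F2 z₀ by rw [← hL2v]; linarith)
    have e4 := hcF2.tendsto.eventually_lt_const
      (show F2 z₀ < (3/2)*L2v by rw [← hL2v]; linarith)
    have e5 := hcG1.tendsto.eventually_lt_const
      (show G1 z₀ < LG1/2 by rw [← hLG1]; linarith)
    have e6 := hcG1.tendsto.eventually_const_lt
      (show (3/2)*LG1 < G1 z₀ by rw [← hLG1]; linarith)
    have e7 := hcG2.tendsto.eventually_const_lt
      (show -((3/2)*LG2) < G2 z₀ by rw [hG2z₀]; linarith)
    have e8 := hcG2.tendsto.eventually_lt_const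
      (show G2 z₀ < -(LG2/2) by rw [hG2z₀]; linarith)
    have e9 := (continuous_abs.continuousAt.comp hcH1).tendsto.eventually_lt_const
      (show (abs ∘ H1) z₀ < MH from lt_of_lt_of_le (lt_add_one _) hMHa)
    have e10 := (continuous_abs.continuousAt.comp hcH2).tendsto.eventually_lt_const
      (show (abs ∘ H2) z₀ < MH from lt_of_lt_of_le (lt_add_one _) hMHb)
    filter_upwards [e1, e2, e3, e4, e5, e6, e7, e8, e9, e10] with z h1 h2 h3 h4 h5 h6 h7 h8 h9 h10
    exact ⟨h1, h2, h3, h4, h5, h6, h7, h8, h9, h10⟩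
  rw [Metric.eventually_nhds_iff] at hEv
  obtain ⟨δ, hδ, hEδ⟩ := hEv
  -- smallness of ε for the A-limit
  have hAlim := Alimit γ Pm hPm
  have hev : ∀ᶠ e in nhdsWithin (0:ℝ) (Set.Ioi 0),
      dist (Real.sqrt (Pm * (Pm - e)) * Real.sqrt ((Pm ^ γ - (Pm - e) ^ γ) / e)) a₀ < δ := by
    rw [ha₀, hcdef]; exact Metric.tendsto_nhds.mp hAlim δ hδ
  rw [Filter.eventually_iff, mem_nhdsGT_iff_exists_Ioo_subset] at hev
  obtain ⟨u, hu, hsub⟩ := hev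
  refine ⟨min u (min δ (min (Pm/2) 1)), by
      simp only [gt_iff_lt, lt_min_iff]
      exact ⟨hu.out, hδ, by linarith, one_pos⟩,
    c₁, ⟨hc₁pos, hc₁lt1⟩, c₂, hc₂gt1, c₃, hc₃pos, c₄, hc₄pos, ?_⟩
  intro ε hε hε₁ A hAdef P hP hPicc hODE hlim1 hlim2 hP'neg hP'bd hP''bd f₁ f₂ hf₁ hf₂ y
  clear hODE hlim1 hlim2
  have hεu : ε < u := lt_of_lt_of_le hε₁ (min_le_left _ _)
  have hεδ : ε < δ := lt_of_lt_of_le hε₁ (le_trans (min_le_right _ _) (min_le_left _ _))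
  have hεPm : ε < Pm/2 := lt_of_lt_of_le hε₁
    (le_trans (min_le_right _ _) (le_trans (min_le_right _ _) (min_le_left _ _)))
  have hεle1 : ε ≤ 1 := le_of_lt (lt_of_lt_of_le hε₁
    (le_trans (min_le_right _ _) (le_trans (min_le_right _ _) (min_le_right _ _))))
  have hdA : dist A a₀ < δ := by rw [hAdef]; exact hsub ⟨hε, hεu⟩
  have hppos : ∀ x : ℝ, 0 < P x := fun x => by
    have h := (hPicc x).1; linarith only [h, hεPm, hPm]
  have hzmem : ∀ x : ℝ, dist (A, P x) z₀ < δ := fun x => by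
    rw [show dist (A, P x) z₀ = max (dist A a₀) (dist (P x) Pm) by rw [hz₀]; simp [Prod.dist_eq]]
    refine max_lt hdA ?_
    rw [Real.dist_eq]
    have h1 := (hPicc x).1
    have h2 := (hPicc x).2
    exact lt_of_le_of_lt (abs_le.mpr ⟨by linarith only [h1], by linarith only [h2, hε.le]⟩) hεδ
  have hEx : ∀ x : ℝ,
      F1 (A, P x) < L1v/2 ∧ (3/2)*L1v < F1 (A, P x) ∧
      L2v/2 < F2 (A, P x) ∧ F2 (A, P x) < (3/2)*L2v ∧
      G1 (A, P x) < LG1/2 ∧ (3/2)*LG1 < G1 (A, P x) ∧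
      -((3/2)*LG2) < G2 (A, P x) ∧ G2 (A, P x) < -(LG2/2) ∧
      |H1 (A, P x)| < MH ∧ |H2 (A, P x)| < MH := fun x => hEδ (hzmem x)
  -- differentiability of P
  have h21 : ((1:WithTop ℕ∞) + 1) = 2 := by norm_num
  have hP' : ContDiff ℝ ((1:WithTop ℕ∞) + 1) P := h21 ▸ hP
  have hPdiff : Differentiable ℝ P := (contDiff_succ_iff_deriv.mp hP').1
  have hPd2 : Differentiable ℝ (deriv P) :=
    (contDiff_succ_iff_deriv.mp hP').2.2.differentiable one_ne_zero
  have hPd : ∀ x : ℝ, HasDerivAt P (deriv P x) x := fun x => (hPdiff x).hasDerivAt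
  have hPdd : ∀ x : ℝ, HasDerivAt (deriv P) (deriv (deriv P) x) x := fun x => (hPd2 x).hasDerivAt
  -- derivative formulas for f₁
  have hf₁fun : f₁ = fun x => (s - A / P x) ^ 2 - γ * (P x) ^ (γ - 1) := funext hf₁
  have hf₂fun : f₂ = fun x => -s + 2 * A / P x := funext hf₂
  have hd1 : ∀ x : ℝ, HasDerivAt f₁ (G1 (A, P x) * deriv P x) x := fun x => by
    rw [hf₁fun, hG1def]
    exact (L1 s A γ (hppos x)).comp x (hPd x)
  have hderf₁ : deriv f₁ = fun x => G1 (A, P x) * deriv P x :=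
    funext fun x => (hd1 x).deriv
  have hd2 : HasDerivAt (deriv f₁)
      (H1 (A, P y) * deriv P y * deriv P y + G1 (A, P y) * deriv (deriv P) y) y := by
    rw [hderf₁]
    have hu : HasDerivAt (fun x => G1 (A, P x)) (H1 (A, P y) * deriv P y) y := by
      rw [hG1def, hH1def]
      exact (L2 s A γ (hppos y)).comp y (hPd y)
    exact hu.mul (hPdd y)
  -- derivative formulas for f₂
  have hd3 : ∀ x : ℝ, HasDerivAt f₂ (G2 (A, P x) * deriv P x) x := fun x => by
    rw [hf₂fun, hG2def]
    exact (L3 s A (hppos x)).comp x (hPd x)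
  have hderf₂ : deriv f₂ = fun x => G2 (A, P x) * deriv P x :=
    funext fun x => (hd3 x).deriv
  have hd4 : HasDerivAt (deriv f₂)
      (H2 (A, P y) * deriv P y * deriv P y + G2 (A, P y) * deriv (deriv P) y) y := by
    rw [hderf₂]
    have hu : HasDerivAt (fun x => G2 (A, P x)) (H2 (A, P y) * deriv P y) y := by
      rw [hG2def, hH2def]
      exact (L4 A (hppos y)).comp y (hPd y)
    exact hu.mul (hPdd y)
  -- notation at the point y
  obtain ⟨k1, k2, k3, k4, k5, k6, k7, k8, k9, k10⟩ := hEx y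
  have hdneg : deriv P y < 0 := hP'neg y
  have habs : |deriv P y| = -(deriv P y) := abs_of_neg hdneg
  have hdnneg : 0 ≤ -(deriv P y) := by linarith
  have hf₁val : f₁ y = F1 (A, P y) := by rw [hf₁ y, hF1def]
  have hf₂val : f₂ y = F2 (A, P y) := by rw [hf₂ y, hF2def]
  refine ⟨⟨?_, ?_⟩, ⟨?_, ?_⟩, ⟨?_, ?_⟩, ⟨?_, ?_⟩, ?_, ?_⟩
  · -- -c₁⁻¹ ≤ f₁ y
    rw [hf₁val]
    have h : -c₁⁻¹ ≤ -(3*N/2 + 1) := by linarith only [hc₁binv]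
    rw [hN] at h
    linarith only [h, k2]
  · -- f₁ y ≤ -c₁
    rw [hf₁val]
    have h : c₁ ≤ N/2 := hc₁a
    rw [hN] at h
    linarith only [h, k1]
  · -- c₂⁻¹ ≤ f₂ y
    rw [hf₂val]; linarith only [k3, hc₂ainv]
  · -- f₂ y ≤ c₂
    rw [hf₂val]; linarith only [k4, hc₂b]
  · -- c₃⁻¹ |P'| ≤ deriv f₁
    rw [(hd1 y).deriv, habs]
    have h1 : c₃⁻¹ ≤ -(G1 (A, P y)) := by linarith only [k5, hma, hc₃inv]
    have h2 := mul_le_mul_of_nonneg_right h1 hdnneg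
    have h3 : -(G1 (A, P y)) * -(deriv P y) = G1 (A, P y) * deriv P y := by ring
    linarith only [h2, h3]
  · -- deriv f₁ ≤ c₃ |P'|
    rw [(hd1 y).deriv, habs]
    have h1 : -(G1 (A, P y)) ≤ c₃ := by linarith only [k6, hMa, hMc₃]
    have h2 := mul_le_mul_of_nonneg_right h1 hdnneg
    have h3 : -(G1 (A, P y)) * -(deriv P y) = G1 (A, P y) * deriv P y := by ring
    linarith only [h2, h3]
  · -- c₃⁻¹ |P'| ≤ deriv f₂
    rw [(hd3 y).deriv, habs]
    have h1 : c₃⁻¹ ≤ -(G2 (A, P y)) := by linarith only [k8, hmb, hc₃inv]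
    have h2 := mul_le_mul_of_nonneg_right h1 hdnneg
    have h3 : -(G2 (A, P y)) * -(deriv P y) = G2 (A, P y) * deriv P y := by ring
    linarith only [h2, h3]
  · -- deriv f₂ ≤ c₃ |P'|
    rw [(hd3 y).deriv, habs]
    have h1 : -(G2 (A, P y)) ≤ c₃ := by linarith only [k7, hMb, hMc₃]
    have h2 := mul_le_mul_of_nonneg_right h1 hdnneg
    have h3 : -(G2 (A, P y)) * -(deriv P y) = G2 (A, P y) * deriv P y := by ring
    linarith only [h2, h3]
  · -- second derivative of f₁
    rw [hd2.deriv]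
    have hG1abs : |G1 (A, P y)| ≤ M := by
      rw [abs_of_neg (by linarith only [k5, hLG1neg] : G1 (A, P y) < 0)]
      linarith only [k6, hMa]
    calc |H1 (A, P y) * deriv P y * deriv P y + G1 (A, P y) * deriv (deriv P) y|
        ≤ |H1 (A, P y) * deriv P y * deriv P y| + |G1 (A, P y) * deriv (deriv P) y| :=
          abs_add_le _ _
      _ = |H1 (A, P y)| * (|deriv P y| * |deriv P y|) + |G1 (A, P y)| * |deriv (deriv P) y| := by
          rw [abs_mul, abs_mul, abs_mul]; ring
      _ ≤ MH * ((C * ε^2) * |deriv P y|) + M * (C * ε * |deriv P y|) := by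
          apply add_le_add
          · exact mul_le_mul (le_of_lt k9)
              (mul_le_mul_of_nonneg_right (hP'bd y) (abs_nonneg _)) (by positivity) hMHpos.le
          · exact mul_le_mul hG1abs (hP''bd y) (abs_nonneg _) hMpos.le
      _ ≤ c₄ * ε * |deriv P y| := by
          rw [hc₄]
          nlinarith only [mul_nonneg (mul_nonneg hMHpos.le hC.le)
            (mul_nonneg (abs_nonneg (deriv P y)) (sub_nonneg.mpr hεle1)), hε.le]
  · -- second derivative of f₂
    rw [hd4.deriv]
    have hG2abs : |G2 (A, P y)| ≤ M := by
      rw [abs_of_neg (by linarith only [k8, hLG2pos] : G2 (A, P y) < 0)]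
      linarith only [k7, hMb]
    calc |H2 (A, P y) * deriv P y * deriv P y + G2 (A, P y) * deriv (deriv P) y|
        ≤ |H2 (A, P y) * deriv P y * deriv P y| + |G2 (A, P y) * deriv (deriv P) y| :=
          abs_add_le _ _
      _ = |H2 (A, P y)| * (|deriv P y| * |deriv P y|) + |G2 (A, P y)| * |deriv (deriv P) y| := by
          rw [abs_mul, abs_mul, abs_mul]; ring
      _ ≤ MH * ((C * ε^2) * |deriv P y|) + M * (C * ε * |deriv P y|) := by
          apply add_le_add
          · exact mul_le_mul (le_of_lt k10)
              (mul_le_mul_of_nonneg_right (hP'bd y) (abs_nonneg _)) (by positivity) hMHpos.le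
          · exact mul_le_mul hG2abs (hP''bd y) (abs_nonneg _) hMpos.le
      _ ≤ c₄ * ε * |deriv P y| := by
          rw [hc₄]
          nlinarith only [mul_nonneg (mul_nonneg hMHpos.le hC.le)
            (mul_nonneg (abs_nonneg (deriv P y)) (sub_nonneg.mpr hεle1)), hε.le]
end
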